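/- arXiv:2407.03475 — 8 statements merged into one kernel-verified Lean document; each statement's English description precedes it below -/
import Mathlib

section
/- Let L ≥ 1 be an integer and λ, ρ > 0. Let w : [0, ∞) → ℝ be differentiable with ẇ(t) = λ w(t)^{3−1/L} − (λ/ρ) w(t)³ for all t ≥ 0 and w(0) = ε, where 0 < ε < ρ^L. Then w(t) ∈ (0, ρ^L) for all t, w is strictly increasing, and lim_{t→∞} w(t) = ρ^L. -/
open Set Filter

open Real

lemma jepa_rootB (L : ℕ) (hL : 1 ≤ L) {rho : ℝ} (hrho : 0 ≤ rho) :
    (rho ^ L) ^ (1 / (L : ℝ)) = rho := by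
  have hL0 : (L : ℝ) ≠ 0 := Nat.cast_ne_zero.mpr (by omega)
  rw [← Real.rpow_natCast rho L, ← Real.rpow_mul hrho, mul_one_div, div_self hL0,
    Real.rpow_one]

lemma jepa_upow (L : ℕ) (hL : 1 ≤ L) {x : ℝ} (hx : 0 ≤ x) :
    (x ^ (1 / (L : ℝ))) ^ L = x := by
  have hL0 : (L : ℝ) ≠ 0 := Nat.cast_ne_zero.mpr (by omega)
  rw [← Real.rpow_natCast (x ^ (1 / (L : ℝ))) L, ← Real.rpow_mul hx, one_div,
    inv_mul_cancel₀ hL0, Real.rpow_one]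

lemma jepa_factor (L : ℕ) (hL : 1 ≤ L) (lam rho : ℝ) (hrho : 0 < rho) {x : ℝ} (hx : 0 < x) :
    lam * x ^ ((3 : ℝ) - 1 / L) - (lam / rho) * x ^ 3
      = (lam / rho) * x ^ ((3 : ℝ) - 1 / L) * (rho - x ^ (1 / (L : ℝ))) := by
  have h3 : (x : ℝ) ^ (3 : ℕ) = x ^ ((3 : ℝ) - 1 / L) * x ^ (1 / (L : ℝ)) := by
    have he : ((3 : ℕ) : ℝ) = ((3 : ℝ) - 1 / L) + 1 / (L : ℝ) := by push_cast; ring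
    rw [← Real.rpow_natCast x 3, he, Real.rpow_add hx]
  rw [h3]
  field_simp

lemma jepa_fpos (L : ℕ) (hL : 1 ≤ L) (lam rho : ℝ) (hlam : 0 < lam) (hrho : 0 < rho)
    {x : ℝ} (hx : 0 < x) (hx' : x < rho ^ L) :
    0 < lam * x ^ ((3 : ℝ) - 1 / L) - (lam / rho) * x ^ 3 := by
  have hLpos : (0 : ℝ) < L := by exact_mod_cast Nat.pos_of_ne_zero (by omega)
  rw [jepa_factor L hL lam rho hrho hx]
  have hu : x ^ (1 / (L : ℝ)) < rho := by
    calc x ^ (1 / (L : ℝ)) < (rho ^ L) ^ (1 / (L : ℝ)) :=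
          Real.rpow_lt_rpow hx.le hx' (by positivity)
      _ = rho := jepa_rootB L hL hrho.le
  exact mul_pos (mul_pos (div_pos hlam hrho) (Real.rpow_pos_of_pos hx _)) (sub_pos.2 hu)

lemma jepa_flip (L : ℕ) (hL : 1 ≤ L) (lam rho eps : ℝ) (hlam : 0 < lam) (hrho : 0 < rho)
    (heps : 0 < eps) {x : ℝ} (hx : x ∈ Icc eps (rho ^ L)) :
    lam * x ^ ((3 : ℝ) - 1 / L) - (lam / rho) * x ^ 3
      ≤ ((lam / rho) * (max 1 (rho ^ L)) ^ 3 / (eps ^ (1 / (L : ℝ))) ^ (L - 1))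
          * (rho ^ L - x) := by
  have hLpos : (0 : ℝ) < L := by exact_mod_cast Nat.pos_of_ne_zero (by omega)
  have hx0 : 0 < x := heps.trans_le hx.1
  set u := x ^ (1 / (L : ℝ)) with hu
  have hun : 0 ≤ u := Real.rpow_nonneg hx0.le _
  have hum : eps ^ (1 / (L : ℝ)) ≤ u := Real.rpow_le_rpow heps.le hx.1 (by positivity)
  have hur : u ≤ rho := by
    calc u ≤ (rho ^ L) ^ (1 / (L : ℝ)) := Real.rpow_le_rpow hx0.le hx.2 (by positivity)
      _ = rho := jepa_rootB L hL hrho.le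
  have huL : u ^ L = x := jepa_upow L hL hx0.le
  have hsplit : u ^ L = u * u ^ (L - 1) := by
    conv_lhs => rw [show L = (L - 1) + 1 by omega]
    rw [pow_succ']
  have h2 : rho * u ^ (L - 1) ≤ rho ^ L := by
    calc rho * u ^ (L - 1) ≤ rho * rho ^ (L - 1) := by
          exact mul_le_mul_of_nonneg_left (pow_le_pow_left₀ hun hur _) hrho.le
      _ = rho ^ L := by rw [← pow_succ']; congr 1; omega
  have hkey : (rho - u) * u ^ (L - 1) ≤ rho ^ L - x := by
    have : (rho - u) * u ^ (L - 1) = rho * u ^ (L - 1) - u ^ L := by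
      rw [hsplit]; ring
    rw [this, ← huL] at *
    linarith
  set m : ℝ := (eps ^ (1 / (L : ℝ))) ^ (L - 1) with hm
  have hmpos : 0 < m := pow_pos (Real.rpow_pos_of_pos heps _) _
  have hmu : m ≤ u ^ (L - 1) := pow_le_pow_left₀ (Real.rpow_nonneg heps.le _) hum _
  set M : ℝ := (max 1 (rho ^ L)) ^ 3 with hM
  have hMnn : 0 ≤ M := by positivity
  have hxM : x ^ ((3 : ℝ) - 1 / L) ≤ M := by
    have h1 : x ^ ((3 : ℝ) - 1 / L) ≤ (max 1 (rho ^ L)) ^ ((3 : ℝ) - 1 / L) :=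
      Real.rpow_le_rpow hx0.le (hx.2.trans (le_max_right _ _)) (by
        have h1L : 1 / (L : ℝ) ≤ 1 := by
          rw [div_le_one hLpos]; exact_mod_cast hL
        linarith)
    have h2' : (max 1 (rho ^ L)) ^ ((3 : ℝ) - 1 / L) ≤ M := by
      rw [hM, ← Real.rpow_natCast (max 1 (rho ^ L)) 3]
      refine Real.rpow_le_rpow_of_exponent_le (le_max_left _ _) ?_
      have h0 : 0 ≤ 1 / (L : ℝ) := by positivity
      push_cast; linarith
    linarith
  have hru : 0 ≤ rho - u := sub_nonneg.2 hur
  rw [jepa_factor L hL lam rho hrho hx0, ← hu]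
  have hder : 0 ≤ lam / rho := (div_pos hlam hrho).le
  calc (lam / rho) * x ^ ((3 : ℝ) - 1 / L) * (rho - u)
      ≤ (lam / rho) * M * (rho - u) := by gcongr
    _ = (lam / rho) * M / m * (m * (rho - u)) := by field_simp
    _ ≤ (lam / rho) * M / m * ((rho - u) * u ^ (L - 1)) := by
        apply mul_le_mul_of_nonneg_left _ (by positivity)
        calc m * (rho - u) ≤ u ^ (L - 1) * (rho - u) :=
              mul_le_mul_of_nonneg_right hmu hru
          _ = (rho - u) * u ^ (L - 1) := by ring
    _ ≤ (lam / rho) * M / m * (rho ^ L - x) := by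
        apply mul_le_mul_of_nonneg_left hkey (by positivity)
/-- **JEPA scalar dynamics: fixed point and monotone convergence.**
Let `L ≥ 1`, `λ, ρ > 0` and let `w` solve `ẇ = λ w^{3-1/L} - (λ/ρ) w³` on `[0,∞)`
with `w 0 = ε`, `0 < ε < ρ^L`.  Then `w t ∈ (0, ρ^L)` for all `t ≥ 0`, `w` is
strictly increasing on `[0,∞)`, and `w t → ρ^L` as `t → ∞`. -/
theorem jepa_fixed_point (L : ℕ) (hL : 1 ≤ L) (lam rho eps : ℝ)
    (hlam : 0 < lam) (hrho : 0 < rho)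
    (w : ℝ → ℝ)
    (hode : ∀ t ∈ Ici (0 : ℝ),
      HasDerivAt w (lam * w t ^ ((3 : ℝ) - 1 / L) - (lam / rho) * w t ^ 3) t)
    (heps : 0 < eps) (heps' : eps < rho ^ L) (hinit : w 0 = eps) :
    (∀ t ∈ Ici (0 : ℝ), w t ∈ Ioo 0 (rho ^ L)) ∧
    StrictMonoOn w (Ici (0 : ℝ)) ∧
    Tendsto w atTop (nhds (rho ^ L)) := by
  have hBpos : 0 < rho ^ L := pow_pos hrho L
  have hcontOn : ContinuousOn w (Ici (0 : ℝ)) :=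
    fun t ht => (hode t ht).continuousAt.continuousWithinAt
  -- Step 1: invariance of (0, rho^L)
  have hmem : ∀ t ∈ Ici (0 : ℝ), w t ∈ Ioo 0 (rho ^ L) := by
    by_contra hcon
    push_neg at hcon
    obtain ⟨t₀, ht₀, ht₀'⟩ := hcon
    set S : Set ℝ := Ici 0 ∩ w ⁻¹' (Ioo 0 (rho ^ L))ᶜ with hS
    have hSne : S.Nonempty := ⟨t₀, ht₀, ht₀'⟩
    have hSclosed : IsClosed S :=
      hcontOn.preimage_isClosed_of_isClosed isClosed_Ici isOpen_Ioo.isClosed_compl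
    have hSbdd : BddBelow S := ⟨0, fun x hx => hx.1⟩
    set T := sInf S with hT
    have hTS : T ∈ S := hSclosed.csInf_mem hSne hSbdd
    have hT0 : (0 : ℝ) ≤ T := hTS.1
    have hw0 : w 0 ∈ Ioo 0 (rho ^ L) := by rw [hinit]; exact ⟨heps, heps'⟩
    have hTpos : 0 < T := by
      rcases hT0.lt_or_eq with h | h
      · exact h
      · exact absurd (h ▸ hw0) hTS.2
    have hbefore : ∀ t ∈ Ico (0 : ℝ) T, w t ∈ Ioo 0 (rho ^ L) := by
      intro t ht
      by_contra h
      exact absurd (csInf_le hSbdd ⟨ht.1, h⟩) (not_le.2 ht.2)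
    have hmono : StrictMonoOn w (Icc 0 T) := by
      apply strictMonoOn_of_deriv_pos (convex_Icc _ _)
        (hcontOn.mono (Icc_subset_Ici_self))
      intro x hx
      rw [interior_Icc] at hx
      rw [(hode x hx.1.le).deriv]
      exact jepa_fpos L hL lam rho hlam hrho (hbefore x ⟨hx.1.le, hx.2⟩).1
        (hbefore x ⟨hx.1.le, hx.2⟩).2
    have hwT_mem : w T ∈ Icc 0 (rho ^ L) := by
      have h1 : ContinuousWithinAt w (Ico 0 T) T :=
        (hode T hT0).continuousAt.continuousWithinAt
      have h2 : T ∈ closure (Ico 0 T) := by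
        rw [closure_Ico hTpos.ne]
        exact ⟨hT0, le_refl T⟩
      have h3 := h1.mem_closure_image h2
      have h4 : w '' Ico 0 T ⊆ Ioo 0 (rho ^ L) := by
        rintro y ⟨x, hx, rfl⟩
        exact hbefore x hx
      have h5 := closure_mono h4 h3
      rwa [closure_Ioo hBpos.ne] at h5
    have hwTpos : 0 < w T := by
      have := hmono ⟨le_refl 0, hT0⟩ ⟨hT0, le_refl T⟩ hTpos
      rw [hinit] at this
      linarith
    have hwT : w T = rho ^ L := by
      rcases hwT_mem.2.lt_or_eq with h | h
      · exact absurd ⟨hwTpos, h⟩ hTS.2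
      · exact h
    have hlow : ∀ t ∈ Icc (0 : ℝ) T, eps ≤ w t := by
      intro t ht
      rcases ht.1.lt_or_eq with h | h
      · have := hmono ⟨le_refl 0, hT0⟩ ht h
        rw [hinit] at this; exact this.le
      · rw [← h, hinit]
    have hup : ∀ t ∈ Icc (0 : ℝ) T, w t ≤ rho ^ L := by
      intro t ht
      rcases ht.2.lt_or_eq with h | h
      · exact (hbefore t ⟨ht.1, h⟩).2.le
      · rw [h, hwT]
    set K := (lam / rho) * (max 1 (rho ^ L)) ^ 3 / (eps ^ (1 / (L : ℝ))) ^ (L - 1) with hKdef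
    set g : ℝ → ℝ := fun t => (rho ^ L - w t) * Real.exp (K * t) with hg
    have hgd : ∀ t ∈ Icc (0 : ℝ) T, HasDerivAt g
        ((K * (rho ^ L - w t)
          - (lam * w t ^ ((3 : ℝ) - 1 / L) - (lam / rho) * w t ^ 3)) * Real.exp (K * t)) t := by
      intro t ht
      have h1 := hode t ht.1
      have h2 : HasDerivAt (fun s => Real.exp (K * s)) (Real.exp (K * t) * K) t := by
        simpa using ((hasDerivAt_id t).const_mul K).exp
      have h3 : HasDerivAt (fun s => (rho ^ L - w s) * Real.exp (K * s)) _ t :=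
        ((hasDerivAt_const t (rho ^ L)).sub h1).mul h2
      convert h3 using 1
      simp only [Pi.sub_apply]
      ring
    have hgmono : MonotoneOn g (Icc 0 T) := by
      apply monotoneOn_of_deriv_nonneg (convex_Icc _ _)
      · exact fun t ht => (hgd t ht).continuousAt.continuousWithinAt
      · exact fun t ht =>
          (hgd t (interior_subset ht)).differentiableAt.differentiableWithinAt
      · intro t ht
        rw [interior_Icc] at ht
        rw [(hgd t (Ioo_subset_Icc_self ht)).deriv]
        apply mul_nonneg _ (Real.exp_pos _).le
        have hflip := jepa_flip L hL lam rho eps hlam hrho heps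
          (⟨hlow t (Ioo_subset_Icc_self ht), hup t (Ioo_subset_Icc_self ht)⟩ :
            w t ∈ Icc eps (rho ^ L))
        rw [← hKdef] at hflip
        linarith
    have h0T := hgmono ⟨le_refl 0, hT0⟩ ⟨hT0, le_refl T⟩ hT0
    have hg0 : g 0 = rho ^ L - eps := by simp [hg, hinit]
    have hgT : g T = 0 := by simp [hg, hwT]
    rw [hg0, hgT] at h0T
    linarith
  -- Step 2: strict monotonicity on [0, ∞)
  have hsm : StrictMonoOn w (Ici (0 : ℝ)) := by
    apply strictMonoOn_of_deriv_pos (convex_Ici 0) hcontOn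
    intro x hx
    rw [interior_Ici] at hx
    rw [(hode x (show (0:ℝ) ≤ x from le_of_lt hx)).deriv]
    exact jepa_fpos L hL lam rho hlam hrho (hmem x (show (0:ℝ) ≤ x from le_of_lt hx)).1 (hmem x (show (0:ℝ) ≤ x from le_of_lt hx)).2
  refine ⟨hmem, hsm, ?_⟩
  -- Step 3: convergence
  set v : ℝ → ℝ := fun t => w (max t 0) with hv
  have hvmono : Monotone v := fun s t hst =>
    hsm.monotoneOn (le_max_right s 0) (le_max_right t 0) (max_le_max hst le_rfl)
  have hvbdd : BddAbove (range v) := by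
    refine ⟨rho ^ L, ?_⟩
    rintro y ⟨t, rfl⟩
    exact (hmem _ (le_max_right t 0)).2.le
  have hlim := tendsto_atTop_ciSup hvmono hvbdd
  set l := ⨆ t, v t with hl
  have hwv : w =ᶠ[atTop] v := by
    filter_upwards [eventually_ge_atTop (0 : ℝ)] with t ht
    simp [hv, max_eq_left ht]
  have hwt : Tendsto w atTop (nhds l) := hlim.congr' hwv.symm
  have hub : ∀ t, v t ≤ l := fun t => le_ciSup hvbdd t
  have hlB : l ≤ rho ^ L := ciSup_le fun t => (hmem _ (le_max_right t 0)).2.le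
  have hle : eps ≤ l := by
    have := hub 0
    simpa [hv, hinit] using this
  have hlfin : l = rho ^ L := by
    rcases hlB.lt_or_eq with hlt | h
    swap
    · exact h
    exfalso
    have hcf : ContinuousOn
        (fun x : ℝ => lam * x ^ ((3 : ℝ) - 1 / L) - (lam / rho) * x ^ 3) (Icc eps l) := by
      apply ContinuousOn.sub
      · exact continuousOn_const.mul (continuousOn_id.rpow_const
          (fun x hx => Or.inl (ne_of_gt (heps.trans_le hx.1))))
      · exact continuousOn_const.mul (continuousOn_id.pow 3)
    obtain ⟨x₀, hx₀, hmin⟩ := isCompact_Icc.exists_isMinOn (nonempty_Icc.2 hle) hcf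
    set δ := lam * x₀ ^ ((3 : ℝ) - 1 / L) - (lam / rho) * x₀ ^ 3 with hδdef
    have hδ : 0 < δ :=
      jepa_fpos L hL lam rho hlam hrho (heps.trans_le hx₀.1) (hx₀.2.trans_lt hlt)
    have hwin : ∀ t ∈ Ici (0 : ℝ), w t ∈ Icc eps l := by
      intro t ht
      constructor
      · rcases (show (0:ℝ) ≤ t from ht).lt_or_eq with h | h
        · have := hsm self_mem_Ici ht h
          rw [hinit] at this; exact this.le
        · rw [← h, hinit]
      · simpa [hv, max_eq_left (show (0:ℝ) ≤ t from ht)] using hub t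
    have hh : MonotoneOn (fun t => w t - δ * t) (Ici (0 : ℝ)) := by
      have hd : ∀ t ∈ Ici (0 : ℝ), HasDerivAt (fun t => w t - δ * t)
          ((lam * w t ^ ((3 : ℝ) - 1 / L) - (lam / rho) * w t ^ 3) - δ) t := by
        intro t ht
        exact (hode t ht).sub (by simpa using (hasDerivAt_id t).const_mul δ)
      apply monotoneOn_of_deriv_nonneg (convex_Ici 0)
      · exact fun t ht => (hd t ht).continuousAt.continuousWithinAt
      · exact fun t ht =>
          (hd t (interior_subset ht)).differentiableAt.differentiableWithinAt
      · intro t ht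
        rw [interior_Ici] at ht
        rw [(hd t (show (0:ℝ) ≤ t from le_of_lt ht)).deriv]
        have := isMinOn_iff.1 hmin _ (hwin t (show (0:ℝ) ≤ t from le_of_lt ht))
        rw [← hδdef] at this
        linarith
    set t₁ := (rho ^ L - eps) / δ with ht₁def
    have ht₁ : 0 ≤ t₁ := div_nonneg (by linarith) hδ.le
    have hcmp : w 0 - δ * 0 ≤ w t₁ - δ * t₁ := hh self_mem_Ici ht₁ ht₁
    have ht₁v : δ * t₁ = rho ^ L - eps := by
      rw [ht₁def]; field_simp
    rw [hinit] at hcmp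
    have hwt₁ : w t₁ < rho ^ L := (hmem t₁ ht₁).2
    linarith
  rw [← hlfin]
  exact hwt
end

section
/- Let L ≥ 1 be an integer and λ, ρ > 0. Let w : [0, ∞) → ℝ be differentiable with ẇ(t) = λ w(t)^{2−1/L} − (λ/ρ) w(t)³ for all t ≥ 0 and w(0) = ε, where 0 < ε < ρ^{L/(L+1)}. Then w(t) ∈ (0, ρ^{L/(L+1)}) for all t, w is strictly increasing, and lim_{t→∞} w(t) = ρ^{L/(L+1)}. -/
open Set Filter

lemma mae_rpow_diff_le {q W x : ℝ} (hq : 1 ≤ q) (hx : 0 < x) (hxW : x ≤ W) :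
    W ^ q - x ^ q ≤ q * W ^ (q - 1) * (W - x) := by
  rcases eq_or_lt_of_le hxW with h | h
  · subst h; simp
  · obtain ⟨c, hc, hslope⟩ := exists_hasDerivAt_eq_slope (fun y => y ^ q)
      (fun y => q * y ^ (q - 1)) h
      (fun y _ => (Real.hasDerivAt_rpow_const (Or.inr hq)).continuousAt.continuousWithinAt)
      (fun y _ => Real.hasDerivAt_rpow_const (Or.inr hq))
    have hWx : 0 < W - x := by linarith
    have heq : W ^ q - x ^ q = q * c ^ (q - 1) * (W - x) := by
      field_simp at hslope
      linarith [hslope]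
    rw [heq]
    have hc0 : 0 < c := hx.trans hc.1
    have : c ^ (q - 1) ≤ W ^ (q - 1) :=
      Real.rpow_le_rpow hc0.le hc.2.le (by linarith)
    have hq0 : 0 ≤ q := by linarith
    have h2 : q * c ^ (q - 1) ≤ q * W ^ (q - 1) := mul_le_mul_of_nonneg_left this hq0
    exact mul_le_mul_of_nonneg_right h2 hWx.le

/-- **MAE scalar dynamics: fixed point and monotone convergence.**
Let `L ≥ 1`, `λ, ρ > 0` and let `w` solve `ẇ = λ w^{2-1/L} - (λ/ρ) w³` on `[0,∞)`
with `w 0 = ε`, `0 < ε < ρ^{L/(L+1)}`.  Then `w t ∈ (0, ρ^{L/(L+1)})` for all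
`t ≥ 0`, `w` is strictly increasing on `[0,∞)`, and `w t → ρ^{L/(L+1)}`. -/
theorem mae_fixed_point (L : ℕ) (hL : 1 ≤ L) (lam rho eps : ℝ)
    (hlam : 0 < lam) (hrho : 0 < rho)
    (w : ℝ → ℝ)
    (hode : ∀ t ∈ Ici (0 : ℝ),
      HasDerivAt w (lam * w t ^ ((2 : ℝ) - 1 / L) - (lam / rho) * w t ^ 3) t)
    (heps : 0 < eps) (heps' : eps < rho ^ ((L : ℝ) / (L + 1))) (hinit : w 0 = eps) :
    (∀ t ∈ Ici (0 : ℝ), w t ∈ Ioo 0 (rho ^ ((L : ℝ) / (L + 1)))) ∧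
    StrictMonoOn w (Ici (0 : ℝ)) ∧
    Tendsto w atTop (nhds (rho ^ ((L : ℝ) / (L + 1)))) := by
  have hL1 : (1 : ℝ) ≤ (L : ℝ) := by exact_mod_cast hL
  have hL0 : (0 : ℝ) < (L : ℝ) := by linarith
  have hLne : (L : ℝ) ≠ 0 := ne_of_gt hL0
  have hL1ne : (L : ℝ) + 1 ≠ 0 := by linarith
  set W : ℝ := rho ^ ((L : ℝ) / (L + 1)) with hWdef
  set p : ℝ := (2 : ℝ) - 1 / L with hpdef
  set q : ℝ := 1 + 1 / (L : ℝ) with hqdef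
  have hq1 : 1 ≤ q := by
    have : 0 ≤ 1 / (L : ℝ) := by positivity
    rw [hqdef]; linarith
  have hq0 : 0 < q := by linarith
  have hp1 : 1 ≤ p := by
    have : 1 / (L : ℝ) ≤ 1 := by
      rw [div_le_one hL0]; exact hL1
    rw [hpdef]; linarith
  have hp0 : 0 < p := by linarith
  have hW : 0 < W := Real.rpow_pos_of_pos hrho _
  have hWq : W ^ q = rho := by
    rw [hWdef, ← Real.rpow_mul hrho.le]
    have h1 : (L : ℝ) / (L + 1) * q = 1 := by rw [hqdef]; field_simp
    rw [h1, Real.rpow_one]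
  -- splitting identity
  have hsplit : ∀ x : ℝ, 0 < x →
      lam * x ^ p - (lam / rho) * x ^ 3 = (lam / rho) * x ^ p * (rho - x ^ q) := by
    intro x hx
    have h3 : (x : ℝ) ^ (3 : ℕ) = x ^ p * x ^ q := by
      rw [← Real.rpow_add hx]
      have : p + q = ((3 : ℕ) : ℝ) := by rw [hpdef, hqdef]; push_cast; ring
      rw [this, Real.rpow_natCast]
    rw [h3]
    field_simp
  -- positivity of the vector field on (0, W)
  have hfpos : ∀ x : ℝ, 0 < x → x < W → 0 < lam * x ^ p - (lam / rho) * x ^ 3 := by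
    intro x hx hxW
    rw [hsplit x hx]
    have hxq : x ^ q < rho := by
      rw [← hWq]; exact Real.rpow_lt_rpow hx.le hxW hq0
    have hxpp := Real.rpow_pos_of_pos hx p
    have hlr : 0 < lam / rho := div_pos hlam hrho
    exact mul_pos (mul_pos hlr hxpp) (by linarith)
  -- key Lipschitz-type upper bound near W
  set K : ℝ := (lam / rho) * W ^ p * (q * W ^ (q - 1)) with hKdef
  have hkey : ∀ x : ℝ, 0 < x → x ≤ W →
      lam * x ^ p - (lam / rho) * x ^ 3 ≤ K * (W - x) := by
    intro x hx hxW
    rw [hsplit x hx]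
    have hd := mae_rpow_diff_le hq1 hx hxW
    have hxp : x ^ p ≤ W ^ p := Real.rpow_le_rpow hx.le hxW hp0.le
    have hxq : x ^ q ≤ W ^ q := Real.rpow_le_rpow hx.le hxW hq0.le
    have hnn : 0 ≤ rho - x ^ q := by rw [← hWq]; linarith
    have hlr : 0 < lam / rho := div_pos hlam hrho
    have hxpp : 0 < x ^ p := Real.rpow_pos_of_pos hx p
    calc (lam / rho) * x ^ p * (rho - x ^ q)
        ≤ (lam / rho) * W ^ p * (rho - x ^ q) := by
          apply mul_le_mul_of_nonneg_right _ hnn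
          exact mul_le_mul_of_nonneg_left hxp hlr.le
      _ = (lam / rho) * W ^ p * (W ^ q - x ^ q) := by rw [hWq]
      _ ≤ (lam / rho) * W ^ p * (q * W ^ (q - 1) * (W - x)) := by
          apply mul_le_mul_of_nonneg_left hd
          positivity
      _ = K * (W - x) := by rw [hKdef]; ring
  have hcontw : ContinuousOn w (Ici (0 : ℝ)) :=
    fun t ht => (hode t ht).continuousAt.continuousWithinAt
  -- invariance
  have hInv : ∀ t ∈ Ici (0 : ℝ), w t ∈ Ioo 0 W := by
    by_contra hbad
    push_neg at hbad
    obtain ⟨t0, ht0, hw0⟩ := hbad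
    set A : Set ℝ := Ici 0 ∩ w ⁻¹' (Iic 0 ∪ Ici W) with hA
    have hAclosed : IsClosed A :=
      hcontw.preimage_isClosed_of_isClosed isClosed_Ici (isClosed_Iic.union isClosed_Ici)
    have hmem : ∀ x : ℝ, x ∉ Ioo 0 W → x ∈ Iic 0 ∪ Ici W := by
      intro x hx
      rw [mem_Ioo, not_and_or, not_lt, not_lt] at hx
      rcases hx with h | h
      · exact Or.inl h
      · exact Or.inr h
    have hAne : A.Nonempty := ⟨t0, ht0, hmem _ hw0⟩
    have hbdd : BddBelow A := ⟨0, fun x hx => hx.1⟩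
    set τ := sInf A with hτdef
    have hτA : τ ∈ A := hAclosed.csInf_mem hAne hbdd
    have hτ0 : (0 : ℝ) ≤ τ := hτA.1
    have hτlt : ∀ s : ℝ, 0 ≤ s → s < τ → w s ∈ Ioo 0 W := by
      intro s hs hsτ
      by_contra h
      exact absurd (csInf_le hbdd ⟨hs, hmem _ h⟩) (not_le.2 hsτ)
    have hw0mem : w 0 ∈ Ioo 0 W := by rw [hinit]; exact ⟨heps, heps'⟩
    have hτpos : 0 < τ := by
      rcases eq_or_lt_of_le hτ0 with h | h
      · exfalso
        have := hτA.2
        rw [← h] at this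
        rcases this with h' | h'
        · exact absurd h' (not_le.2 hw0mem.1)
        · exact absurd h' (not_le.2 hw0mem.2)
      · exact h
    -- w τ ∈ Icc 0 W by continuity from the left
    have hwτIcc : w τ ∈ Icc 0 W := by
      have hne : (Ico (0 : ℝ) τ).Nonempty := ⟨0, le_refl _, hτpos⟩
      have hclos : τ ∈ closure (Ico (0 : ℝ) τ) := by
        rw [closure_Ico (ne_of_lt hτpos)]
        exact ⟨hτ0, le_refl _⟩
      have hNB : (nhdsWithin τ (Ico (0 : ℝ) τ)).NeBot := mem_closure_iff_nhdsWithin_neBot.1 hclos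
      have htend : Tendsto w (nhdsWithin τ (Ico (0 : ℝ) τ)) (nhds (w τ)) :=
        ((hode τ (mem_Ici.2 hτ0)).continuousAt.tendsto).mono_left nhdsWithin_le_nhds
      refine isClosed_Icc.mem_of_tendsto htend ?_
      filter_upwards [self_mem_nhdsWithin] with s hs
      have := hτlt s hs.1 hs.2
      exact ⟨this.1.le, this.2.le⟩
    -- strict monotonicity on [0, τ]
    have hsm : StrictMonoOn w (Icc 0 τ) := by
      apply strictMonoOn_of_deriv_pos (convex_Icc 0 τ)
        (hcontw.mono (Icc_subset_Ici_self))
      intro x hx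
      rw [interior_Icc] at hx
      rw [(hode x (mem_Ici.2 hx.1.le)).deriv]
      exact hfpos _ (hτlt x hx.1.le hx.2).1 (hτlt x hx.1.le hx.2).2
    rcases hτA.2 with hcase | hcase
    · -- w τ ≤ 0 : contradiction with monotonicity
      have : w 0 < w τ := hsm ⟨le_refl _, hτ0⟩ ⟨hτ0, le_refl _⟩ hτpos
      rw [hinit] at this
      rw [mem_Iic] at hcase
      linarith
    · -- W ≤ w τ : Gronwall argument
      have hwτ : w τ = W := le_antisymm hwτIcc.2 hcase
      set h : ℝ → ℝ := fun t => (W - w t) * Real.exp (K * t) with hhdef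
      have hder : ∀ x ∈ Ioo (0 : ℝ) τ, HasDerivAt h
          (-(lam * w x ^ p - (lam / rho) * w x ^ 3) * Real.exp (K * x)
            + (W - w x) * (Real.exp (K * x) * (K * 1))) x := by
        intro x hx
        have hw := hode x (mem_Ici.2 hx.1.le)
        have he : HasDerivAt (fun t : ℝ => Real.exp (K * t)) (Real.exp (K * x) * (K * 1)) x :=
          ((hasDerivAt_id x).const_mul K).exp
        have := ((hasDerivAt_const x W).sub hw).mul he
        exact this.congr_deriv (by simp only [Pi.sub_apply]; ring)
      have hmono : MonotoneOn h (Icc 0 τ) := by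
        apply monotoneOn_of_deriv_nonneg (convex_Icc 0 τ)
        · apply ContinuousOn.mul
          · exact continuousOn_const.sub (hcontw.mono Icc_subset_Ici_self)
          · exact (Real.continuous_exp.comp (continuous_const.mul continuous_id)).continuousOn
        · intro x hx
          rw [interior_Icc] at hx
          exact (hder x hx).differentiableAt.differentiableWithinAt
        · intro x hx
          rw [interior_Icc] at hx
          rw [(hder x hx).deriv]
          have hwx := hτlt x hx.1.le hx.2
          have hk := hkey (w x) hwx.1 hwx.2.le
          have hexp := Real.exp_pos (K * x)
          nlinarith
      have h0 : h 0 ≤ h τ := hmono ⟨le_refl _, hτ0⟩ ⟨hτ0, le_refl _⟩ hτ0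
      have hh0 : h 0 = W - eps := by simp [hhdef, hinit]
      have hhτ : h τ = 0 := by simp [hhdef, hwτ]
      rw [hh0, hhτ] at h0
      linarith
  -- strict monotonicity on [0, ∞)
  have hSM : StrictMonoOn w (Ici (0 : ℝ)) := by
    apply strictMonoOn_of_deriv_pos (convex_Ici 0) hcontw
    intro x hx
    rw [interior_Ici] at hx
    rw [(hode x (mem_Ici.2 hx.le)).deriv]
    exact hfpos _ (hInv x (mem_Ici.2 hx.le)).1 (hInv x (mem_Ici.2 hx.le)).2
  -- the limit
  set c : ℝ := sSup (w '' Ici 0) with hcdef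
  have himgne : (w '' Ici (0 : ℝ)).Nonempty := ⟨w 0, 0, self_mem_Ici, rfl⟩
  have hbddA : BddAbove (w '' Ici (0 : ℝ)) := by
    refine ⟨W, ?_⟩
    rintro _ ⟨t, ht, rfl⟩
    exact (hInv t ht).2.le
  have hwle : ∀ t ∈ Ici (0 : ℝ), w t ≤ c := fun t ht => le_csSup hbddA ⟨t, ht, rfl⟩
  have hcle : c ≤ W := csSup_le himgne (by rintro _ ⟨t, ht, rfl⟩; exact (hInv t ht).2.le)
  have hcge : eps ≤ c := by
    rw [← hinit]
    exact hwle 0 self_mem_Ici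
  have hwge : ∀ t ∈ Ici (0 : ℝ), eps ≤ w t := by
    intro t ht
    rw [← hinit]
    exact hSM.monotoneOn self_mem_Ici ht ht
  have hceq : c = W := by
    by_contra hne
    have hclt : c < W := lt_of_le_of_ne hcle hne
    have hc0 : 0 < c := lt_of_lt_of_le heps hcge
    set m : ℝ := (lam / rho) * eps ^ p * (rho - c ^ q) with hmdef
    have hm : 0 < m := by
      have hcq : c ^ q < rho := by
        rw [← hWq]; exact Real.rpow_lt_rpow hc0.le hclt hq0
      have hep := Real.rpow_pos_of_pos heps p
      have hlr : 0 < lam / rho := div_pos hlam hrho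
      rw [hmdef]
      exact mul_pos (mul_pos hlr hep) (by linarith)
    have hflb : ∀ t ∈ Ici (0 : ℝ), m ≤ lam * w t ^ p - (lam / rho) * w t ^ 3 := by
      intro t ht
      have hwt : 0 < w t := lt_of_lt_of_le heps (hwge t ht)
      rw [hsplit (w t) hwt, hmdef]
      have h1 : eps ^ p ≤ w t ^ p := Real.rpow_le_rpow heps.le (hwge t ht) hp0.le
      have h2 : w t ^ q ≤ c ^ q := Real.rpow_le_rpow hwt.le (hwle t ht) hq0.le
      have hcq : c ^ q < rho := by
        rw [← hWq]; exact Real.rpow_lt_rpow hc0.le hclt hq0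
      have hlr : 0 < lam / rho := div_pos hlam hrho
      have he : 0 < eps ^ p := Real.rpow_pos_of_pos heps p
      have ha : 0 ≤ rho - c ^ q := by linarith
      calc lam / rho * eps ^ p * (rho - c ^ q)
          ≤ lam / rho * w t ^ p * (rho - c ^ q) :=
            mul_le_mul_of_nonneg_right (mul_le_mul_of_nonneg_left h1 hlr.le) ha
        _ ≤ lam / rho * w t ^ p * (rho - w t ^ q) := by
            apply mul_le_mul_of_nonneg_left (by linarith)
            exact mul_nonneg hlr.le (Real.rpow_pos_of_pos hwt p).le
    have hmul : ∀ x : ℝ, HasDerivAt (fun t : ℝ => m * t) m x := fun x => by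
      simpa using (hasDerivAt_id x).const_mul m
    have hgd : ∀ x : ℝ, 0 ≤ x → HasDerivAt (fun t : ℝ => w t - m * t)
        (lam * w x ^ p - lam / rho * w x ^ 3 - m) x :=
      fun x hx => (hode x (mem_Ici.2 hx)).sub (hmul x)
    have hgmono : MonotoneOn (fun t : ℝ => w t - m * t) (Ici (0 : ℝ)) := by
      apply monotoneOn_of_deriv_nonneg (convex_Ici 0)
      · exact hcontw.sub (continuous_const.mul continuous_id).continuousOn
      · intro x hx
        rw [interior_Ici] at hx
        exact (hgd x hx.le).differentiableAt.differentiableWithinAt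
      · intro x hx
        rw [interior_Ici] at hx
        rw [(hgd x hx.le).deriv]
        have := hflb x (mem_Ici.2 hx.le)
        linarith
    set T : ℝ := (c - eps) / m + 1 with hTdef
    have hT0 : (0 : ℝ) ≤ T := by
      have : 0 ≤ (c - eps) / m := div_nonneg (by linarith) hm.le
      rw [hTdef]; linarith
    have := hgmono self_mem_Ici (mem_Ici.2 hT0) hT0
    simp only [hinit, mul_zero, sub_zero] at this
    have hmT : m * T = (c - eps) + m := by
      rw [hTdef]; field_simp
    have hwT : w T ≤ c := hwle T (mem_Ici.2 hT0)
    rw [hmT] at this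
    linarith
  have hlim : Tendsto w atTop (nhds W) := by
    rw [← hceq]
    rw [tendsto_order]
    constructor
    · intro b hb
      obtain ⟨x, ⟨t1, ht1, rfl⟩, hbx⟩ := exists_lt_of_lt_csSup himgne hb
      filter_upwards [eventually_ge_atTop t1] with t ht
      exact lt_of_lt_of_le hbx (hSM.monotoneOn ht1 (mem_Ici.2 (le_trans ht1 ht)) ht)
    · intro b hb
      filter_upwards [eventually_ge_atTop (0 : ℝ)] with t ht
      exact lt_of_le_of_lt (hwle t (mem_Ici.2 ht)) hb
  exact ⟨hInv, hSM, hlim⟩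
end

section
/- Fix λ, ρ > 0 and ε > 0. For each integer L ≥ 1, let w_L : [0, ∞) → ℝ be a differentiable solution of the depth-L MAE dynamics ẇ_L(t) = λ w_L(t)^{2−1/L} − (λ/ρ) w_L(t)³ with w_L(0) = ε and w_L(t) > 0 for all t, and let w : [0, ∞) → ℝ be a differentiable solution of the depth-1 JEPA dynamics ẇ(t) = λ w(t)² − (λ/ρ) w(t)³ with w(0) = ε and w(t) > 0 for all t. Then for every t ≥ 0, lim_{L→∞} w_L(t) = w(t); that is, the dynamics of an infinite-depth MAE model match those of a 1-layer JEPA model. -/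
open Set Filter Real

private lemma stays_le (f f' : ℝ → ℝ) (M : ℝ)
    (hf : ∀ t ∈ Ici (0:ℝ), HasDerivAt f (f' t) t)
    (h0 : f 0 ≤ M)
    (hneg : ∀ t ∈ Ici (0:ℝ), M < f t → f' t < 0) :
    ∀ t ∈ Ici (0:ℝ), f t ≤ M := by
  intro t1 ht1
  by_contra hgt
  push_neg at hgt
  set S : Set ℝ := {u | u ∈ Icc (0:ℝ) t1 ∧ f u ≤ M} with hSdef
  have h0S : (0:ℝ) ∈ S := ⟨⟨le_refl 0, ht1⟩, h0⟩
  have hSne : S.Nonempty := ⟨0, h0S⟩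
  have hSbdd : BddAbove S := ⟨t1, fun u hu => hu.1.2⟩
  set s := sSup S with hs
  have hs0 : (0:ℝ) ≤ s := le_csSup hSbdd h0S
  have hst1 : s ≤ t1 := csSup_le hSne fun u hu => hu.1.2
  have hscl : s ∈ closure S := csSup_mem_closure hSne hSbdd
  have hfsM : f s ≤ M := by
    have hc : ContinuousWithinAt f S s :=
      ((hf s hs0).continuousAt).continuousWithinAt
    have himg : f s ∈ closure (f '' S) := hc.mem_closure_image hscl
    have hsub : closure (f '' S) ⊆ Iic M := by
      apply closure_minimal _ isClosed_Iic
      rintro _ ⟨u, hu, rfl⟩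
      exact hu.2
    exact hsub himg
  have hslt : s < t1 := by
    refine lt_of_le_of_ne hst1 fun h => ?_
    rw [h] at hfsM
    exact absurd hgt (not_lt.2 hfsM)
  have hgtM : ∀ u ∈ Ioc s t1, M < f u := by
    intro u hu
    by_contra hle
    push_neg at hle
    have : u ∈ S := ⟨⟨le_trans hs0 hu.1.le, hu.2⟩, hle⟩
    exact absurd (le_csSup hSbdd this) (not_le.2 hu.1)
  have hanti : StrictAntiOn f (Icc s t1) := by
    apply strictAntiOn_of_deriv_neg (convex_Icc s t1)
    · intro u hu
      exact ((hf u (le_trans hs0 hu.1)).continuousAt).continuousWithinAt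
    · intro u hu
      rw [interior_Icc] at hu
      have hu0 : (0:ℝ) ≤ u := le_trans hs0 hu.1.le
      rw [(hf u hu0).deriv]
      exact hneg u hu0 (hgtM u ⟨hu.1, hu.2.le⟩)
  have := hanti (left_mem_Icc.2 hst1) (right_mem_Icc.2 hst1) hslt
  linarith

private lemma stays_ge (f f' : ℝ → ℝ) (m : ℝ)
    (hf : ∀ t ∈ Ici (0:ℝ), HasDerivAt f (f' t) t)
    (h0 : m ≤ f 0)
    (hpos : ∀ t ∈ Ici (0:ℝ), f t < m → 0 < f' t) :
    ∀ t ∈ Ici (0:ℝ), m ≤ f t := by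
  intro t ht
  have := stays_le (fun u => -f u) (fun u => -f' u) (-m)
    (fun u hu => (hf u hu).neg) (by simpa using h0)
    (fun u hu h => by
      have := hpos u hu (by linarith)
      linarith) t ht
  linarith

set_option maxHeartbeats 1000000 in
/-- **Infinite-depth MAE matches 1-layer JEPA.**
Fix `λ, ρ, ε > 0`.  If for each `L ≥ 1`, `wL L` is a positive differentiable
solution of the depth-`L` MAE dynamics `ẇ = λ w^{2-1/L} - (λ/ρ) w³` with
`wL L 0 = ε`, and `w` is a positive differentiable solution of the depth-1
JEPA dynamics `ẇ = λ w² - (λ/ρ) w³` with `w 0 = ε`, then for every `t ≥ 0`,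
`wL L t → w t` as `L → ∞`. -/
theorem mae_infinite_depth_eq_jepa_depth_one (lam rho eps : ℝ)
    (hlam : 0 < lam) (hrho : 0 < rho) (heps : 0 < eps)
    (wL : ℕ → ℝ → ℝ) (w : ℝ → ℝ)
    (hLode : ∀ L : ℕ, 1 ≤ L → ∀ t ∈ Ici (0 : ℝ),
      HasDerivAt (wL L) (lam * wL L t ^ ((2 : ℝ) - 1 / L) - (lam / rho) * wL L t ^ 3) t)
    (hLinit : ∀ L : ℕ, 1 ≤ L → wL L 0 = eps)
    (hLpos : ∀ L : ℕ, 1 ≤ L → ∀ t ∈ Ici (0 : ℝ), 0 < wL L t)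
    (hode : ∀ t ∈ Ici (0 : ℝ),
      HasDerivAt w (lam * w t ^ 2 - (lam / rho) * w t ^ 3) t)
    (hinit : w 0 = eps)
    (hpos : ∀ t ∈ Ici (0 : ℝ), 0 < w t) :
    ∀ t ∈ Ici (0 : ℝ), Tendsto (fun L : ℕ => wL L t) atTop (nhds (w t)) := by
  intro t0 ht0
  have hmu : 0 < lam / rho := div_pos hlam hrho
  set mu := lam / rho with hmudef
  have hmurho : mu * rho = lam := by rw [hmudef]; field_simp
  set m : ℝ := min eps (min rho 1) with hmdef
  set M : ℝ := max eps (max rho 1) with hMdef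
  have hm0 : 0 < m := lt_min heps (lt_min hrho one_pos)
  have hm1 : m ≤ 1 := le_trans (min_le_right _ _) (min_le_right _ _)
  have hM1 : (1:ℝ) ≤ M := le_trans (le_max_right _ _) (le_max_right _ _)
  have hmrho : m ≤ rho := le_trans (min_le_right _ _) (min_le_left _ _)
  have hrhoM : rho ≤ M := le_trans (le_max_left _ _) (le_max_right _ _)
  have hmeps : m ≤ eps := min_le_left _ _
  have hepsM : eps ≤ M := le_max_left _ _
  have hmM : m ≤ M := le_trans hmeps hepsM
  have hM0 : (0:ℝ) < M := lt_of_lt_of_le one_pos hM1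
  -- bounds for w
  have hwub : ∀ t ∈ Ici (0:ℝ), w t ≤ M := by
    refine stays_le w (fun t => lam * w t ^ 2 - mu * w t ^ 3) M hode
      (by rw [hinit]; exact hepsM) ?_
    intro t ht hMt
    have hx : 0 < w t := hpos t ht
    have hxr : rho < w t := lt_of_le_of_lt hrhoM hMt
    nlinarith [mul_pos (mul_pos hmu (pow_pos hx 2)) (sub_pos.2 hxr)]
  have hwlb : ∀ t ∈ Ici (0:ℝ), m ≤ w t := by
    refine stays_ge w (fun t => lam * w t ^ 2 - mu * w t ^ 3) m hode
      (by rw [hinit]; exact hmeps) ?_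
    intro t ht hmt
    have hx : 0 < w t := hpos t ht
    have hxr : w t < rho := lt_of_lt_of_le hmt hmrho
    nlinarith [mul_pos (mul_pos hmu (pow_pos hx 2)) (sub_pos.2 hxr)]
  -- bounds for wL
  have hub : ∀ L : ℕ, 1 ≤ L → ∀ t ∈ Ici (0:ℝ), wL L t ≤ M := by
    intro L hL
    have hLc : (1:ℝ) ≤ (L:ℝ) := by exact_mod_cast hL
    have hL0 : (0:ℝ) < (L:ℝ) := lt_of_lt_of_le one_pos hLc
    have hu0 : 0 < 1/(L:ℝ) := by positivity
    have hu1 : 1/(L:ℝ) ≤ 1 := by rw [div_le_one hL0]; exact hLc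
    refine stays_le (wL L)
      (fun t => lam * wL L t ^ ((2:ℝ) - 1/(L:ℝ)) - mu * wL L t ^ 3) M
      (hLode L hL) (by rw [hLinit L hL]; exact hepsM) ?_
    intro t ht hMt
    set x := wL L t with hxdef
    have hx : 0 < x := hLpos L hL t ht
    have hx1 : 1 < x := lt_of_le_of_lt hM1 hMt
    have hxr : rho < x := lt_of_le_of_lt hrhoM hMt
    have hkey : x ^ ((2:ℝ) - 1/(L:ℝ)) * x ^ ((1:ℝ) + 1/(L:ℝ)) = x ^ 3 := by
      rw [← Real.rpow_add hx,
        show (2:ℝ) - 1/(L:ℝ) + ((1:ℝ) + 1/(L:ℝ)) = ((3:ℕ):ℝ) by push_cast; ring,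
        Real.rpow_natCast]
    have h1x : x ≤ x ^ ((1:ℝ) + 1/(L:ℝ)) := by
      calc x = x ^ (1:ℝ) := (Real.rpow_one x).symm
        _ ≤ _ := Real.rpow_le_rpow_of_exponent_le hx1.le (by linarith)
    have hppos : 0 < x ^ ((2:ℝ) - 1/(L:ℝ)) := Real.rpow_pos_of_pos hx _
    have e1 : mu * (x ^ ((2:ℝ) - 1/(L:ℝ)) * rho) = lam * x ^ ((2:ℝ) - 1/(L:ℝ)) := by
      rw [← hmurho]; ring
    have e2 : mu * (x ^ ((2:ℝ) - 1/(L:ℝ)) * x ^ ((1:ℝ) + 1/(L:ℝ))) = mu * x ^ 3 := by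
      rw [hkey]
    have hlt : mu * (x ^ ((2:ℝ) - 1/(L:ℝ)) * rho)
        < mu * (x ^ ((2:ℝ) - 1/(L:ℝ)) * x ^ ((1:ℝ) + 1/(L:ℝ))) := by
      apply mul_lt_mul_of_pos_left _ hmu
      exact (mul_lt_mul_iff_right₀ hppos).2 (lt_of_lt_of_le hxr h1x)
    linarith
  have hlb : ∀ L : ℕ, 1 ≤ L → ∀ t ∈ Ici (0:ℝ), m ≤ wL L t := by
    intro L hL
    have hLc : (1:ℝ) ≤ (L:ℝ) := by exact_mod_cast hL
    have hL0 : (0:ℝ) < (L:ℝ) := lt_of_lt_of_le one_pos hLc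
    have hu0 : 0 < 1/(L:ℝ) := by positivity
    have hu1 : 1/(L:ℝ) ≤ 1 := by rw [div_le_one hL0]; exact hLc
    refine stays_ge (wL L)
      (fun t => lam * wL L t ^ ((2:ℝ) - 1/(L:ℝ)) - mu * wL L t ^ 3) m
      (hLode L hL) (by rw [hLinit L hL]; exact hmeps) ?_
    intro t ht hmt
    set x := wL L t with hxdef
    have hx : 0 < x := hLpos L hL t ht
    have hx1 : x < 1 := lt_of_lt_of_le hmt hm1
    have hxr : x < rho := lt_of_lt_of_le hmt hmrho
    have hkey : x ^ ((2:ℝ) - 1/(L:ℝ)) * x ^ ((1:ℝ) + 1/(L:ℝ)) = x ^ 3 := by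
      rw [← Real.rpow_add hx,
        show (2:ℝ) - 1/(L:ℝ) + ((1:ℝ) + 1/(L:ℝ)) = ((3:ℕ):ℝ) by push_cast; ring,
        Real.rpow_natCast]
    have h1x : x ^ ((1:ℝ) + 1/(L:ℝ)) ≤ x := by
      calc x ^ ((1:ℝ) + 1/(L:ℝ)) ≤ x ^ (1:ℝ) :=
            Real.rpow_le_rpow_of_exponent_ge hx hx1.le (by linarith)
        _ = x := Real.rpow_one x
    have hppos : 0 < x ^ ((2:ℝ) - 1/(L:ℝ)) := Real.rpow_pos_of_pos hx _
    have e1 : mu * (x ^ ((2:ℝ) - 1/(L:ℝ)) * rho) = lam * x ^ ((2:ℝ) - 1/(L:ℝ)) := by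
      rw [← hmurho]; ring
    have e2 : mu * (x ^ ((2:ℝ) - 1/(L:ℝ)) * x ^ ((1:ℝ) + 1/(L:ℝ))) = mu * x ^ 3 := by
      rw [hkey]
    have hlt : mu * (x ^ ((2:ℝ) - 1/(L:ℝ)) * x ^ ((1:ℝ) + 1/(L:ℝ)))
        < mu * (x ^ ((2:ℝ) - 1/(L:ℝ)) * rho) := by
      apply mul_lt_mul_of_pos_left _ hmu
      exact (mul_lt_mul_iff_right₀ hppos).2 (lt_of_le_of_lt h1x hxr)
    linarith
  -- the truncated (globally Lipschitz) vector field
  set clamp : ℝ → ℝ := fun x => max m (min x M) with hclampdef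
  set V : ℝ → ℝ := fun x => lam * (clamp x) ^ 2 - mu * (clamp x) ^ 3 with hVdef
  set K0 : ℝ := 2 * lam * M + 3 * mu * M ^ 2 with hK0def
  have hK0 : 0 < K0 := by positivity
  set K : NNReal := ⟨K0, hK0.le⟩ with hKdef
  have hKcoe : (K : ℝ) = K0 := rfl
  have hclamp_mem : ∀ x, clamp x ∈ Icc m M := fun x =>
    ⟨le_max_left _ _, max_le hmM (min_le_right _ _)⟩
  have hclamp_eq : ∀ x ∈ Icc m M, clamp x = x := fun x hx => by
    rw [hclampdef]; dsimp only; rw [min_eq_left hx.2, max_eq_right hx.1]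
  have hVeq : ∀ x ∈ Icc m M, V x = lam * x ^ 2 - mu * x ^ 3 := fun x hx => by
    rw [hVdef]; dsimp only; rw [hclamp_eq x hx]
  have hclamp_lip : ∀ x y, |clamp x - clamp y| ≤ |x - y| := by
    intro x y
    have h1 : |min x M - min y M| ≤ |x - y| := by
      have h := abs_min_sub_min_le_max x M y M
      simpa [max_eq_left (abs_nonneg (x - y))] using h
    calc |clamp x - clamp y| = |max (min x M) m - max (min y M) m| := by
          rw [hclampdef]; dsimp only; rw [max_comm m (min x M), max_comm m (min y M)]
      _ ≤ |min x M - min y M| := abs_max_sub_max_le_abs _ _ _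
      _ ≤ |x - y| := h1
  have hP_lip : ∀ a ∈ Icc m M, ∀ b ∈ Icc m M,
      |(lam * a ^ 2 - mu * a ^ 3) - (lam * b ^ 2 - mu * b ^ 3)| ≤ K0 * |a - b| := by
    intro a ha b hb
    have ha0 : 0 ≤ a := le_trans hm0.le ha.1
    have hb0 : 0 ≤ b := le_trans hm0.le hb.1
    have key : (lam * a ^ 2 - mu * a ^ 3) - (lam * b ^ 2 - mu * b ^ 3)
        = (a - b) * (lam * (a + b) - mu * (a ^ 2 + a * b + b ^ 2)) := by ring
    rw [key, abs_mul]
    have h2 : |lam * (a + b) - mu * (a ^ 2 + a * b + b ^ 2)| ≤ K0 := by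
      rw [abs_le]
      constructor
      · nlinarith [mul_le_mul ha.2 ha.2 ha0 hM0.le, mul_le_mul hb.2 hb.2 hb0 hM0.le,
          mul_le_mul ha.2 hb.2 hb0 hM0.le, mul_nonneg ha0 hb0, mul_pos hlam hM0,
          mul_nonneg hlam.le ha0, mul_nonneg hlam.le hb0]
      · nlinarith [mul_nonneg hmu.le (by positivity : (0:ℝ) ≤ a^2 + a*b + b^2),
          mul_le_mul_of_nonneg_left (add_le_add ha.2 hb.2) hlam.le,
          mul_nonneg (mul_nonneg hmu.le hM0.le) hM0.le]
    calc |a - b| * |lam * (a + b) - mu * (a ^ 2 + a * b + b ^ 2)|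
        ≤ |a - b| * K0 := mul_le_mul_of_nonneg_left h2 (abs_nonneg _)
      _ = K0 * |a - b| := mul_comm _ _
  have hVlip : LipschitzWith K V := by
    apply LipschitzWith.of_dist_le_mul
    intro x y
    rw [Real.dist_eq, Real.dist_eq, hKcoe]
    have h1 := hP_lip (clamp x) (hclamp_mem x) (clamp y) (hclamp_mem y)
    calc |V x - V y| ≤ K0 * |clamp x - clamp y| := h1
      _ ≤ K0 * |x - y| := mul_le_mul_of_nonneg_left (hclamp_lip x y) hK0.le
  -- the error bound
  set c : ℝ := max M (1/m) with hcdef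
  have hMc : M ≤ c := le_max_left _ _
  have hmc : 1/m ≤ c := le_max_right _ _
  have hc1 : (1:ℝ) ≤ c := le_trans hM1 hMc
  have hc0 : (0:ℝ) < c := lt_of_lt_of_le one_pos hc1
  set dl : ℕ → ℝ := fun L => lam * M ^ 2 * (c ^ (1/(L:ℝ)) - 1) with hdldef
  have herr : ∀ L : ℕ, 1 ≤ L → ∀ x ∈ Icc m M,
      |lam * x ^ ((2:ℝ) - 1/(L:ℝ)) - lam * x ^ 2| ≤ dl L := by
    intro L hL x hx
    have hLc : (1:ℝ) ≤ (L:ℝ) := by exact_mod_cast hL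
    have hL0 : (0:ℝ) < (L:ℝ) := lt_of_lt_of_le one_pos hLc
    have hu0 : 0 < 1/(L:ℝ) := by positivity
    have hu1 : 1/(L:ℝ) ≤ 1 := by rw [div_le_one hL0]; exact hLc
    set u := 1/(L:ℝ) with hudef
    have hx0 : 0 < x := lt_of_lt_of_le hm0 hx.1
    have hcd : 0 ≤ c ^ u - 1 := by
      have h := Real.rpow_le_rpow_of_exponent_le hc1 hu0.le
      rw [Real.rpow_zero] at h
      linarith
    have hx2 : x ^ 2 = x ^ (2:ℝ) := by
      rw [← Real.rpow_natCast x 2]; norm_num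
    have hM2 : 0 ≤ M ^ 2 := by positivity
    rw [← mul_sub, abs_mul, abs_of_pos hlam, hdldef]
    dsimp only
    rw [mul_assoc]
    apply mul_le_mul_of_nonneg_left _ hlam.le
    rcases le_total 1 x with h1 | h1
    · -- x ≥ 1
      have hle : x ^ ((2:ℝ) - u) ≤ x ^ (2:ℝ) :=
        Real.rpow_le_rpow_of_exponent_le h1 (by linarith)
      have hsplit : x ^ (2:ℝ) = x ^ ((2:ℝ) - u) * x ^ u := by
        rw [← Real.rpow_add hx0]; ring_nf
      have habs : |x ^ ((2:ℝ) - u) - x ^ 2| = x ^ ((2:ℝ) - u) * x ^ u - x ^ ((2:ℝ) - u) := by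
        rw [hx2, abs_sub_comm, abs_of_nonneg (by linarith), hsplit]
      rw [habs]
      have hfac : x ^ ((2:ℝ) - u) * x ^ u - x ^ ((2:ℝ) - u)
          = x ^ ((2:ℝ) - u) * (x ^ u - 1) := by ring
      rw [hfac]
      have hb1 : x ^ ((2:ℝ) - u) ≤ M ^ 2 := by
        calc x ^ ((2:ℝ) - u) ≤ x ^ (2:ℝ) := hle
          _ = x ^ 2 := hx2.symm
          _ ≤ M ^ 2 := by apply pow_le_pow_left₀ hx0.le hx.2
      have hb2 : x ^ u - 1 ≤ c ^ u - 1 := by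
        have := Real.rpow_le_rpow hx0.le (le_trans hx.2 hMc) hu0.le
        linarith
      have hb3 : 0 ≤ x ^ u - 1 := by
        have h := Real.rpow_le_rpow_of_exponent_le h1 hu0.le
        rw [Real.rpow_zero] at h
        linarith
      exact mul_le_mul hb1 hb2 hb3 hM2
    · -- x ≤ 1
      have hge : x ^ (2:ℝ) ≤ x ^ ((2:ℝ) - u) :=
        Real.rpow_le_rpow_of_exponent_ge hx0 h1 (by linarith)
      have hsplit : x ^ ((2:ℝ) - u) = x ^ (2:ℝ) * x ^ (-u) := by
        rw [← Real.rpow_add hx0]; ring_nf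
      have habs : |x ^ ((2:ℝ) - u) - x ^ 2| = x ^ (2:ℝ) * x ^ (-u) - x ^ (2:ℝ) := by
        rw [hx2, abs_of_nonneg (by linarith), hsplit]
      rw [habs]
      have hfac : x ^ (2:ℝ) * x ^ (-u) - x ^ (2:ℝ) = x ^ (2:ℝ) * (x ^ (-u) - 1) := by ring
      rw [hfac]
      have hxinv : x ^ (-u) = (x⁻¹) ^ u := by
        rw [Real.rpow_neg hx0.le, ← Real.inv_rpow hx0.le]
      have hb1 : x ^ (2:ℝ) ≤ 1 := by
        rw [← hx2]
        exact pow_le_one₀ hx0.le h1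
      have hb1' : x ^ (2:ℝ) ≤ M ^ 2 := le_trans hb1 (by nlinarith : (1:ℝ) ≤ M ^ 2)
      have hinvc : x⁻¹ ≤ c := by
        have : x⁻¹ ≤ m⁻¹ := by
          apply inv_anti₀ hm0 hx.1
        calc x⁻¹ ≤ m⁻¹ := this
          _ = 1/m := (one_div m).symm
          _ ≤ c := hmc
      have hb2 : x ^ (-u) - 1 ≤ c ^ u - 1 := by
        rw [hxinv]
        have := Real.rpow_le_rpow (inv_nonneg.2 hx0.le) hinvc hu0.le
        linarith
      have hb3 : 0 ≤ x ^ (-u) - 1 := by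
        rw [hxinv]
        have hx1inv : (1:ℝ) ≤ x⁻¹ := (one_le_inv₀ hx0).2 h1
        have h := Real.rpow_le_rpow_of_exponent_le hx1inv hu0.le
        rw [Real.rpow_zero] at h
        linarith
      have h0x2 : 0 ≤ x ^ (2:ℝ) := le_of_lt (Real.rpow_pos_of_pos hx0 _)
      exact mul_le_mul hb1' hb2 hb3 hM2
  -- dl tends to 0
  have hdl0 : Tendsto dl atTop (nhds 0) := by
    have h1 : Tendsto (fun L : ℕ => 1/(L:ℝ)) atTop (nhds 0) :=
      tendsto_one_div_atTop_nhds_zero_nat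
    have hcont : Continuous (fun y : ℝ => c ^ y) := by
      have hfun : (fun y : ℝ => c ^ y) = fun y => Real.exp (Real.log c * y) := by
        funext y; rw [Real.rpow_def_of_pos hc0]
      rw [hfun]
      exact Real.continuous_exp.comp (continuous_const.mul continuous_id)
    have h2 : Tendsto (fun L : ℕ => c ^ (1/(L:ℝ))) atTop (nhds 1) := by
      have := (hcont.tendsto 0).comp h1
      simpa [Real.rpow_zero, Function.comp_def] using this
    have h3 : Tendsto dl atTop (nhds (lam * M ^ 2 * (1 - 1))) := by
      rw [hdldef]
      exact tendsto_const_nhds.mul (h2.sub tendsto_const_nhds)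
    simpa using h3
  -- Gronwall
  have hC : ∀ L : ℕ, 1 ≤ L →
      dist (wL L t0) (w t0) ≤ dl L / K0 * (Real.exp (K0 * t0) - 1) := by
    intro L hL
    have hmemL : ∀ t ∈ Ici (0:ℝ), wL L t ∈ Icc m M := fun t ht =>
      ⟨hlb L hL t ht, hub L hL t ht⟩
    have hmemw : ∀ t ∈ Ici (0:ℝ), w t ∈ Icc m M := fun t ht =>
      ⟨hwlb t ht, hwub t ht⟩
    have hG := dist_le_of_approx_trajectories_ODE (v := fun _ x => V x)
      (K := K) (f := wL L)
      (f' := fun t => lam * wL L t ^ ((2:ℝ) - 1/(L:ℝ)) - mu * wL L t ^ 3)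
      (g := w) (g' := fun t => lam * w t ^ 2 - mu * w t ^ 3)
      (a := 0) (b := t0) (εf := dl L) (εg := 0) (δ := 0)
      (fun _ => hVlip)
      (fun t ht => ((hLode L hL t ht.1).continuousAt).continuousWithinAt)
      (fun t ht => (hLode L hL t ht.1).hasDerivWithinAt)
      (fun t ht => by
        have hmem := hmemL t ht.1
        rw [Real.dist_eq, hVeq _ hmem]
        have : lam * wL L t ^ ((2:ℝ) - 1/(L:ℝ)) - mu * wL L t ^ 3
            - (lam * wL L t ^ 2 - mu * wL L t ^ 3)
            = lam * wL L t ^ ((2:ℝ) - 1/(L:ℝ)) - lam * wL L t ^ 2 := by ring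
        rw [this]
        exact herr L hL _ hmem)
      (fun t ht => ((hode t ht.1).continuousAt).continuousWithinAt)
      (fun t ht => (hode t ht.1).hasDerivWithinAt)
      (fun t ht => by
        have hmem := hmemw t ht.1
        rw [hVeq _ hmem]
        exact le_of_eq (dist_self _))
      (by rw [hLinit L hL, hinit, dist_self])
    have h := hG t0 ⟨ht0, le_refl t0⟩
    rw [gronwallBound_of_K_ne_0 (by rw [hKcoe]; exact hK0.ne')] at h
    rw [hKcoe] at h
    simpa using h
  -- conclude
  rw [tendsto_iff_dist_tendsto_zero]
  apply squeeze_zero' (Eventually.of_forall fun L => dist_nonneg)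
  · filter_upwards [eventually_ge_atTop 1] with L hL
    exact hC L hL
  · have : Tendsto (fun L : ℕ => dl L / K0 * (Real.exp (K0 * t0) - 1)) atTop
        (nhds (0 / K0 * (Real.exp (K0 * t0) - 1))) :=
      ((hdl0.div_const K0).mul_const _)
    simpa using this
end

section
/- Let L ≥ 1 be an integer and λ, ρ > 0. Let w : [0, ∞) → ℝ be differentiable with ẇ(t) = λ w(t)^{3−1/L} − (λ/ρ) w(t)³ and 0 < w(t) < ρ^L for all t ≥ 0. Define ψ(t) = ρ^{−1} w(t)^{1/L}, so ψ(t) ∈ (0,1). Then for all t ≥ 0: log ψ(t) − log(1 − ψ(t)) + ∑_{n=1}^{2L−1} ψ(t)^{n−2L}/(n − 2L) = (λ/L) ρ^{2L−1} t + C, where C is the value of the left-hand side at t = 0. -/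
open Set Filter Finset

private lemma geom_aux (L : ℕ) (hL : 1 ≤ L) (x : ℝ) (hx : 0 < x) (hx1 : x < 1) :
    (∑ n ∈ Finset.Icc 1 (2*L-1), x ^ ((n:ℝ) - 2*L - 1)) * (x^(2*L+1) * (1-x))
      = x - x^(2*L) := by
  have hxne : x ≠ 0 := hx.ne'
  have hx1ne : x - 1 ≠ 0 := by linarith
  have hIc : Finset.Icc 1 (2*L-1) = Finset.Ico 1 (2*L) := by
    ext n
    simp only [Finset.mem_Icc, Finset.mem_Ico]
    omega
  have hterm : ∀ n ∈ Finset.Ico 1 (2*L), x ^ ((n:ℝ) - 2*L - 1) = x^n / x^(2*L+1) := by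
    intro n hn
    rw [show (n:ℝ) - 2*L - 1 = (n:ℝ) - ((2*L+1 : ℕ):ℝ) by push_cast; ring,
      Real.rpow_sub hx, Real.rpow_natCast, Real.rpow_natCast]
  rw [hIc, Finset.sum_congr rfl hterm, ← Finset.sum_div,
    geom_sum_Ico hx1.ne (by omega)]
  field_simp
  ring

/-- **Closed-form implicit solution of the JEPA dynamics.**
Let `L ≥ 1`, `λ, ρ > 0` and let `w` solve `ẇ = λ w^{3-1/L} - (λ/ρ) w³` with
`0 < w t < ρ^L` for all `t ≥ 0`.  Set `ψ t = ρ⁻¹ (w t)^{1/L} ∈ (0,1)`.  Then for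
all `t ≥ 0`,
`log ψ(t) - log (1 - ψ(t)) + ∑_{n=1}^{2L-1} ψ(t)^{n-2L}/(n-2L) = (λ/L) ρ^{2L-1} t + C`,
where `C` is the value of the left-hand side at `t = 0`. -/
theorem jepa_implicit_solution (L : ℕ) (hL : 1 ≤ L) (lam rho : ℝ)
    (hlam : 0 < lam) (hrho : 0 < rho)
    (w : ℝ → ℝ)
    (hode : ∀ t ∈ Ici (0 : ℝ),
      HasDerivAt w (lam * w t ^ ((3 : ℝ) - 1 / L) - (lam / rho) * w t ^ 3) t)
    (hrange : ∀ t ∈ Ici (0 : ℝ), w t ∈ Ioo 0 (rho ^ L))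
    (ψ : ℝ → ℝ) (hψ : ∀ t, ψ t = rho⁻¹ * w t ^ ((1 : ℝ) / L)) :
    ∀ t ∈ Ici (0 : ℝ),
      ψ t ∈ Ioo (0 : ℝ) 1 ∧
      Real.log (ψ t) - Real.log (1 - ψ t)
          + ∑ n ∈ Finset.Icc 1 (2 * L - 1), ψ t ^ ((n : ℝ) - 2 * L) / ((n : ℝ) - 2 * L)
        = (lam / L) * rho ^ (2 * L - 1) * t
          + (Real.log (ψ 0) - Real.log (1 - ψ 0)
              + ∑ n ∈ Finset.Icc 1 (2 * L - 1),
                  ψ 0 ^ ((n : ℝ) - 2 * L) / ((n : ℝ) - 2 * L)) := by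
  have hLR : (0:ℝ) < L := by exact_mod_cast hL
  have hLne : (L:ℝ) ≠ 0 := hLR.ne'
  have hrne : rho ≠ 0 := hrho.ne'
  -- ψ lies in (0,1)
  have hψ01 : ∀ t ∈ Ici (0:ℝ), ψ t ∈ Ioo (0:ℝ) 1 := by
    intro t ht
    obtain ⟨hw0, hw1⟩ := hrange t ht
    constructor
    · rw [hψ]
      have := Real.rpow_pos_of_pos hw0 ((1:ℝ)/L)
      positivity
    · rw [hψ]
      have hlt : w t ^ ((1:ℝ)/L) < (rho ^ L) ^ ((1:ℝ)/L) :=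
        Real.rpow_lt_rpow hw0.le hw1 (by positivity)
      have heq : ((rho ^ L : ℝ)) ^ ((1:ℝ)/L) = rho := by
        rw [← Real.rpow_natCast rho L, ← Real.rpow_mul hrho.le,
          mul_one_div, div_self hLne, Real.rpow_one]
      rw [heq] at hlt
      calc rho⁻¹ * w t ^ ((1:ℝ)/L) < rho⁻¹ * rho := by
            exact mul_lt_mul_of_pos_left hlt (by positivity)
        _ = 1 := inv_mul_cancel₀ hrne
  set c : ℝ := lam / L * rho ^ (2*L-1) with hc
  -- derivative of ψ
  have hψd : ∀ t ∈ Ici (0:ℝ), HasDerivAt ψ (c * ψ t ^ (2*L) * (1 - ψ t)) t := by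
    intro t ht
    obtain ⟨hw0, hw1⟩ := hrange t ht
    have h1 : HasDerivAt (fun s => rho⁻¹ * w s ^ ((1:ℝ)/L))
        (rho⁻¹ * ((lam * w t ^ ((3:ℝ) - 1/L) - lam / rho * w t ^ 3)
          * ((1:ℝ)/L) * w t ^ ((1:ℝ)/L - 1))) t :=
      ((hode t ht).rpow_const (Or.inl hw0.ne')).const_mul _
    have heq : (fun s => rho⁻¹ * w s ^ ((1:ℝ)/L)) = ψ := by
      funext s; rw [hψ]
    rw [heq] at h1
    convert h1 using 1
    set a := w t with ha
    set u := a ^ ((1:ℝ)/L) with hu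
    have hupos : 0 < u := Real.rpow_pos_of_pos hw0 _
    have h31 : a ^ ((3:ℝ) - 1/L) = a ^ 3 / u := by
      rw [Real.rpow_sub hw0, hu,
        show (3:ℝ) = ((3:ℕ):ℝ) by norm_num, Real.rpow_natCast]
    have h1L1 : a ^ ((1:ℝ)/L - 1) = u / a := by
      rw [Real.rpow_sub hw0, Real.rpow_one, hu]
    have hu2L : u ^ (2*L) = a ^ 2 := by
      rw [hu, ← Real.rpow_natCast (a ^ ((1:ℝ)/L)) (2*L), ← Real.rpow_mul hw0.le,
        show (1:ℝ)/L * ((2*L : ℕ):ℝ) = ((2:ℕ):ℝ) by push_cast; field_simp,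
        Real.rpow_natCast]
    have hψt : ψ t = rho⁻¹ * u := hψ t
    rw [hψt, h31, h1L1, hc, mul_pow, inv_pow, hu2L,
      show rho ^ (2*L) = rho ^ (2*L-1) * rho by rw [← pow_succ]; congr 1; omega]
    have hrp : rho ^ (2*L-1) ≠ 0 := pow_ne_zero _ hrne
    field_simp
  set E : ℝ → ℝ := fun s => Real.log (ψ s) - Real.log (1 - ψ s)
      + ∑ n ∈ Finset.Icc 1 (2 * L - 1), ψ s ^ ((n : ℝ) - 2 * L) / ((n : ℝ) - 2 * L)
    with hE
  set F : ℝ → ℝ := fun s => E s - c * s with hF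
  have hFd : ∀ t ∈ Ici (0:ℝ), HasDerivAt F 0 t := by
    intro t ht
    obtain ⟨hx0, hx1⟩ := hψ01 t ht
    have hd := hψd t ht
    set x := ψ t with hx
    set p := c * x ^ (2*L) * (1 - x) with hp
    have h1 : HasDerivAt (fun s => Real.log (ψ s)) (p / x) t := hd.log hx0.ne'
    have h2 : HasDerivAt (fun s => Real.log (1 - ψ s)) ((0 - p) / (1 - x)) t := by
      exact ((hasDerivAt_const t (1:ℝ)).sub hd).log (by show (1:ℝ) - ψ t ≠ 0; linarith)
    have h3 : HasDerivAt
        (fun s => ∑ n ∈ Finset.Icc 1 (2 * L - 1), ψ s ^ ((n : ℝ) - 2 * L) / ((n : ℝ) - 2 * L))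
        (∑ n ∈ Finset.Icc 1 (2 * L - 1),
          (p * ((n:ℝ) - 2*L) * x ^ ((n:ℝ) - 2*L - 1)) / ((n:ℝ) - 2*L)) t :=
      HasDerivAt.fun_sum fun n _ => (hd.rpow_const (Or.inl hx0.ne')).div_const _
    have h4 : HasDerivAt (fun s => c * s) (c * 1) t := (hasDerivAt_id t).const_mul c
    have h5 := ((h1.sub h2).add h3).sub h4
    have key : p / x - (0 - p) / (1 - x)
        + (∑ n ∈ Finset.Icc 1 (2 * L - 1),
            (p * ((n:ℝ) - 2*L) * x ^ ((n:ℝ) - 2*L - 1)) / ((n:ℝ) - 2*L)) - c * 1 = 0 := by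
      have hxne : x ≠ 0 := hx0.ne'
      have h1x : (1:ℝ) - x ≠ 0 := by linarith
      have hsum_eq : ∑ n ∈ Finset.Icc 1 (2 * L - 1),
          (p * ((n:ℝ) - 2*L) * x ^ ((n:ℝ) - 2*L - 1)) / ((n:ℝ) - 2*L)
          = p * ∑ n ∈ Finset.Icc 1 (2 * L - 1), x ^ ((n:ℝ) - 2*L - 1) := by
        rw [Finset.mul_sum]
        refine Finset.sum_congr rfl fun n hn => ?_
        have hn2 : n < 2*L := by
          have := (Finset.mem_Icc.mp hn).2; omega
        have hne : (n:ℝ) - 2*L ≠ 0 := by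
          have : (n:ℝ) < 2*L := by exact_mod_cast hn2
          linarith
        field_simp
      rw [hsum_eq]
      have hg := geom_aux L hL x hx0 hx1
      have hpne : x ^ (2*L+1) * (1 - x) ≠ 0 := by positivity
      have hS : ∑ n ∈ Finset.Icc 1 (2*L-1), x ^ ((n:ℝ) - 2*L - 1)
          = (x - x^(2*L)) / (x^(2*L+1) * (1-x)) := by
        rw [eq_div_iff hpne]; exact hg
      rw [hS, hp]
      field_simp
      ring
    rw [hF, hE]
    simpa using key ▸ h5
  -- F is constant on [0, ∞)
  have hcon : ∀ t ∈ Ici (0:ℝ), F t = F 0 := by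
    intro t ht
    have := constant_of_has_deriv_right_zero (f := F) (a := 0) (b := t)
      (fun s hs => (hFd s hs.1).continuousAt.continuousWithinAt)
      (fun s hs => (hFd s hs.1).hasDerivWithinAt)
    exact this t (right_mem_Icc.mpr ht)
  intro t ht
  refine ⟨hψ01 t ht, ?_⟩
  have h := hcon t ht
  have hFt : F t = E t - c * t := rfl
  have hF0 : F 0 = E 0 - c * 0 := rfl
  show E t = c * t + E 0
  rw [hFt, hF0] at h
  linarith
end

section
/- Fix an integer L ≥ 1, reals λ, ρ > 0 and p ∈ (0,1). For each ε ∈ (0, p ρ^L), let w_ε : [0, ∞) → ℝ be the solution of the JEPA dynamics ẇ(t) = λ w(t)^{3−1/L} − (λ/ρ) w(t)³ with w_ε(0) = ε, and let t*(ε) be the unique time with w_ε(t*(ε)) = p ρ^L. Then, as ε → 0⁺, t*(ε) − (1/λ) ∑_{n=1}^{2L−1} L/(n ρ^{2L−n−1} ε^{n/L}) = O(log(1/ε)). -/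
open Set Filter Finset

noncomputable def Gfun (N : ℕ) (rho : ℝ) (u : ℝ) : ℝ :=
  -(∑ m ∈ Finset.Icc 1 N, u ^ (-(m:ℤ)) / (m * rho ^ (N-m)))
  + (Real.log u - Real.log (rho - u)) / rho ^ N

noncomputable def Ffun (L : ℕ) (lam rho : ℝ) (x : ℝ) : ℝ :=
  ((L:ℝ) / lam) * Gfun (2*L-1) rho (x ^ ((1:ℝ)/(L:ℝ)))


lemma keyid (N : ℕ) (u rho : ℝ) (hu : u ≠ 0) (hrho : rho ≠ 0) (hne : rho - u ≠ 0) :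
    (∑ m ∈ Finset.Icc 1 N, u ^ (-(m:ℤ)-1) / rho ^ (N-m)) + (1/u + 1/(rho-u))/rho^N
      = rho / (u^(N+1) * (rho - u)) := by
  have h1 : ∀ m ∈ Finset.Icc 1 N, u ^ (-(m:ℤ)-1) / rho ^ (N-m)
      = rho ^ m * u ^ (N - m) / (u^(N+1) * rho ^ N) := by
    intro m hm
    obtain ⟨hm1, hm2⟩ := Finset.mem_Icc.mp hm
    have e1 : u ^ (N+1) = u ^ (m+1) * u ^ (N - m) := by
      rw [← pow_add]; congr 1; omega
    have e2 : rho ^ N = rho ^ m * rho ^ (N - m) := by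
      rw [← pow_add]; congr 1; omega
    rw [e1, e2]
    rw [zpow_sub₀ hu, zpow_neg, zpow_natCast, zpow_one]
    field_simp
    ring
  rw [Finset.sum_congr rfl h1]
  have hgeom : (∑ i ∈ range (N+1), rho ^ i * u ^ (N - i)) * (rho - u)
      = rho ^ (N+1) - u ^ (N+1) := by
    simpa using geom_sum₂_mul rho u (N+1)
  have hsum : (∑ m ∈ Finset.Icc 1 N, rho ^ m * u ^ (N - m))
      = (∑ i ∈ range (N+1), rho ^ i * u ^ (N - i)) - u ^ N := by
    rw [Finset.sum_range_succ' (fun i => rho ^ i * u ^ (N - i)) N]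
    have : Finset.Icc 1 N = Finset.Ico 1 (N+1) := (Finset.Ico_add_one_right_eq_Icc 1 N).symm
    rw [this, Finset.sum_Ico_eq_sum_range]
    simp [add_comm]
  rw [← Finset.sum_div, hsum]
  set S := ∑ i ∈ range (N+1), rho ^ i * u ^ (N - i) with hS
  have hu1 : u ^ (N+1) ≠ 0 := pow_ne_zero _ hu
  have hr1 : rho ^ N ≠ 0 := pow_ne_zero _ hrho
  have huN : u ^ (N+1) = u * u ^ N := by ring
  field_simp
  linear_combination u * hgeom


lemma Gfun_deriv (N : ℕ) (rho u : ℝ) (hu : 0 < u) (hur : u < rho) :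
    HasDerivAt (Gfun N rho) (rho / (u^(N+1) * (rho - u))) u := by
  have hrho : (0:ℝ) < rho := hu.trans hur
  have hne : rho - u ≠ 0 := sub_ne_zero.mpr hur.ne'
  have hsum : HasDerivAt (fun u : ℝ => ∑ m ∈ Finset.Icc 1 N, u ^ (-(m:ℤ)) / (m * rho ^ (N-m)))
      (∑ m ∈ Finset.Icc 1 N, -(u ^ (-(m:ℤ)-1) / rho ^ (N-m))) u := by
    apply HasDerivAt.fun_sum
    intro m hm
    obtain ⟨hm1, _⟩ := Finset.mem_Icc.mp hm
    have hmne : (m:ℝ) ≠ 0 := Nat.cast_ne_zero.mpr (by omega)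
    have h := (hasDerivAt_zpow (-(m:ℤ)) u (Or.inl hu.ne')).div_const (m * rho ^ (N-m))
    refine h.congr_deriv (Eq.symm ?_)
    have : ((-(m:ℤ) : ℤ) : ℝ) = -(m:ℝ) := by push_cast; ring
    rw [this]
    field_simp
  have hlog1 : HasDerivAt Real.log (1/u) u := by
    simpa [one_div] using Real.hasDerivAt_log hu.ne'
  have hlog2 : HasDerivAt (fun u : ℝ => Real.log (rho - u)) (-(1/(rho - u))) u := by
    have h0 : HasDerivAt (fun u : ℝ => rho - u) (-1) u := by
      exact ((hasDerivAt_const u rho).sub (hasDerivAt_id u)).congr_deriv (by norm_num)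
    have := (Real.hasDerivAt_log hne).comp u h0
    exact this.congr_deriv (by simp [div_eq_mul_inv, one_div])
  have hlog : HasDerivAt (fun u : ℝ => (Real.log u - Real.log (rho - u)) / rho ^ N)
      ((1/u + 1/(rho - u)) / rho ^ N) u := by
    have := (hlog1.sub hlog2).div_const (rho ^ N)
    simpa [sub_neg_eq_add] using this
  have := (hsum.neg).add hlog
  refine this.congr_deriv (Eq.symm ?_)
  rw [← keyid N u rho hu.ne' hrho.ne' hne]
  simp [Finset.sum_neg_distrib]


lemma root_lt (L : ℕ) (hL : 1 ≤ L) (rho x : ℝ) (hrho : 0 < rho) (hx : 0 ≤ x)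
    (hxr : x < rho ^ L) : x ^ ((1:ℝ)/(L:ℝ)) < rho := by
  have hL0 : (L:ℝ) ≠ 0 := Nat.cast_ne_zero.mpr (by omega)
  have h := Real.rpow_lt_rpow hx hxr (by positivity : (0:ℝ) < 1/(L:ℝ))
  calc x ^ ((1:ℝ)/(L:ℝ)) < (rho ^ L) ^ ((1:ℝ)/(L:ℝ)) := h
    _ = rho := by
        rw [← Real.rpow_natCast rho L, ← Real.rpow_mul hrho.le]
        rw [mul_one_div, div_self hL0, Real.rpow_one]

lemma ffact (L : ℕ) (hL : 1 ≤ L) (lam rho x : ℝ) (hrho : 0 < rho) (hx : 0 < x) :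
    lam * x ^ ((3:ℝ) - 1/(L:ℝ)) - (lam/rho) * x^3
      = (lam/rho) * x ^ ((3:ℝ) - 1/(L:ℝ)) * (rho - x ^ ((1:ℝ)/(L:ℝ))) := by
  have h3 : x ^ ((3:ℝ) - 1/(L:ℝ)) * x ^ ((1:ℝ)/(L:ℝ)) = x ^ (3:ℕ) := by
    rw [← Real.rpow_add hx, show (3:ℝ) - 1/(L:ℝ) + (1:ℝ)/(L:ℝ) = ((3:ℕ):ℝ) by push_cast; ring,
      Real.rpow_natCast]
  rw [← h3]; field_simp

lemma fpos (L : ℕ) (hL : 1 ≤ L) (lam rho x : ℝ) (hlam : 0 < lam) (hrho : 0 < rho)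
    (hx : 0 < x) (hxr : x < rho ^ L) :
    0 < lam * x ^ ((3:ℝ) - 1/(L:ℝ)) - (lam/rho) * x^3 := by
  rw [ffact L hL lam rho x hrho hx]
  have := root_lt L hL rho x hrho hx.le hxr
  have h1 : (0:ℝ) < x ^ ((3:ℝ) - 1/(L:ℝ)) := Real.rpow_pos_of_pos hx _
  have h2 : (0:ℝ) < rho - x ^ ((1:ℝ)/(L:ℝ)) := by linarith
  positivity

lemma Ffun_deriv (L : ℕ) (hL : 1 ≤ L) (lam rho x : ℝ) (hlam : 0 < lam) (hrho : 0 < rho)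
    (hx : 0 < x) (hxr : x < rho ^ L) :
    HasDerivAt (Ffun L lam rho)
      (1 / (lam * x ^ ((3:ℝ) - 1/(L:ℝ)) - (lam/rho) * x^3)) x := by
  have hL0 : (L:ℝ) ≠ 0 := Nat.cast_ne_zero.mpr (by omega)
  set u := x ^ ((1:ℝ)/(L:ℝ)) with hu_def
  have hu : 0 < u := Real.rpow_pos_of_pos hx _
  have hur : u < rho := root_lt L hL rho x hrho hx.le hxr
  have hroot : HasDerivAt (fun x : ℝ => x ^ ((1:ℝ)/(L:ℝ)))
      ((1/(L:ℝ)) * x ^ ((1:ℝ)/(L:ℝ) - 1)) x :=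
    Real.hasDerivAt_rpow_const (Or.inl hx.ne')
  have hG := (Gfun_deriv (2*L-1) rho u hu hur).comp x hroot
  have := hG.const_mul ((L:ℝ)/lam)
  have hN : 2*L-1+1 = 2*L := by omega
  refine this.congr_deriv (Eq.symm ?_)
  rw [hN]
  have hu2L : u ^ (2*L) = x ^ (2:ℕ) := by
    rw [hu_def, ← Real.rpow_natCast (x ^ ((1:ℝ)/(L:ℝ))) (2*L), ← Real.rpow_mul hx.le]
    rw [show (1:ℝ)/(L:ℝ) * ((2*L : ℕ):ℝ) = ((2:ℕ):ℝ) by push_cast; field_simp,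
      Real.rpow_natCast]
  rw [ffact L hL lam rho x hrho hx]
  have hBC : x ^ ((3:ℝ) - 1/(L:ℝ)) * x ^ ((1:ℝ)/(L:ℝ) - 1) = x ^ (2:ℕ) := by
    rw [← Real.rpow_add hx]
    rw [show (3:ℝ) - 1/(L:ℝ) + ((1:ℝ)/(L:ℝ) - 1) = ((2:ℕ):ℝ) by push_cast; ring,
      Real.rpow_natCast]
  have hx2 : (0:ℝ) < x ^ (2:ℕ) := by positivity
  have hB : (0:ℝ) < x ^ ((3:ℝ) - 1/(L:ℝ)) := Real.rpow_pos_of_pos hx _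
  have hC : (0:ℝ) < x ^ ((1:ℝ)/(L:ℝ) - 1) := Real.rpow_pos_of_pos hx _
  have hru : (0:ℝ) < rho - u := by linarith
  rw [hu2L]
  have hBC2 : x ^ (((1:ℝ) - (L:ℝ))/(L:ℝ)) * x ^ ((3*(L:ℝ) - 1)/(L:ℝ)) = x ^ (2:ℕ) := by
    rw [← Real.rpow_add hx]
    rw [show ((1:ℝ) - (L:ℝ))/(L:ℝ) + (3*(L:ℝ) - 1)/(L:ℝ) = ((2:ℕ):ℝ) by push_cast; field_simp; ring,
      Real.rpow_natCast]
  field_simp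
  linear_combination (-1) * hBC2 + x ^ 2 * mul_inv_cancel₀ hru.ne'


lemma tstar_formula (L : ℕ) (hL : 1 ≤ L) (lam rho p : ℝ)
    (hlam : 0 < lam) (hrho : 0 < rho) (hp : p ∈ Ioo (0 : ℝ) 1)
    (w : ℝ → ℝ → ℝ) (tstar : ℝ → ℝ)
    (hinit : ∀ eps ∈ Ioo (0 : ℝ) (p * rho ^ L), w eps 0 = eps)
    (hode : ∀ eps ∈ Ioo (0 : ℝ) (p * rho ^ L), ∀ t ∈ Ici (0 : ℝ),
      HasDerivAt (w eps)
        (lam * w eps t ^ ((3 : ℝ) - 1 / L) - (lam / rho) * w eps t ^ 3) t)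
    (htstar_nonneg : ∀ eps ∈ Ioo (0 : ℝ) (p * rho ^ L), 0 ≤ tstar eps)
    (htstar : ∀ eps ∈ Ioo (0 : ℝ) (p * rho ^ L), w eps (tstar eps) = p * rho ^ L)
    (htstar_unique : ∀ eps ∈ Ioo (0 : ℝ) (p * rho ^ L), ∀ s ∈ Ici (0 : ℝ),
      w eps s = p * rho ^ L → s = tstar eps)
    (eps : ℝ) (heps : eps ∈ Ioo (0 : ℝ) (p * rho ^ L)) :
    tstar eps = Ffun L lam rho (p * rho ^ L) - Ffun L lam rho eps := by
  have heps0 : 0 < eps := heps.1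
  have hrL : 0 < rho ^ L := pow_pos hrho L
  have hprlt : p * rho ^ L < rho ^ L := by nlinarith [hp.2, hp.1]
  set T := tstar eps with hT_def
  have hT : 0 ≤ T := htstar_nonneg eps heps
  have hwT : w eps T = p * rho ^ L := htstar eps heps
  have hw0 : w eps 0 = eps := hinit eps heps
  have hcontw : ∀ t, 0 ≤ t → ContinuousAt (w eps) t := fun t ht =>
    (hode eps heps t ht).continuousAt
  -- claim A
  have claimA : ∀ s, 0 ≤ s → s < T → w eps s < p * rho ^ L := by
    intro s hs hsT
    by_contra hcon
    push_neg at hcon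
    rcases eq_or_lt_of_le hcon with heq | hlt
    · have h' := htstar_unique eps heps s hs heq.symm
      rw [← hT_def] at h'
      linarith
    · have hcont' : ContinuousOn (w eps) (Icc 0 s) := fun t ht =>
        (hcontw t ht.1).continuousWithinAt
      have hmem : p * rho ^ L ∈ Icc (w eps 0) (w eps s) := by
        rw [hw0]; exact ⟨heps.2.le, hlt.le⟩
      obtain ⟨s', hs', hws'⟩ := intermediate_value_Icc hs hcont' hmem
      have := htstar_unique eps heps s' hs'.1 hws'
      have : s' < T := lt_of_le_of_lt hs'.2 hsT
      linarith [htstar_unique eps heps s' hs'.1 hws']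
  -- claim B
  have claimB : ∀ t ∈ Icc (0:ℝ) T, eps / 2 < w eps t := by
    by_contra hcon
    push_neg at hcon
    obtain ⟨t1, ht1, hwt1⟩ := hcon
    set S := Icc (0:ℝ) T ∩ (w eps) ⁻¹' (Iic (eps/2)) with hS_def
    have hScl : IsClosed S := by
      apply ContinuousOn.preimage_isClosed_of_isClosed
        (fun t ht => (hcontw t ht.1).continuousWithinAt) isClosed_Icc isClosed_Iic
    have hSne : S.Nonempty := ⟨t1, ht1, hwt1⟩
    have hSbdd : BddBelow S := ⟨0, fun t ht => ht.1.1⟩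
    set t0 := sInf S with ht0_def
    have ht0S : t0 ∈ S := hScl.csInf_mem hSne hSbdd
    have ht0Icc : t0 ∈ Icc (0:ℝ) T := ht0S.1
    have hwt0 : w eps t0 ≤ eps/2 := ht0S.2
    have ht0pos : 0 < t0 := by
      rcases lt_or_eq_of_le ht0Icc.1 with h | h
      · exact h
      · exfalso; rw [← h] at hwt0; rw [hw0] at hwt0; linarith
    have hbelow : ∀ t, 0 ≤ t → t < t0 → eps/2 < w eps t := by
      intro t ht htt0
      by_contra hcon2
      push_neg at hcon2
      have : t ∈ S := ⟨⟨ht, le_trans htt0.le ht0Icc.2⟩, hcon2⟩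
      have := csInf_le hSbdd this
      linarith
    -- strict mono on Icc 0 t0
    have hmono : StrictMonoOn (w eps) (Icc 0 t0) := by
      apply strictMonoOn_of_hasDerivWithinAt_pos (convex_Icc 0 t0)
        (fun t ht => (hcontw t ht.1).continuousWithinAt)
        (f' := fun t => lam * w eps t ^ ((3 : ℝ) - 1 / L) - (lam / rho) * w eps t ^ 3)
      · intro x hx
        rw [interior_Icc] at hx
        exact (hode eps heps x hx.1.le).hasDerivWithinAt
      · intro x hx
        rw [interior_Icc] at hx
        have hx0 : 0 < w eps x := lt_trans (by linarith) (hbelow x hx.1.le hx.2)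
        have hxT : x < T := lt_of_lt_of_le hx.2 ht0Icc.2
        have hxup : w eps x < rho ^ L := lt_trans (claimA x hx.1.le hxT) hprlt
        exact fpos L hL lam rho (w eps x) hlam hrho hx0 hxup
    have := hmono (left_mem_Icc.mpr ht0Icc.1) (right_mem_Icc.mpr ht0Icc.1) ht0pos
    rw [hw0] at this
    linarith
  -- w stays in Ioo 0 (rho ^ L)
  have hmemw : ∀ t ∈ Icc (0:ℝ) T, w eps t ∈ Ioo (0:ℝ) (rho ^ L) := by
    intro t ht
    refine ⟨lt_trans (by linarith) (claimB t ht), ?_⟩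
    rcases lt_or_eq_of_le ht.2 with h | h
    · exact lt_trans (claimA t ht.1 h) hprlt
    · rw [h, hwT]; exact hprlt
  -- the conserved quantity
  have hder : ∀ t ∈ Icc (0:ℝ) T,
      HasDerivAt (fun s => Ffun L lam rho (w eps s) - s) 0 t := by
    intro t ht
    have hmt := hmemw t ht
    have h1 := Ffun_deriv L hL lam rho (w eps t) hlam hrho hmt.1 hmt.2
    have h2 := hode eps heps t ht.1
    have h3 := (h1.comp t h2).sub (hasDerivAt_id t)
    have hfne : lam * w eps t ^ ((3 : ℝ) - 1 / L) - (lam / rho) * w eps t ^ 3 ≠ 0 :=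
      (fpos L hL lam rho (w eps t) hlam hrho hmt.1 hmt.2).ne'
    refine h3.congr_deriv (Eq.symm ?_)
    rw [one_div_mul_cancel hfne]
    ring
  have hconst := constant_of_has_deriv_right_zero
    (f := fun s => Ffun L lam rho (w eps s) - s) (a := 0) (b := T)
    (fun t ht => ((hder t ht).continuousAt).continuousWithinAt)
    (fun t ht => (hder t (Ico_subset_Icc_self ht)).hasDerivWithinAt)
  have := hconst T (right_mem_Icc.mpr hT)
  simp only [hwT, hw0, sub_zero] at this
  linarith

/-- **JEPA critical time.**
Fix `L ≥ 1`, `λ, ρ > 0`, `p ∈ (0,1)`.  For each `ε ∈ (0, p ρ^L)` let `w ε` be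
the solution of the JEPA dynamics `ẇ = λ w^{3-1/L} - (λ/ρ) w³` with `w ε 0 = ε`,
and let `tstar ε ≥ 0` be the unique time with `w ε (tstar ε) = p ρ^L`.  Then, as
`ε → 0⁺`,
`tstar ε - (1/λ) ∑_{n=1}^{2L-1} L/(n ρ^{2L-n-1} ε^{n/L}) = O(log (1/ε))`. -/
theorem jepa_critical_time (L : ℕ) (hL : 1 ≤ L) (lam rho p : ℝ)
    (hlam : 0 < lam) (hrho : 0 < rho) (hp : p ∈ Ioo (0 : ℝ) 1)
    (w : ℝ → ℝ → ℝ) (tstar : ℝ → ℝ)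
    (hinit : ∀ eps ∈ Ioo (0 : ℝ) (p * rho ^ L), w eps 0 = eps)
    (hode : ∀ eps ∈ Ioo (0 : ℝ) (p * rho ^ L), ∀ t ∈ Ici (0 : ℝ),
      HasDerivAt (w eps)
        (lam * w eps t ^ ((3 : ℝ) - 1 / L) - (lam / rho) * w eps t ^ 3) t)
    (htstar_nonneg : ∀ eps ∈ Ioo (0 : ℝ) (p * rho ^ L), 0 ≤ tstar eps)
    (htstar : ∀ eps ∈ Ioo (0 : ℝ) (p * rho ^ L), w eps (tstar eps) = p * rho ^ L)
    (htstar_unique : ∀ eps ∈ Ioo (0 : ℝ) (p * rho ^ L), ∀ s ∈ Ici (0 : ℝ),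
      w eps s = p * rho ^ L → s = tstar eps) :
    (fun eps : ℝ => tstar eps
        - (1 / lam) * ∑ n ∈ Finset.Icc 1 (2 * L - 1),
            (L : ℝ) / (n * rho ^ (2 * L - n - 1) * eps ^ ((n : ℝ) / L)))
      =O[nhdsWithin 0 (Ioi (0 : ℝ))] (fun eps => Real.log (1 / eps)) := by
  have hformula : ∀ eps ∈ Ioo (0 : ℝ) (p * rho ^ L),
      tstar eps = Ffun L lam rho (p * rho ^ L) - Ffun L lam rho eps :=
    fun eps heps => tstar_formula L hL lam rho p hlam hrho hp w tstar hinit hode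
      htstar_nonneg htstar htstar_unique eps heps
  set N := 2*L-1 with hN_def
  set C0 := Ffun L lam rho (p * rho ^ L) with hC0_def
  have hrL : 0 < rho ^ L := pow_pos hrho L
  have hpr : 0 < p * rho ^ L := mul_pos hp.1 hrL
  have hL0 : (L:ℝ) ≠ 0 := Nat.cast_ne_zero.mpr (by omega)
  set l := nhdsWithin (0:ℝ) (Ioi (0 : ℝ)) with hl_def
  set φ : ℝ → ℝ := fun eps => C0 + (1/(lam*rho^N)) * Real.log (1/eps)
      + ((L:ℝ)/lam) * Real.log (rho - eps ^ ((1:ℝ)/(L:ℝ))) / rho^N with hφ_def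
  -- eventual equality
  have heq : (fun eps : ℝ => tstar eps
        - (1 / lam) * ∑ n ∈ Finset.Icc 1 (2 * L - 1),
            (L : ℝ) / (n * rho ^ (2 * L - n - 1) * eps ^ ((n : ℝ) / L))) =ᶠ[l] φ := by
    filter_upwards [Ioo_mem_nhdsGT_of_mem (left_mem_Ico.mpr hpr)] with eps heps
    have heps0 : (0:ℝ) < eps := heps.1
    set u := eps ^ ((1:ℝ)/(L:ℝ)) with hu_def
    have hu0 : 0 < u := Real.rpow_pos_of_pos heps0 _
    have hsum_eq : (1 / lam) * ∑ n ∈ Finset.Icc 1 (2 * L - 1),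
        (L : ℝ) / (n * rho ^ (2 * L - n - 1) * eps ^ ((n : ℝ) / L))
        = ((L:ℝ)/lam) * ∑ m ∈ Finset.Icc 1 N, u ^ (-(m:ℤ)) / (m * rho ^ (N-m)) := by
      rw [Finset.mul_sum, Finset.mul_sum]
      apply Finset.sum_congr rfl
      intro n hn
      obtain ⟨hn1, hn2⟩ := Finset.mem_Icc.mp hn
      have hnR : (n:ℝ) ≠ 0 := Nat.cast_ne_zero.mpr (by omega)
      have hun : u ^ (n:ℕ) = eps ^ ((n:ℝ)/(L:ℝ)) := by
        rw [hu_def, ← Real.rpow_natCast (eps ^ ((1:ℝ)/(L:ℝ))) n, ← Real.rpow_mul heps0.le]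
        congr 1
        field_simp
      have hexp : 2*L - n - 1 = N - n := by omega
      rw [hexp, zpow_neg, zpow_natCast, hun]
      have hE : (0:ℝ) < eps ^ ((n:ℝ)/(L:ℝ)) := Real.rpow_pos_of_pos heps0 _
      have hrNn : (0:ℝ) < rho ^ (N-n) := pow_pos hrho _
      ring
    have hlogu : Real.log u = (1/(L:ℝ)) * Real.log eps := Real.log_rpow heps0 _
    have : tstar eps = C0 - Ffun L lam rho eps := hformula eps heps
    rw [this, hφ_def]
    simp only []
    rw [hsum_eq]
    rw [Ffun]
    rw [Gfun]
    rw [← hu_def, ← hN_def]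
    rw [hlogu, one_div eps, Real.log_inv]
    have hrN : (rho:ℝ) ^ N ≠ 0 := (pow_pos hrho N).ne'
    field_simp
    ring
  -- big-O of φ
  have hlogtop : Tendsto (fun eps : ℝ => Real.log (1/eps)) l atTop := by
    have h1 : Tendsto (fun eps : ℝ => 1/eps) l atTop := by
      simpa [one_div] using tendsto_inv_nhdsGT_zero
    exact Real.tendsto_log_atTop.comp h1
  have hone : (fun _ : ℝ => (1:ℝ)) =O[l] (fun eps => Real.log (1/eps)) := by
    rw [Asymptotics.isBigO_iff]
    refine ⟨1, ?_⟩
    filter_upwards [hlogtop.eventually_ge_atTop 1] with x hx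
    simp only [norm_one, Real.norm_eq_abs, one_mul]
    rw [abs_of_nonneg (le_trans zero_le_one hx)]
    exact hx
  have hconst : (fun _ : ℝ => C0) =O[l] (fun eps => Real.log (1/eps)) :=
    (Asymptotics.isBigO_const_const C0 (one_ne_zero) l).trans hone
  have hmid : (fun eps : ℝ => (1/(lam*rho^N)) * Real.log (1/eps))
      =O[l] (fun eps => Real.log (1/eps)) :=
    (Asymptotics.isBigO_refl _ l).const_mul_left _
  have htail : (fun eps : ℝ => ((L:ℝ)/lam) * Real.log (rho - eps ^ ((1:ℝ)/(L:ℝ))) / rho^N)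
      =O[l] (fun eps => Real.log (1/eps)) := by
    have hq : Tendsto (fun eps : ℝ => eps ^ ((1:ℝ)/(L:ℝ))) (nhds (0:ℝ)) (nhds (0:ℝ)) := by
      have h1L : (0:ℝ) < 1/(L:ℝ) := by positivity
      have := (Real.continuousAt_rpow_const 0 ((1:ℝ)/(L:ℝ)) (Or.inr h1L.le)).tendsto
      simpa [one_div, Real.zero_rpow (show ((L:ℝ))⁻¹ ≠ 0 by positivity)] using this
    have hsub : Tendsto (fun eps : ℝ => rho - eps ^ ((1:ℝ)/(L:ℝ))) l (nhds rho) := by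
      have := (tendsto_const_nhds (x := rho) (f := l)).sub
        (hq.mono_left nhdsWithin_le_nhds)
      simpa using this
    have hlog : Tendsto (fun eps : ℝ => Real.log (rho - eps ^ ((1:ℝ)/(L:ℝ)))) l
        (nhds (Real.log rho)) := ((Real.continuousAt_log hrho.ne').tendsto).comp hsub
    have := ((hlog.const_mul ((L:ℝ)/lam)).div_const (rho^N)).isBigO_one ℝ
    exact this.trans hone
  exact ((hconst.add hmid).add htail).congr' heq.symm EventuallyEq.rfl
end

section
/- Let L ≥ 2 be an integer and λ, ρ > 0. Let w : [0, ∞) → ℝ be differentiable with ẇ(t) = λ w(t)^{2−1/L} − (λ/ρ) w(t)³ and 0 < w(t) < ρ^{L/(L+1)} for all t ≥ 0. Define ψ(t) = ρ^{(1−L)/(L+1)} w(t)^{(L−1)/L}, so ψ(t) ∈ (0,1), and define 𝓘(u) = ((L−1)/((L+1) u)) Φ(u^{(L+1)/(L−1)}, 1, (1−L)/(1+L)) for u ∈ (0,1), where Φ(z, 1, a) = ∑_{n=0}^∞ zⁿ/(a + n) (the Lerch transcendent at s = 1, convergent for |z| < 1). Then for all t ≥ 0: 𝓘(ψ(t)) −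 𝓘(ψ(0)) = (λ (L−1)/L) ρ^{(L−1)/(L+1)} t. -/
open Set Filter

/-- The Lerch transcendent `Φ(z, 1, a) = ∑_{n=0}^∞ zⁿ/(a+n)` at `s = 1`. -/
noncomputable def lerchPhiOne (z a : ℝ) : ℝ := ∑' n : ℕ, z ^ n / (a + n)

/-- `𝓘(u) = ((L-1)/((L+1)u)) Φ(u^{(L+1)/(L-1)}, 1, (1-L)/(1+L))`. -/
noncomputable def maeAntideriv (L : ℕ) (u : ℝ) : ℝ :=
  (((L : ℝ) - 1) / (((L : ℝ) + 1) * u)) *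
    lerchPhiOne (u ^ (((L : ℝ) + 1) / ((L : ℝ) - 1))) ((1 - (L : ℝ)) / (1 + (L : ℝ)))

namespace MAE

variable {L : ℕ}

/-- the exponent ratio -/
noncomputable def e (L : ℕ) : ℝ := ((L : ℝ) + 1) / ((L : ℝ) - 1)

lemma e_gt_one (hL : 2 ≤ L) : 1 < e L := by
  have hc : (2:ℝ) ≤ (L:ℝ) := by exact_mod_cast hL
  rw [e, lt_div_iff₀ (by linarith)]
  linarith

lemma denom_ne (hL : 2 ≤ L) (n : ℕ) : e L * n - 1 ≠ 0 := by
  have he := e_gt_one hL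
  cases n with
  | zero => simp
  | succ m =>
    have hm : (0:ℝ) ≤ (m:ℝ) := Nat.cast_nonneg m
    have : (1:ℝ) ≤ e L * (m+1) := by nlinarith
    push_cast
    nlinarith

lemma denom_pos (hL : 2 ≤ L) (n : ℕ) : 0 < e L * (n+1) - 1 := by
  have he := e_gt_one hL
  have hm : (0:ℝ) ≤ (n:ℝ) := Nat.cast_nonneg n
  nlinarith

/-- helper: `x ^ (p * n) = (x ^ p) ^ n`. -/
lemma rpow_mul_nat {x : ℝ} (hx : 0 ≤ x) (p : ℝ) (n : ℕ) :
    x ^ (p * n) = (x ^ p) ^ n := by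
  rw [Real.rpow_mul hx, Real.rpow_natCast]

/-- the series `∑ u^{en-1}/(en-1)` -/
noncomputable def S (L : ℕ) (x : ℝ) : ℝ := ∑' n : ℕ, x ^ (e L * n - 1) / (e L * n - 1)

lemma maeAntideriv_eq_S (hL : 2 ≤ L) {u : ℝ} (hu : u ∈ Ioo (0:ℝ) 1) :
    maeAntideriv L u = S L u := by
  have hc : (2:ℝ) ≤ (L:ℝ) := by exact_mod_cast hL
  have hu0 : (0:ℝ) < u := hu.1
  rw [maeAntideriv, lerchPhiOne, ← tsum_mul_left, S]
  refine tsum_congr fun n => ?_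
  have h1 : (u ^ (((L:ℝ) + 1) / ((L:ℝ) - 1))) ^ n = u ^ (e L * n) := by
    rw [rpow_mul_nat hu0.le]; rfl
  have h2 : u ^ (e L * n - 1) = u ^ (e L * n) / u := by
    rw [Real.rpow_sub hu0, Real.rpow_one]
  rw [h1, h2]
  have hne := denom_ne hL n
  have han : (1 - (L:ℝ)) / (1 + (L:ℝ)) + n ≠ 0 := by
    have h1c : (0:ℝ) < 1 + (L:ℝ) := by linarith
    cases n with
    | zero =>
      simp only [Nat.cast_zero, add_zero]
      exact ne_of_lt (div_neg_of_neg_of_pos (by linarith) h1c)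
    | succ m =>
      have hm : (0:ℝ) ≤ (m:ℝ) := Nat.cast_nonneg m
      have ha : (-1:ℝ) < (1 - (L:ℝ)) / (1 + (L:ℝ)) := by
        rw [lt_div_iff₀ h1c]; linarith
      push_cast
      have : (0:ℝ) < (1 - (L:ℝ)) / (1 + (L:ℝ)) + ((m:ℝ) + 1) := by linarith
      exact ne_of_gt this
  have hLne : ((L:ℝ) - 1) ≠ 0 := by linarith
  have hLne2 : ((L:ℝ) + 1) ≠ 0 := by linarith
  rw [div_mul_div_comm, div_div]
  rw [div_eq_div_iff (by positivity) (mul_ne_zero hu0.ne' hne)]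
  rw [e]
  field_simp
  ring

end MAE

namespace MAE2
open MAE
variable {L : ℕ}

lemma summable_S (hL : 2 ≤ L) {x : ℝ} (hx : x ∈ Ioo (0:ℝ) 1) :
    Summable (fun n : ℕ => x ^ (e L * n - 1) / (e L * n - 1)) := by
  have he := e_gt_one hL
  have hx0 := hx.1
  have hxe : x ^ e L < 1 := Real.rpow_lt_one hx0.le hx.2 (by linarith)
  have hxe0 : (0:ℝ) ≤ x ^ e L := Real.rpow_nonneg hx0.le _
  rw [← summable_nat_add_iff 1]
  have hgeo : Summable (fun n : ℕ => x ^ (e L - 1) / (e L - 1) * (x ^ e L) ^ n) :=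
    (summable_geometric_of_lt_one hxe0 hxe).mul_left _
  refine Summable.of_nonneg_of_le (fun n => ?_) (fun n => ?_) hgeo
  · have := denom_pos hL n
    push_cast
    positivity
  · have hdp := denom_pos hL n
    have hterm : x ^ (e L * ((n:ℝ)+1) - 1) = x ^ (e L - 1) * (x ^ e L) ^ n := by
      rw [← rpow_mul_nat hx0.le, ← Real.rpow_add hx0]
      ring_nf
    push_cast
    rw [hterm, div_mul_eq_mul_div]
    refine div_le_div_of_nonneg_left (by positivity) (by linarith) ?_
    have hn0 : (0:ℝ) ≤ (n:ℝ) := Nat.cast_nonneg n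
    nlinarith

lemma hasDerivAt_S (hL : 2 ≤ L) {u : ℝ} (hu : u ∈ Ioo (0:ℝ) 1) :
    HasDerivAt (S L) (u ^ (-2:ℝ) * (1 - u ^ e L)⁻¹) u := by
  have he := e_gt_one hL
  have hu0 := hu.1
  have hu1 := hu.2
  set b := u / 2 with hb
  set r := (1 + u) / 2 with hr
  have hb0 : 0 < b := by positivity
  have hr1 : r < 1 := by rw [hr]; linarith
  have hbu : b < u := by rw [hb]; linarith
  have hur : u < r := by rw [hr]; linarith
  have hbr : ∀ y ∈ Ioo b r, 0 < y := fun y hy => lt_trans hb0 hy.1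
  have hre : r ^ e L < 1 := Real.rpow_lt_one (by positivity) hr1 (by linarith)
  have hre0 : (0:ℝ) ≤ r ^ e L := Real.rpow_nonneg (by positivity) _
  have key : HasDerivAt (fun z => ∑' n : ℕ, z ^ (e L * n - 1) / (e L * n - 1))
      (∑' n : ℕ, u ^ (e L * n - 2)) u := by
    refine hasDerivAt_tsum_of_isPreconnected
      (u := fun n : ℕ => (r ^ e L) ^ n / b ^ 2)
      (((summable_geometric_of_lt_one hre0 hre).div_const _))
      isOpen_Ioo
      (isPreconnected_Ioo)
      (g' := fun n y => y ^ (e L * n - 2))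
      (fun n y hy => ?_) (fun n y hy => ?_) ⟨hbu, hur⟩ (summable_S hL hu) ⟨hbu, hur⟩
    · have hy0 := hbr y hy
      have h := (Real.hasDerivAt_rpow_const (x := y) (p := e L * n - 1)
        (Or.inl hy0.ne')).div_const (e L * n - 1)
      convert h using 1
      show y ^ (e L * (n:ℝ) - 2) = _
      rw [mul_div_cancel_left₀ _ (denom_ne hL n)]
      congr 1
      ring
      rfl
    · show ‖y ^ (e L * (n:ℝ) - 2)‖ ≤ (r ^ e L) ^ n / b ^ 2
      have hy0 := hbr y hy
      have hyr : y ≤ r := le_of_lt hy.2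
      have hby : b ≤ y := le_of_lt hy.1
      have hsplit : y ^ (e L * n - 2) = (y ^ e L) ^ n / y ^ 2 := by
        rw [← rpow_mul_nat hy0.le, ← Real.rpow_natCast y 2, ← Real.rpow_sub hy0]
        push_cast; ring_nf
      rw [Real.norm_eq_abs, abs_of_nonneg (Real.rpow_nonneg hy0.le _), hsplit]
      refine div_le_div₀ (by positivity) ?_ (by positivity) ?_
      · exact pow_le_pow_left₀ (Real.rpow_nonneg hy0.le _)
          (Real.rpow_le_rpow hy0.le hyr (by linarith)) n
      · exact pow_le_pow_left₀ hb0.le hby 2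
  have hsum : (∑' n : ℕ, u ^ (e L * n - 2)) = u ^ (-2:ℝ) * (1 - u ^ e L)⁻¹ := by
    have h1 : ∀ n : ℕ, u ^ (e L * n - 2) = u ^ (-2:ℝ) * (u ^ e L) ^ n := by
      intro n
      rw [← rpow_mul_nat hu0.le, ← Real.rpow_add hu0]
      congr 1; ring
    rw [tsum_congr h1, tsum_mul_left,
      tsum_geometric_of_lt_one (Real.rpow_nonneg hu0.le _)
        (Real.rpow_lt_one hu0.le hu1 (by linarith))]
  rw [← hsum]
  exact key

lemma hasDerivAt_maeAntideriv (hL : 2 ≤ L) {u : ℝ} (hu : u ∈ Ioo (0:ℝ) 1) :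
    HasDerivAt (maeAntideriv L) (u ^ (-2:ℝ) * (1 - u ^ e L)⁻¹) u := by
  refine (hasDerivAt_S hL hu).congr_of_eventuallyEq ?_
  filter_upwards [isOpen_Ioo.mem_nhds hu] with x hx
  exact maeAntideriv_eq_S hL hx

lemma key_algebra (hL : 2 ≤ L) {lam rho x : ℝ} (hlam : 0 < lam) (hrho : 0 < rho)
    (hx0 : 0 < x) (hx1 : x < rho ^ ((L:ℝ)/((L:ℝ)+1))) :
    (rho ^ ((1-(L:ℝ))/((L:ℝ)+1)) * x ^ (((L:ℝ)-1)/(L:ℝ))) ^ (-2:ℝ)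
      * (1 - (rho ^ ((1-(L:ℝ))/((L:ℝ)+1)) * x ^ (((L:ℝ)-1)/(L:ℝ))) ^ e L)⁻¹
      * (rho ^ ((1-(L:ℝ))/((L:ℝ)+1)) *
          (((L:ℝ)-1)/(L:ℝ) * x ^ (((L:ℝ)-1)/(L:ℝ) - 1) *
            (lam * x ^ ((2:ℝ) - 1/(L:ℝ)) - lam/rho * x ^ 3)))
      = lam * ((L:ℝ)-1)/(L:ℝ) * rho ^ (((L:ℝ)-1)/((L:ℝ)+1)) := by
  have hc : (2:ℝ) ≤ (L:ℝ) := by exact_mod_cast hL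
  set c := (L:ℝ) with hcc
  have hc0 : (0:ℝ) < c := by linarith
  have hcm1 : (0:ℝ) < c - 1 := by linarith
  have hcp1 : (0:ℝ) < c + 1 := by linarith
  have hψe : (rho ^ ((1-c)/(c+1)) * x ^ ((c-1)/c)) ^ e L = rho⁻¹ * x ^ ((c+1)/c) := by
    rw [Real.mul_rpow (Real.rpow_nonneg hrho.le _) (Real.rpow_nonneg hx0.le _),
      ← Real.rpow_mul hrho.le, ← Real.rpow_mul hx0.le,
      show ((1-c)/(c+1)) * e L = -1 by rw [e, ← hcc]; field_simp; try ring,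
      show ((c-1)/c) * e L = (c+1)/c by rw [e, ← hcc]; field_simp; try ring,
      Real.rpow_neg_one]
  have hψm2 : (rho ^ ((1-c)/(c+1)) * x ^ ((c-1)/c)) ^ (-2:ℝ)
      = rho ^ ((1-c)/(c+1) * (-2)) * x ^ ((c-1)/c * (-2)) := by
    rw [Real.mul_rpow (Real.rpow_nonneg hrho.le _) (Real.rpow_nonneg hx0.le _),
      ← Real.rpow_mul hrho.le, ← Real.rpow_mul hx0.le]
  have hxq : x ^ ((c+1)/c) < rho := by
    have h := Real.rpow_lt_rpow hx0.le hx1 (show (0:ℝ) < (c+1)/c by positivity)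
    rwa [← Real.rpow_mul hrho.le,
      show (c/(c+1)) * ((c+1)/c) = 1 by field_simp, Real.rpow_one] at h
  have hden : 0 < 1 - rho⁻¹ * x ^ ((c+1)/c) := by
    have h2 : rho⁻¹ * x ^ ((c+1)/c) < rho⁻¹ * rho :=
      mul_lt_mul_of_pos_left hxq (inv_pos.mpr hrho)
    rw [inv_mul_cancel₀ hrho.ne'] at h2
    linarith
  have expand : x ^ ((c-1)/c - 1) * (lam * x ^ ((2:ℝ) - 1/c) - lam/rho * x ^ 3)
      = lam * x ^ ((c-1)/c * 2) * (1 - rho⁻¹ * x ^ ((c+1)/c)) := by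
    have p1 : x ^ ((c-1)/c - 1) * x ^ ((2:ℝ) - 1/c) = x ^ ((c-1)/c * 2) := by
      rw [← Real.rpow_add hx0]
      congr 1
      field_simp
      ring
    have p2 : x ^ ((c-1)/c - 1) * x ^ (3:ℕ) = x ^ ((c-1)/c * 2) * x ^ ((c+1)/c) := by
      rw [← Real.rpow_natCast x 3, ← Real.rpow_add hx0, ← Real.rpow_add hx0]
      congr 1
      push_cast
      field_simp
      ring
    calc x ^ ((c-1)/c - 1) * (lam * x ^ ((2:ℝ) - 1/c) - lam/rho * x ^ 3)
        = lam * (x ^ ((c-1)/c - 1) * x ^ ((2:ℝ) - 1/c))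
          - lam/rho * (x ^ ((c-1)/c - 1) * x ^ (3:ℕ)) := by ring
      _ = lam * x ^ ((c-1)/c * 2)
          - lam/rho * (x ^ ((c-1)/c * 2) * x ^ ((c+1)/c)) := by rw [p1, p2]
      _ = lam * x ^ ((c-1)/c * 2) * (1 - rho⁻¹ * x ^ ((c+1)/c)) := by
          field_simp
  have final : x ^ ((c-1)/c * (-2)) * (x ^ ((c-1)/c - 1)
      * (lam * x ^ ((2:ℝ) - 1/c) - lam/rho * x ^ 3))
      = lam * (1 - rho⁻¹ * x ^ ((c+1)/c)) := by
    rw [expand, show x ^ ((c-1)/c * (-2)) * (lam * x ^ ((c-1)/c * 2)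
        * (1 - rho⁻¹ * x ^ ((c+1)/c)))
      = lam * (x ^ ((c-1)/c * (-2)) * x ^ ((c-1)/c * 2))
        * (1 - rho⁻¹ * x ^ ((c+1)/c)) from by ring,
      ← Real.rpow_add hx0, show (c-1)/c * (-2) + (c-1)/c * 2 = 0 by ring,
      Real.rpow_zero, mul_one]
  rw [hψm2, hψe]
  have hcan : (1 - rho⁻¹ * x ^ ((c+1)/c))⁻¹ * (1 - rho⁻¹ * x ^ ((c+1)/c)) = 1 :=
    inv_mul_cancel₀ hden.ne'
  calc rho ^ ((1-c)/(c+1) * (-2)) * x ^ ((c-1)/c * (-2))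
        * (1 - rho⁻¹ * x ^ ((c+1)/c))⁻¹
        * (rho ^ ((1-c)/(c+1)) * ((c-1)/c * x ^ ((c-1)/c - 1)
            * (lam * x ^ ((2:ℝ) - 1/c) - lam/rho * x ^ 3)))
      = (rho ^ ((1-c)/(c+1) * (-2)) * rho ^ ((1-c)/(c+1)))
          * ((1 - rho⁻¹ * x ^ ((c+1)/c))⁻¹ * ((c-1)/c))
          * (x ^ ((c-1)/c * (-2)) * (x ^ ((c-1)/c - 1)
            * (lam * x ^ ((2:ℝ) - 1/c) - lam/rho * x ^ 3))) := by ring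
    _ = rho ^ ((c-1)/(c+1)) * ((1 - rho⁻¹ * x ^ ((c+1)/c))⁻¹ * ((c-1)/c))
          * (lam * (1 - rho⁻¹ * x ^ ((c+1)/c))) := by
        rw [final, ← Real.rpow_add hrho,
          show (1-c)/(c+1) * (-2) + (1-c)/(c+1) = (c-1)/(c+1) by ring]
    _ = lam * (c-1)/c * rho ^ ((c-1)/(c+1)) := by
        linear_combination (rho ^ ((c-1)/(c+1)) * ((c-1)/c) * lam) * hcan

end MAE2

/-- **Closed-form implicit solution of the MAE dynamics (`L ≥ 2`).**
Let `w` solve `ẇ = λ w^{2-1/L} - (λ/ρ) w³` with `0 < w t < ρ^{L/(L+1)}` for all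
`t ≥ 0`, and set `ψ t = ρ^{(1-L)/(L+1)} (w t)^{(L-1)/L} ∈ (0,1)`.  Then for all
`t ≥ 0`, `𝓘(ψ t) - 𝓘(ψ 0) = (λ(L-1)/L) ρ^{(L-1)/(L+1)} t`. -/
theorem mae_implicit_solution (L : ℕ) (hL : 2 ≤ L) (lam rho : ℝ)
    (hlam : 0 < lam) (hrho : 0 < rho)
    (w : ℝ → ℝ)
    (hode : ∀ t ∈ Ici (0 : ℝ),
      HasDerivAt w (lam * w t ^ ((2 : ℝ) - 1 / L) - (lam / rho) * w t ^ 3) t)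
    (hrange : ∀ t ∈ Ici (0 : ℝ), w t ∈ Ioo 0 (rho ^ ((L : ℝ) / (L + 1))))
    (ψ : ℝ → ℝ)
    (hψ : ∀ t, ψ t = rho ^ ((1 - (L : ℝ)) / ((L : ℝ) + 1)) * w t ^ (((L : ℝ) - 1) / L)) :
    ∀ t ∈ Ici (0 : ℝ),
      ψ t ∈ Ioo (0 : ℝ) 1 ∧
      maeAntideriv L (ψ t) - maeAntideriv L (ψ 0)
        = (lam * ((L : ℝ) - 1) / L) * rho ^ (((L : ℝ) - 1) / ((L : ℝ) + 1)) * t := by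
  have hc : (2:ℝ) ≤ (L:ℝ) := by exact_mod_cast hL
  have hcm1 : (0:ℝ) < (L:ℝ) - 1 := by linarith
  have hcp1 : (0:ℝ) < (L:ℝ) + 1 := by linarith
  have hc0 : (0:ℝ) < (L:ℝ) := by linarith
  -- ψ lands in (0,1)
  have hψmem : ∀ s ∈ Ici (0:ℝ), ψ s ∈ Ioo (0:ℝ) 1 := by
    intro s hs
    obtain ⟨hw0, hw1⟩ := hrange s hs
    constructor
    · rw [hψ]; positivity
    · rw [hψ]
      have h1 : w s ^ (((L:ℝ)-1)/(L:ℝ)) < (rho ^ ((L:ℝ)/((L:ℝ)+1))) ^ (((L:ℝ)-1)/(L:ℝ)) :=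
        Real.rpow_lt_rpow hw0.le hw1 (by positivity)
      have h2 : (rho ^ ((L:ℝ)/((L:ℝ)+1))) ^ (((L:ℝ)-1)/(L:ℝ))
          = rho ^ (((L:ℝ)-1)/((L:ℝ)+1)) := by
        rw [← Real.rpow_mul hrho.le]
        congr 1
        field_simp
      calc rho ^ ((1-(L:ℝ))/((L:ℝ)+1)) * w s ^ (((L:ℝ)-1)/(L:ℝ))
          < rho ^ ((1-(L:ℝ))/((L:ℝ)+1)) * rho ^ (((L:ℝ)-1)/((L:ℝ)+1)) :=
            mul_lt_mul_of_pos_left (h2 ▸ h1) (Real.rpow_pos_of_pos hrho _)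
        _ = 1 := by
            rw [← Real.rpow_add hrho,
              show (1-(L:ℝ))/((L:ℝ)+1) + ((L:ℝ)-1)/((L:ℝ)+1) = 0 by ring,
              Real.rpow_zero]
  refine fun t ht => ⟨hψmem t ht, ?_⟩
  set K := lam * ((L:ℝ)-1)/(L:ℝ) * rho ^ (((L:ℝ)-1)/((L:ℝ)+1)) with hK
  -- derivative of the composite is the constant K
  have hF : ∀ s ∈ Ici (0:ℝ), HasDerivAt (fun τ => maeAntideriv L (ψ τ)) K s := by
    intro s hs
    obtain ⟨hw0, hw1⟩ := hrange s hs
    have h1 : HasDerivAt (fun x : ℝ => x ^ (((L:ℝ)-1)/(L:ℝ)))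
        ((((L:ℝ)-1)/(L:ℝ)) * w s ^ (((L:ℝ)-1)/(L:ℝ) - 1)) (w s) :=
      Real.hasDerivAt_rpow_const (Or.inl hw0.ne')
    have hwd := (h1.comp s (hode s hs)).const_mul (rho ^ ((1-(L:ℝ))/((L:ℝ)+1)))
    have hψfun : ψ = fun τ => rho ^ ((1-(L:ℝ))/((L:ℝ)+1)) * w τ ^ (((L:ℝ)-1)/(L:ℝ)) :=
      funext hψ
    have hψd : HasDerivAt ψ
        (rho ^ ((1-(L:ℝ))/((L:ℝ)+1)) * (((L:ℝ)-1)/(L:ℝ) * w s ^ (((L:ℝ)-1)/(L:ℝ) - 1)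
          * (lam * w s ^ ((2:ℝ) - 1/(L:ℝ)) - lam/rho * w s ^ 3))) s := by
      rw [hψfun]
      exact hwd
    have hI := MAE2.hasDerivAt_maeAntideriv hL (hψmem s hs)
    have hcomp := hI.comp s hψd
    have hval : ψ s ^ (-2:ℝ) * (1 - ψ s ^ MAE.e L)⁻¹
        * (rho ^ ((1-(L:ℝ))/((L:ℝ)+1)) * (((L:ℝ)-1)/(L:ℝ) * w s ^ (((L:ℝ)-1)/(L:ℝ) - 1)
          * (lam * w s ^ ((2:ℝ) - 1/(L:ℝ)) - lam/rho * w s ^ 3))) = K := by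
      rw [hψ s, hK]
      exact MAE2.key_algebra hL hlam hrho hw0 hw1
    rw [hval] at hcomp
    exact hcomp
  rcases eq_or_lt_of_le (mem_Ici.mp ht) with h0 | h0
  · rw [← h0]
    simp
  · have hcont : ContinuousOn (fun τ => maeAntideriv L (ψ τ)) (Icc 0 t) := fun s hs =>
      (hF s hs.1).continuousAt.continuousWithinAt
    obtain ⟨cc, -, heq⟩ := exists_hasDerivAt_eq_slope (fun τ => maeAntideriv L (ψ τ))
      (fun _ => K) h0 hcont (fun s hs => hF s (le_of_lt hs.1))
    rw [sub_zero, eq_div_iff h0.ne'] at heq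
    exact heq.symm
end

section
/- Fix an integer L ≥ 2, reals λ, ρ > 0 and p ∈ (0,1). For each ε ∈ (0, p ρ^{L/(L+1)}), let w_ε : [0, ∞) → ℝ be the solution of the MAE dynamics ẇ(t) = λ w(t)^{2−1/L} − (λ/ρ) w(t)³ with w_ε(0) = ε, and let t*(ε) be the unique time with w_ε(t*(ε)) = p ρ^{L/(L+1)}. Then, as ε → 0⁺, t*(ε) − L/(λ (L−1) ε^{(L−1)/L}) = O(1). -/
open Set Filter

set_option maxHeartbeats 1000000 in
/-- **MAE critical time (`L ≥ 2`).**
Fix `L ≥ 2`, `λ, ρ > 0`, `p ∈ (0,1)`.  For each `ε ∈ (0, p ρ^{L/(L+1)})` let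
`w ε` be the solution of the MAE dynamics `ẇ = λ w^{2-1/L} - (λ/ρ) w³` with
`w ε 0 = ε`, and let `tstar ε ≥ 0` be the unique time with
`w ε (tstar ε) = p ρ^{L/(L+1)}`.  Then, as `ε → 0⁺`,
`tstar ε - L/(λ (L-1) ε^{(L-1)/L}) = O(1)`. -/
theorem mae_critical_time (L : ℕ) (hL : 2 ≤ L) (lam rho p : ℝ)
    (hlam : 0 < lam) (hrho : 0 < rho) (hp : p ∈ Ioo (0 : ℝ) 1)
    (w : ℝ → ℝ → ℝ) (tstar : ℝ → ℝ)
    (hinit : ∀ eps ∈ Ioo (0 : ℝ) (p * rho ^ ((L : ℝ) / (L + 1))), w eps 0 = eps)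
    (hode : ∀ eps ∈ Ioo (0 : ℝ) (p * rho ^ ((L : ℝ) / (L + 1))), ∀ t ∈ Ici (0 : ℝ),
      HasDerivAt (w eps)
        (lam * w eps t ^ ((2 : ℝ) - 1 / L) - (lam / rho) * w eps t ^ 3) t)
    (htstar_nonneg : ∀ eps ∈ Ioo (0 : ℝ) (p * rho ^ ((L : ℝ) / (L + 1))), 0 ≤ tstar eps)
    (htstar : ∀ eps ∈ Ioo (0 : ℝ) (p * rho ^ ((L : ℝ) / (L + 1))),
      w eps (tstar eps) = p * rho ^ ((L : ℝ) / (L + 1)))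
    (htstar_unique : ∀ eps ∈ Ioo (0 : ℝ) (p * rho ^ ((L : ℝ) / (L + 1))),
      ∀ s ∈ Ici (0 : ℝ), w eps s = p * rho ^ ((L : ℝ) / (L + 1)) → s = tstar eps) :
    (fun eps : ℝ => tstar eps - (L : ℝ) / (lam * ((L : ℝ) - 1) * eps ^ (((L : ℝ) - 1) / L)))
      =O[nhdsWithin 0 (Ioi (0 : ℝ))] (fun _ => (1 : ℝ)) := by
  obtain ⟨hp0, hp1⟩ := hp
  have hL2 : (2:ℝ) ≤ (L:ℝ) := by exact_mod_cast hL
  set Lr : ℝ := (L:ℝ) with hLrdef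
  have hL0 : (0:ℝ) < Lr := by linarith
  have hL1 : (1:ℝ) < Lr := by linarith
  have hLne : Lr ≠ 0 := ne_of_gt hL0
  have hL1' : (0:ℝ) < Lr - 1 := by linarith
  have hL1ne : Lr - 1 ≠ 0 := ne_of_gt hL1'
  have hLp1ne : Lr + 1 ≠ 0 := by positivity
  set al : ℝ := (Lr - 1)/Lr with hal
  set e1 : ℝ := 2 - 1/Lr with he1
  set e2 : ℝ := 1 + 1/Lr with he2
  have he2pos : 0 < e2 := by rw [he2]; positivity
  set P : ℝ := p * rho ^ (Lr/(Lr+1)) with hPdef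
  have hP0 : 0 < P := by rw [hPdef]; positivity
  set x0 : ℝ := p ^ ((Lr+1)/Lr) with hx0def
  have hx00 : 0 < x0 := by rw [hx0def]; positivity
  have hx01 : x0 < 1 := by
    rw [hx0def]
    exact Real.rpow_lt_one hp0.le hp1 (by positivity)
  have hx01' : 0 < 1 - x0 := by linarith
  have hPe2 : P ^ e2 = x0 * rho := by
    rw [hPdef, Real.mul_rpow hp0.le (Real.rpow_pos_of_pos hrho _).le,
      ← Real.rpow_mul hrho.le]
    have h1 : Lr/(Lr+1) * e2 = 1 := by rw [he2]; field_simp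
    have h2 : e2 = (Lr+1)/Lr := by rw [he2]; field_simp
    rw [h1, Real.rpow_one, h2, ← hx0def]
  set A : ℝ := Lr/(lam*(Lr-1)) with hA
  have hA0 : 0 < A := by rw [hA]; exact div_pos hL0 (by positivity)
  set cR : ℝ := Lr/(2*lam*rho*(1-x0)) with hcR
  have hcR0 : 0 < cR := by
    rw [hcR]
    exact div_pos hL0 (by positivity)
  -- derivative of the leading antiderivative
  have hGd : ∀ u : ℝ, 0 < u →
      HasDerivAt (fun v : ℝ => -A * v ^ (-al)) (1/lam * u ^ (-e1)) u := by
    intro u hu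
    have h := (Real.hasDerivAt_rpow_const (x := u) (p := -al) (Or.inl hu.ne')).const_mul (-A)
    refine h.congr_deriv ?_
    have hexp : -al - 1 = -e1 := by rw [hal, he1]; field_simp; ring
    rw [← hexp]
    have hAl : -A * -al = 1/lam := by
      rw [hA, hal]
      field_simp
    rw [← hAl]; ring
  -- derivative of the corrector
  have hRd : ∀ u : ℝ, 0 < u →
      HasDerivAt (fun v : ℝ => cR * v ^ (2/Lr)) (1/(lam*rho*(1-x0)) * u ^ (2/Lr - 1)) u := by
    intro u hu
    have h := (Real.hasDerivAt_rpow_const (x := u) (p := 2/Lr) (Or.inl hu.ne')).const_mul cR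
    refine h.congr_deriv ?_
    have hc : cR * (2/Lr) = 1/(lam*rho*(1-x0)) := by
      rw [hcR]
      field_simp
    rw [← hc]; ring
  -- factorization of the vector field
  have hDfac : ∀ u : ℝ, 0 < u →
      lam * u ^ e1 - lam/rho * u^3 = lam * u ^ e1 * (1 - u ^ e2/rho) := by
    intro u hu
    have h3 : (u:ℝ)^(3:ℕ) = u ^ (e1 + e2) := by
      rw [show e1 + e2 = (3:ℝ) by rw [he1, he2]; ring]
      rw [show ((3:ℝ)) = ((3:ℕ):ℝ) by norm_num, Real.rpow_natCast]
    rw [h3, Real.rpow_add hu]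
    field_simp
  have hcancel : ∀ u : ℝ, 0 < u → u ^ (-e1) * u ^ e1 = 1 := by
    intro u hu
    rw [← Real.rpow_add hu]; simp
  have hmulE : ∀ u : ℝ, 0 < u → u ^ (2/Lr - 1) * u ^ e1 = u ^ e2 := by
    intro u hu
    rw [← Real.rpow_add hu]
    congr 1
    rw [he1, he2]; ring
  have hx0le : ∀ u : ℝ, 0 < u → u ≤ P → u ^ e2 / rho ≤ x0 := by
    intro u hu huP
    rw [div_le_iff₀ hrho]
    calc u ^ e2 ≤ P ^ e2 := Real.rpow_le_rpow hu.le huP he2pos.le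
    _ = x0 * rho := hPe2
  have hDpos : ∀ u : ℝ, 0 < u → u < P → 0 < lam * u ^ e1 - lam/rho * u^3 := by
    intro u hu huP
    rw [hDfac u hu]
    have h1 : u ^ e2 < P ^ e2 := Real.rpow_lt_rpow hu.le huP he2pos
    have h2 : u ^ e2 / rho < x0 := by
      rw [div_lt_iff₀ hrho, ← hPe2] at *
      exact h1
    have := Real.rpow_pos_of_pos hu e1
    apply mul_pos (mul_pos hlam this)
    linarith
  -- pointwise key inequalities
  have hkey1 : ∀ u : ℝ, 0 < u → u ≤ P →
      (1/lam * u ^ (-e1)) * (lam * u ^ e1 - lam/rho * u^3) ≤ 1 := by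
    intro u hu huP
    rw [hDfac u hu]
    have hc := hcancel u hu
    have heq : (1/lam * u ^ (-e1)) * (lam * u ^ e1 * (1 - u ^ e2/rho))
        = (u ^ (-e1) * u ^ e1) * (1 - u ^ e2/rho) := by
      field_simp
    rw [heq, hc, one_mul]
    have : 0 ≤ u ^ e2 / rho := by positivity
    linarith
  have hkey2 : ∀ u : ℝ, 0 < u → u ≤ P →
      1 ≤ (1/lam * u ^ (-e1) + 1/(lam*rho*(1-x0)) * u ^ (2/Lr - 1))
          * (lam * u ^ e1 - lam/rho * u^3) := by
    intro u hu huP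
    rw [hDfac u hu]
    have hxpos : 0 < u ^ e2 / rho := by positivity
    have hxle : u ^ e2 / rho ≤ x0 := hx0le u hu huP
    set x : ℝ := u ^ e2 / rho with hxdef
    have hxr : u ^ e2 = x * rho := by rw [hxdef]; field_simp
    set a : ℝ := u ^ (-e1) with hadef
    set b : ℝ := u ^ e1 with hbdef
    set c : ℝ := u ^ (2/Lr - 1) with hcdef
    have hab : a * b = 1 := hcancel u hu
    have hcb : c * b = x * rho := by
      rw [hcdef, hbdef, hmulE u hu, hxr]
    have hexpand : (1/lam * a + 1/(lam*rho*(1-x0)) * c) * (lam * b * (1 - x))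
        = (a*b)*(1-x) + (c*b)*((1-x)/(rho*(1-x0))) := by
      field_simp
    rw [hexpand, hab, hcb, one_mul]
    have h9 : x*rho*((1-x)/(rho*(1-x0))) = x*(1-x)/(1-x0) := by
      field_simp
    rw [h9]
    have hstep : x ≤ x*(1-x)/(1-x0) := by
      rw [le_div_iff₀ hx01']
      nlinarith
    linarith
  -- now the main estimate, uniformly for eps ∈ Ioo 0 P
  rw [Asymptotics.isBigO_iff]
  refine ⟨|(-A * P ^ (-al) : ℝ)| + cR * P ^ (2/Lr), ?_⟩
  filter_upwards [Ioo_mem_nhdsGT_of_mem (show (0:ℝ) ∈ Ico (0:ℝ) P from ⟨le_refl _, hP0⟩)]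
    with eps hmem
  obtain ⟨he0, heP⟩ := hmem
  have hmem : eps ∈ Ioo (0:ℝ) P := ⟨he0, heP⟩
  have hw0 := hinit eps hmem
  have hts0 := htstar_nonneg eps hmem
  have hwts := htstar eps hmem
  have hcontAt : ∀ t : ℝ, 0 ≤ t → ContinuousAt (w eps) t :=
    fun t ht => (hode eps hmem t ht).continuousAt
  have hcontOn : ∀ b : ℝ, ContinuousOn (w eps) (Icc 0 b) :=
    fun b t ht => (hcontAt t ht.1).continuousWithinAt
  -- w stays below P on [0, tstar]
  have hwleP : ∀ t ∈ Icc 0 (tstar eps), w eps t ≤ P := by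
    intro t ht
    by_contra hgt
    push_neg at hgt
    have hPmem : P ∈ Icc (w eps 0) (w eps t) := ⟨by rw [hw0]; exact heP.le, hgt.le⟩
    obtain ⟨s, hs, hws⟩ := intermediate_value_Icc ht.1 (hcontOn t) hPmem
    have hseq := htstar_unique eps hmem s hs.1 hws
    have hteq : t = tstar eps := le_antisymm ht.2 (hseq ▸ hs.2)
    rw [hteq, hwts] at hgt
    exact lt_irrefl _ hgt
  -- w stays above eps on [0, tstar]
  have hwge : ∀ t ∈ Icc 0 (tstar eps), eps ≤ w eps t := by
    by_contra hcon
    push_neg at hcon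
    obtain ⟨t₁, ht₁, hlt⟩ := hcon
    set S : Set ℝ := {t | t ∈ Icc 0 (tstar eps) ∧ w eps t < eps} with hS
    have hSne : S.Nonempty := ⟨t₁, ht₁, hlt⟩
    have hSbdd : BddBelow S := ⟨0, fun s hs => hs.1.1⟩
    set t₂ : ℝ := sInf S with ht₂def
    have ht₂0 : 0 ≤ t₂ := le_csInf hSne (fun s hs => hs.1.1)
    have ht₁S : t₁ ∈ S := ⟨ht₁, hlt⟩
    have ht₂ts : t₂ ≤ tstar eps := le_trans (csInf_le hSbdd ht₁S) ht₁.2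
    have hwt₂le : w eps t₂ ≤ eps := by
      by_contra hgt
      push_neg at hgt
      have h1 : w eps ⁻¹' Ioi eps ∈ nhds t₂ := (hcontAt t₂ ht₂0) (Ioi_mem_nhds hgt)
      obtain ⟨δ, hδ0, hball⟩ := Metric.mem_nhds_iff.mp h1
      obtain ⟨s, hsS, hslt⟩ := Real.lt_sInf_add_pos hSne hδ0
      have hst : t₂ ≤ s := csInf_le hSbdd hsS
      have : eps < w eps s := by
        apply hball
        rw [Metric.mem_ball, Real.dist_eq, abs_lt]
        constructor <;> [linarith; linarith [hslt]]
      exact absurd hsS.2 (not_lt.mpr this.le)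
    have hwt₂ge : eps ≤ w eps t₂ := by
      rcases eq_or_lt_of_le ht₂0 with h0 | hpos
      · exact le_of_eq (show eps = w eps t₂ by rw [← h0, hw0])
      · have hgeleft : ∀ s ∈ Ico (0:ℝ) t₂, eps ≤ w eps s := by
          intro s hs
          by_contra h
          push_neg at h
          have : s ∈ S := ⟨⟨hs.1, le_trans hs.2.le ht₂ts⟩, h⟩
          exact absurd (csInf_le hSbdd this) (not_le.mpr hs.2)
        have hct : ContinuousWithinAt (w eps) (Ico 0 t₂) t₂ :=
          (hcontAt t₂ ht₂0).continuousWithinAt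
        have hne : (nhdsWithin t₂ (Ico 0 t₂)).NeBot := by
          rw [← mem_closure_iff_nhdsWithin_neBot, closure_Ico hpos.ne]
          exact ⟨ht₂0, le_refl _⟩
        exact ge_of_tendsto hct (eventually_mem_nhdsWithin.mono hgeleft)
    have hwt₂ : w eps t₂ = eps := le_antisymm hwt₂le hwt₂ge
    have hd := hode eps hmem t₂ ht₂0
    rw [hwt₂] at hd
    have hdpos : 0 < lam * eps ^ e1 - lam/rho * eps^3 := hDpos eps he0 heP
    have hslopes : Tendsto (slope (w eps) t₂) (nhdsWithin t₂ {t₂}ᶜ)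
        (nhds (lam * eps ^ e1 - lam/rho * eps^3)) := by
      exact hasDerivAt_iff_tendsto_slope.mp hd
    have hev : ∀ᶠ s in nhdsWithin t₂ {t₂}ᶜ, 0 < slope (w eps) t₂ s :=
      hslopes.eventually (eventually_gt_nhds hdpos)
    have hev' : ∀ᶠ s in nhdsWithin t₂ (Ioi t₂), 0 < slope (w eps) t₂ s :=
      hev.filter_mono (nhdsWithin_mono _ (fun x hx => ne_of_gt hx))
    obtain ⟨b, hb, hsub⟩ := mem_nhdsGT_iff_exists_Ioo_subset.mp hev'
    obtain ⟨s, hsS, hslt⟩ := Real.lt_sInf_add_pos hSne (show (0:ℝ) < b - t₂ by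
      simpa using sub_pos.mpr (mem_Ioi.mp hb))
    have hst : t₂ ≤ s := csInf_le hSbdd hsS
    have hsne : t₂ ≠ s := by
      rintro rfl
      exact absurd hwt₂ (ne_of_lt hsS.2)
    have hlt' : t₂ < s := lt_of_le_of_ne hst hsne
    have hsIoo : s ∈ Ioo t₂ b := ⟨hlt', by linarith⟩
    have hpos2 := hsub hsIoo
    have h6 : 0 < (w eps s - w eps t₂) / (s - t₂) := by
      simpa [slope_def_field] using hpos2
    have h7 : 0 < s - t₂ := sub_pos.mpr hlt'
    have h8 := mul_pos h6 h7
    rw [div_mul_cancel₀ _ (ne_of_gt h7), hwt₂] at h8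
    linarith [hsS.2]
  -- derivatives of the comparison functions along the flow
  have hwpos : ∀ t ∈ Icc 0 (tstar eps), 0 < w eps t :=
    fun t ht => lt_of_lt_of_le he0 (hwge t ht)
  have hderiv1 : ∀ t ∈ Icc 0 (tstar eps),
      HasDerivAt (fun s => -A * (w eps s) ^ (-al) - s)
        ((1/lam * (w eps t) ^ (-e1))
          * (lam * (w eps t) ^ e1 - lam/rho * (w eps t)^3) - 1) t := by
    intro t ht
    have hu := hwpos t ht
    have hw' := hode eps hmem t ht.1
    exact ((hGd _ hu).comp t hw').sub (hasDerivAt_id t)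
  have hderiv2 : ∀ t ∈ Icc 0 (tstar eps),
      HasDerivAt (fun s => -A * (w eps s) ^ (-al) + cR * (w eps s) ^ (2/Lr) - s)
        ((1/lam * (w eps t) ^ (-e1))
            * (lam * (w eps t) ^ e1 - lam/rho * (w eps t)^3)
          + (1/(lam*rho*(1-x0)) * (w eps t) ^ (2/Lr - 1))
            * (lam * (w eps t) ^ e1 - lam/rho * (w eps t)^3) - 1) t := by
    intro t ht
    have hu := hwpos t ht
    have hw' := hode eps hmem t ht.1
    exact (((hGd _ hu).comp t hw').add ((hRd _ hu).comp t hw')).sub (hasDerivAt_id t)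
  have hanti : AntitoneOn (fun s => -A * (w eps s) ^ (-al) - s) (Icc 0 (tstar eps)) := by
    apply antitoneOn_of_deriv_nonpos (convex_Icc _ _)
    · exact fun t ht => ((hderiv1 t ht).continuousAt).continuousWithinAt
    · intro t ht
      rw [interior_Icc] at ht
      exact ((hderiv1 t (Ioo_subset_Icc_self ht)).differentiableAt).differentiableWithinAt
    · intro t ht
      rw [interior_Icc] at ht
      have h := hderiv1 t (Ioo_subset_Icc_self ht)
      rw [h.deriv]
      have := hkey1 (w eps t) (hwpos t (Ioo_subset_Icc_self ht))
        (hwleP t (Ioo_subset_Icc_self ht))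
      linarith
  have hmono : MonotoneOn (fun s => -A * (w eps s) ^ (-al) + cR * (w eps s) ^ (2/Lr) - s)
      (Icc 0 (tstar eps)) := by
    apply monotoneOn_of_deriv_nonneg (convex_Icc _ _)
    · exact fun t ht => ((hderiv2 t ht).continuousAt).continuousWithinAt
    · intro t ht
      rw [interior_Icc] at ht
      exact ((hderiv2 t (Ioo_subset_Icc_self ht)).differentiableAt).differentiableWithinAt
    · intro t ht
      rw [interior_Icc] at ht
      have h := hderiv2 t (Ioo_subset_Icc_self ht)
      rw [h.deriv]
      have := hkey2 (w eps t) (hwpos t (Ioo_subset_Icc_self ht))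
        (hwleP t (Ioo_subset_Icc_self ht))
      nlinarith [this]
  have h0mem : (0:ℝ) ∈ Icc (0:ℝ) (tstar eps) := ⟨le_refl _, hts0⟩
  have htsmem : tstar eps ∈ Icc (0:ℝ) (tstar eps) := ⟨hts0, le_refl _⟩
  have hA1 := hanti h0mem htsmem hts0
  have hM1 := hmono h0mem htsmem hts0
  simp only [hw0, hwts] at hA1 hM1
  -- identify -A eps^{-al} with -T
  have hepsal : (0:ℝ) < eps ^ al := Real.rpow_pos_of_pos he0 _
  have hGeps : -A * eps ^ (-al) = -(Lr/(lam*(Lr-1)*eps^al)) := by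
    rw [Real.rpow_neg he0.le, hA]
    field_simp
  rw [hGeps] at hA1 hM1
  have hReps : 0 ≤ cR * eps ^ (2/Lr) := by positivity
  have hRP : 0 ≤ cR * P ^ (2/Lr) := by positivity
  simp only [norm_one, mul_one, Real.norm_eq_abs]
  rw [abs_le]
  constructor
  · have := neg_abs_le (-A * P ^ (-al))
    linarith
  · have := le_abs_self (-A * P ^ (-al))
    linarith
end

section
/- Fix an integer L ≥ 2, reals λ > 0, p ∈ (0,1), and 0 < ρ < ρ'; set Δ = 1/ρ − 1/ρ'. For ε > 0 small, let t*_jepa(ε, ρ) denote the unique time at which the solution of ẇ = λ w^{3−1/L} − (λ/ρ) w³ with w(0) = ε reaches p ρ^L, and let t*_mae(ε, ρ) denote the unique time at which the solution of ẇ = λ w^{2−1/L} − (λ/ρ) w³ with w(0) = ε reaches p ρ^{L/(L+1)} (and similarly with ρ replaced by ρ'). Then, as ε → 0⁺: t*_jepa(ε, ρ)/t*_jepa(ε, ρ') = 1 + ((2L−1)/(2L−2)) Δ ε^{1/L} + O(ε^{2/L}), whereas t*_mae(ε, ρ)/t*_mae(ε, ρ') = 1 + O(ε^{(L−1)/L}).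 -/
open Set Filter

open Real

section JepaAux

lemma lower_barrier {f φ : ℝ → ℝ} {c b : ℝ}
    (hder : ∀ t ∈ Icc (0:ℝ) b, HasDerivAt f (φ t) t)
    (hf0 : f 0 = c)
    (hpos : ∀ t ∈ Icc (0:ℝ) b, f t = c → 0 < φ t) :
    ∀ t ∈ Icc (0:ℝ) b, c ≤ f t := by
  by_contra h
  push_neg at h
  obtain ⟨s0, hs0, hfs0⟩ := h
  have hcont : ContinuousOn f (Icc 0 s0) := fun t ht =>
    ((hder t ⟨ht.1, ht.2.trans hs0.2⟩).continuousAt).continuousWithinAt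
  set K := Icc (0:ℝ) s0 ∩ f ⁻¹' {c} with hKdef
  have hK0 : (0:ℝ) ∈ K := ⟨⟨le_refl _, hs0.1⟩, hf0⟩
  have hKclosed : IsClosed K :=
    hcont.preimage_isClosed_of_isClosed isClosed_Icc isClosed_singleton
  have hKcompact : IsCompact K :=
    isCompact_Icc.of_isClosed_subset hKclosed inter_subset_left
  set s1 := sSup K with hs1def
  have hs1K : s1 ∈ K := hKcompact.sSup_mem ⟨0, hK0⟩
  have hfs1 : f s1 = c := hs1K.2
  have hs1mem : s1 ∈ Icc (0:ℝ) s0 := hs1K.1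
  have hs1lt : s1 < s0 := lt_of_le_of_ne hs1mem.2 (by
    intro he; rw [he] at hfs1; linarith)
  -- on (s1, s0], f < c
  have hlt : ∀ s ∈ Ioc s1 s0, f s < c := by
    intro s hs
    by_contra h'
    push_neg at h'
    have hsub : Icc (f s0) (f s) ⊆ f '' Icc s s0 :=
      intermediate_value_Icc' hs.2 (hcont.mono (Icc_subset_Icc (hs1mem.1.trans hs.1.le) le_rfl))
    have : c ∈ f '' Icc s s0 := hsub ⟨le_of_lt hfs0, h'⟩
    obtain ⟨u, hu, hfu⟩ := this
    have huK : u ∈ K := ⟨⟨hs1mem.1.trans (hs.1.le.trans hu.1), hu.2⟩, hfu⟩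
    have : u ≤ s1 := le_csSup hKcompact.bddAbove huK
    linarith [hs.1, hu.1]
  -- derivative at s1 positive
  have hd : 0 < φ s1 := hpos s1 ⟨hs1mem.1, hs1mem.2.trans hs0.2⟩ hfs1
  have hder1 := hder s1 ⟨hs1mem.1, hs1mem.2.trans hs0.2⟩
  have hslope := (hasDerivAt_iff_tendsto_slope.1 hder1).mono_left
    (nhdsWithin_mono s1 (fun x hx => ne_of_gt hx : Ioi s1 ⊆ {s1}ᶜ))
  have hev : ∀ᶠ s in nhdsWithin s1 (Ioi s1), 0 < slope f s1 s :=
    hslope.eventually (eventually_gt_nhds hd)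
  have hev2 : Ioc s1 s0 ∈ nhdsWithin s1 (Ioi s1) := Ioc_mem_nhdsGT_of_mem ⟨le_rfl, hs1lt⟩
  obtain ⟨s, hsl, hsm⟩ := (hev.and (eventually_mem_set.2 hev2)).exists
  have hden : 0 < s - s1 := sub_pos.2 hsm.1
  have : 0 < (f s - f s1) / (s - s1) := by simpa [slope_def_field, div_eq_iff hden.ne'] using hsl
  have : f s1 < f s := by
    have := mul_pos this hden
    rw [div_mul_cancel₀] at this
    · linarith
    · exact hden.ne'
  have := hlt s hsm
  rw [hfs1] at *
  linarith

lemma hitting_time_eq_integral {g w : ℝ → ℝ} {B ε M T : ℝ}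
    (hε : 0 < ε) (hεM : ε < M) (hMB : M < B)
    (hgc : ContinuousOn g (Ioo 0 B))
    (hgpos : ∀ x ∈ Ioo (0:ℝ) B, 0 < g x)
    (hw0 : w 0 = ε)
    (hwd : ∀ t ∈ Ici (0:ℝ), HasDerivAt w (g (w t)) t)
    (hT : 0 ≤ T) (hwT : w T = M)
    (huniq : ∀ s ∈ Ico (0:ℝ) T, w s ≠ M) :
    T = ∫ x in ε..M, (g x)⁻¹ := by
  have hB0 : (0:ℝ) < B := lt_trans (lt_trans hε hεM) hMB
  have hcontw : ContinuousOn w (Icc 0 T) := fun t ht =>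
    ((hwd t ht.1).continuousAt).continuousWithinAt
  -- upper bound
  have hupper : ∀ t ∈ Icc (0:ℝ) T, w t ≤ M := by
    intro t ht
    by_contra h'
    push_neg at h'
    have htT : t < T := by
      rcases lt_or_eq_of_le ht.2 with h | h
      · exact h
      · rw [h, hwT] at h'; linarith
    have hsub : Icc (w 0) (w t) ⊆ w '' Icc 0 t :=
      intermediate_value_Icc ht.1 (hcontw.mono (Icc_subset_Icc le_rfl ht.2))
    have : M ∈ w '' Icc 0 t := hsub ⟨by rw [hw0]; exact hεM.le, h'.le⟩
    obtain ⟨u, hu, hwu⟩ := this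
    exact huniq u ⟨hu.1, lt_of_le_of_lt hu.2 htT⟩ hwu
  -- lower bound via barrier
  have hlower : ∀ t ∈ Icc (0:ℝ) T, ε ≤ w t := by
    refine lower_barrier (fun t ht => hwd t ht.1) hw0 ?_
    intro t ht hwt
    rw [hwt]
    exact hgpos ε ⟨hε, lt_trans hεM hMB⟩
  have hmem : ∀ t ∈ Icc (0:ℝ) T, w t ∈ Ioo (0:ℝ) B := fun t ht =>
    ⟨lt_of_lt_of_le hε (hlower t ht), lt_of_le_of_lt (hupper t ht) hMB⟩
  -- the antiderivative
  have hinvc : ContinuousOn (fun x => (g x)⁻¹) (Ioo 0 B) :=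
    hgc.inv₀ (fun x hx => (hgpos x hx).ne')
  have hF : ∀ y ∈ Ioo (0:ℝ) B, ε ≤ y →
      HasDerivAt (fun u => ∫ x in ε..u, (g x)⁻¹) (g y)⁻¹ y := by
    intro y hy hεy
    refine intervalIntegral.integral_hasDerivAt_right ?_ ?_ ?_
    · apply ContinuousOn.intervalIntegrable
      apply hinvc.mono
      rw [uIcc_of_le hεy]
      intro z hz
      exact ⟨lt_of_lt_of_le hε hz.1, lt_of_le_of_lt hz.2 hy.2⟩
    · exact hinvc.stronglyMeasurableAtFilter isOpen_Ioo y hy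
    · exact hinvc.continuousAt (isOpen_Ioo.mem_nhds hy)
  -- G t = F(w t) - t has zero derivative
  set G : ℝ → ℝ := fun t => (∫ x in ε..(w t), (g x)⁻¹) - t with hGdef
  have hGder : ∀ t ∈ Icc (0:ℝ) T, HasDerivAt G 0 t := by
    intro t ht
    have h1 := (hF (w t) (hmem t ht) (hlower t ht)).comp t (hwd t ht.1)
    have h2 : (g (w t))⁻¹ * g (w t) = 1 :=
      inv_mul_cancel₀ (hgpos (w t) (hmem t ht)).ne'
    have h3 : HasDerivAt G ((g (w t))⁻¹ * g (w t) - 1) t := (h1.sub (hasDerivAt_id t))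
    rw [h2, sub_self] at h3
    exact h3
  have hGcont : ContinuousOn G (Icc 0 T) := fun t ht =>
    ((hGder t ht).continuousAt).continuousWithinAt
  have hconst := constant_of_has_deriv_right_zero hGcont
    (fun x hx => ((hGder x ⟨hx.1, hx.2.le⟩).hasDerivWithinAt))
  have := hconst T ⟨hT, le_rfl⟩
  rw [hGdef] at this
  simp only [hwT, hw0, intervalIntegral.integral_same] at this
  linarith


lemma helper_int (u c X Y : ℝ) :
    u * ((Y - X)/c) = (u/(-c))*X - (u/(-c))*Y := by ring

lemma jepa_expand (L : ℕ) (hL : 2 ≤ L) (lam p r : ℝ) (hlam : 0 < lam)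
    (hp : p ∈ Ioo (0:ℝ) 1) (hr : 0 < r) :
    ∃ D : ℝ, 0 ≤ D ∧ ∀ ε : ℝ, 0 < ε → ε < p * r ^ L → ε ≤ 1 →
      |(∫ x in ε..(p * r ^ L), (lam * x ^ ((3:ℝ) - 1/L) - (lam / r) * x ^ 3)⁻¹)
        - (1/(lam * (2 - 1/L))) * ε ^ ((1:ℝ)/L - 2)
        - (1/(lam * r * (2 - 2/L))) * ε ^ ((2:ℝ)/L - 2)|
      ≤ D * ε ^ ((3:ℝ)/L - 2) := by
  have hL0 : (0:ℝ) < L := by exact_mod_cast Nat.lt_of_lt_of_le Nat.zero_lt_two hL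
  have hL2 : (2:ℝ) ≤ L := by exact_mod_cast hL
  obtain ⟨α, hαdef⟩ : ∃ a : ℝ, a = 1/(L:ℝ) := ⟨_, rfl⟩
  have hα : 0 < α := by rw [hαdef]; positivity
  have hα2 : α ≤ 1/2 := by
    rw [hαdef, div_le_div_iff₀ hL0 (by norm_num)]
    linarith
  obtain ⟨M, hMdef⟩ : ∃ m : ℝ, m = p * r ^ L := ⟨_, rfl⟩
  have hM : 0 < M := by rw [hMdef]; exact mul_pos hp.1 (pow_pos hr L)
  have hMα : M ^ α = p ^ α * r := by
    rw [hMdef, mul_rpow hp.1.le (by positivity), ← rpow_natCast r L, ← rpow_mul hr.le,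
        hαdef, mul_one_div, div_self hL0.ne', rpow_one]
  obtain ⟨q, hqdef⟩ : ∃ m : ℝ, m = p ^ α := ⟨_, rfl⟩
  rw [← hqdef] at hMα
  have hq0 : 0 < q := by rw [hqdef]; exact rpow_pos_of_pos hp.1 α
  have hq1 : q < 1 := by rw [hqdef]; exact rpow_lt_one hp.1.le hp.2 hα
  have h2α : (0:ℝ) < 2 - α := by linarith
  have h2α2 : (0:ℝ) < 2 - 2*α := by linarith
  have h3α : (0:ℝ) < 2 - 3*α := by linarith
  obtain ⟨A, hAdef⟩ : ∃ m : ℝ, m = 1/(lam * (2 - α)) := ⟨_, rfl⟩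
  obtain ⟨Bc, hBdef⟩ : ∃ m : ℝ, m = 1/(lam * r * (2 - 2*α)) := ⟨_, rfl⟩
  obtain ⟨K, hKdef⟩ : ∃ m : ℝ, m = 1/(lam * r^2 * (1-q)) := ⟨_, rfl⟩
  have hA : 0 < A := by rw [hAdef]; exact one_div_pos.mpr (mul_pos hlam h2α)
  have hB : 0 < Bc := by
    rw [hBdef]; exact one_div_pos.mpr (mul_pos (mul_pos hlam hr) h2α2)
  have hK : 0 < K := by
    rw [hKdef]
    exact one_div_pos.mpr (mul_pos (by positivity) (by linarith))
  have hAM : 0 < A * M^(α-2) := mul_pos hA (rpow_pos_of_pos hM _)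
  have hBM : 0 < Bc * M^(2*α-2) := mul_pos hB (rpow_pos_of_pos hM _)
  refine ⟨A * M^(α-2) + Bc * M^(2*α-2) + K/(2-3*α), by positivity, ?_⟩
  intro ε hε hεM0 hε1
  rw [← hMdef] at hεM0
  have hεM' : ε ≤ M := hεM0.le
  rw [show (2:ℝ)/L = 2*(1/(L:ℝ)) by ring, show (3:ℝ)/L = 3*(1/(L:ℝ)) by ring,
      ← hαdef, ← hMdef, ← hAdef, ← hBdef]
  -- pointwise facts on Icc ε M
  have hden : ∀ x ∈ Icc ε M, x^α/r ≤ q ∧ 0 < 1 - x^α/r := by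
    intro x hx
    have hx0 : 0 < x := hε.trans_le hx.1
    have h1 : x^α ≤ M^α := rpow_le_rpow hx0.le hx.2 hα.le
    rw [hMα] at h1
    have h2 : x^α/r ≤ q := by rw [div_le_iff₀ hr]; linarith
    exact ⟨h2, by linarith⟩
  have hpt : ∀ x ∈ Icc ε M, (lam * x ^ ((3:ℝ) - α) - lam / r * x ^ 3)⁻¹
      = (1/lam) * x ^ (α-3) + (1/(lam*r)) * x ^ (2*α-3)
        + x^(3*α-3) / (lam * r^2 * (1 - x^α/r)) := by
    intro x hx
    have hx0 : 0 < x := hε.trans_le hx.1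
    obtain ⟨hu, hdpos⟩ := hden x hx
    have hy0 : (0:ℝ) < x ^ α := rpow_pos_of_pos hx0 α
    have hz0 : (0:ℝ) < x ^ ((3:ℝ) - α) := rpow_pos_of_pos hx0 _
    have e3 : x ^ (3:ℕ) = x ^ ((3:ℝ) - α) * x ^ α := by
      rw [← rpow_add hx0, ← rpow_natCast x 3]; norm_num
    have eα3 : x ^ (α - 3) = (x ^ ((3:ℝ) - α))⁻¹ := by
      rw [show α - 3 = -((3:ℝ) - α) by ring, rpow_neg hx0.le]
    have e2α3 : x ^ (2*α - 3) = (x ^ ((3:ℝ) - α))⁻¹ * x ^ α := by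
      rw [show 2*α - 3 = (α - 3) + α by ring, rpow_add hx0, eα3]
    have e3α3 : x ^ (3*α - 3) = (x ^ ((3:ℝ) - α))⁻¹ * (x ^ α * x ^ α) := by
      rw [show 3*α - 3 = ((α - 3) + α) + α by ring, rpow_add hx0, rpow_add hx0, eα3]
      ring
    have hfac : lam * x ^ ((3:ℝ) - α) - lam / r * x ^ (3:ℕ)
        = lam * x ^ ((3:ℝ) - α) * (1 - x^α/r) := by rw [e3]; ring
    have hylt : x ^ α < r := by
      have h5 := hdpos
      rw [sub_pos, div_lt_one hr] at h5
      exact h5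
    have hry : r - x ^ α ≠ 0 := (by linarith : (0:ℝ) < r - x ^ α).ne'
    have key : ((1/lam) * x ^ (α-3) + (1/(lam*r)) * x ^ (2*α-3)
          + x^(3*α-3) / (lam * r^2 * (1 - x^α/r)))
        * (lam * x ^ ((3:ℝ) - α) * (1 - x^α/r)) = 1 := by
      rw [eα3, e2α3, e3α3]
      field_simp [hlam.ne', hr.ne', hz0.ne', hry]
      ring
    rw [hfac]
    exact (inv_eq_of_mul_eq_one_left key)
  -- continuity and integrability
  have hc_rpow : ∀ c : ℝ, ContinuousOn (fun x : ℝ => x ^ c) (Icc ε M) := by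
    intro c x hx
    exact (continuousAt_rpow_const x c (Or.inl (hε.trans_le hx.1).ne')).continuousWithinAt
  have hcf1 : ContinuousOn (fun x : ℝ => (1/lam) * x ^ (α-3)) (Icc ε M) :=
    continuousOn_const.mul (hc_rpow (α-3))
  have hcf2 : ContinuousOn (fun x : ℝ => (1/(lam*r)) * x ^ (2*α-3)) (Icc ε M) :=
    continuousOn_const.mul (hc_rpow (2*α-3))
  have hch : ContinuousOn (fun x : ℝ => x^(3*α-3) / (lam * r^2 * (1 - x^α/r))) (Icc ε M) := by
    apply ContinuousOn.div (hc_rpow (3*α-3))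
    · exact continuousOn_const.mul (continuousOn_const.sub ((hc_rpow α).div_const r))
    · intro x hx
      have h1 := (hden x hx).2
      have h2 : (0:ℝ) < lam * r^2 := by positivity
      positivity
  have hInt : ∀ {f : ℝ → ℝ}, ContinuousOn f (Icc ε M) →
      IntervalIntegrable f MeasureTheory.volume ε M := by
    intro f hf
    apply (hf.mono ?_).intervalIntegrable
    rw [uIcc_of_le hεM']
  have hIf1 := hInt hcf1
  have hIf2 := hInt hcf2
  have hIh := hInt hch
  -- split the integral
  have hIsplit : (∫ x in ε..M, (lam * x ^ ((3:ℝ) - α) - lam / r * x ^ 3)⁻¹)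
      = (∫ x in ε..M, (1/lam) * x ^ (α-3)) + (∫ x in ε..M, (1/(lam*r)) * x ^ (2*α-3))
        + (∫ x in ε..M, x^(3*α-3) / (lam * r^2 * (1 - x^α/r))) := by
    rw [intervalIntegral.integral_congr
          (g := fun x => (1/lam) * x ^ (α-3) + (1/(lam*r)) * x ^ (2*α-3)
            + x^(3*α-3) / (lam * r^2 * (1 - x^α/r)))
          (fun x hx => hpt x (by rwa [uIcc_of_le hεM'] at hx)),
        intervalIntegral.integral_add (hIf1.add hIf2) hIh,
        intervalIntegral.integral_add hIf1 hIf2]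
  have h0uIcc : (0:ℝ) ∉ uIcc ε M := by
    rw [uIcc_of_le hεM']
    intro hmem
    exact absurd hmem.1 (by linarith)
  have hrint : ∀ c : ℝ, c ≠ -1 → (∫ x in ε..M, x ^ c) = (M^(c+1) - ε^(c+1))/(c+1) :=
    fun c hc => integral_rpow (Or.inr ⟨hc, h0uIcc⟩)
  have hIf1v : (∫ x in ε..M, (1/lam) * x ^ (α-3)) = A * ε^(α-2) - A * M^(α-2) := by
    have hAeq : (1/lam)/(-(α-2)) = A := by
      rw [hAdef, show -(α-2) = 2-α by ring, div_div]
    rw [intervalIntegral.integral_const_mul, hrint (α-3) (by intro hc; linarith),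
        show (α - 3 + 1 : ℝ) = α - 2 from by ring,
        helper_int (1/lam) (α-2) (ε^(α-2)) (M^(α-2)), hAeq]
  have hIf2v : (∫ x in ε..M, (1/(lam*r)) * x ^ (2*α-3))
      = Bc * ε^(2*α-2) - Bc * M^(2*α-2) := by
    have hBeq : (1/(lam*r))/(-(2*α-2)) = Bc := by
      rw [hBdef, show -(2*α-2) = 2-2*α by ring, div_div]
    rw [intervalIntegral.integral_const_mul, hrint (2*α-3) (by intro hc; linarith),
        show (2*α - 3 + 1 : ℝ) = 2*α - 2 from by ring,
        helper_int (1/(lam*r)) (2*α-2) (ε^(2*α-2)) (M^(2*α-2)), hBeq]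
  have hIh0 : 0 ≤ ∫ x in ε..M, x^(3*α-3) / (lam * r^2 * (1 - x^α/r)) := by
    apply intervalIntegral.integral_nonneg hεM'
    intro x hx
    have hx0 : 0 < x := hε.trans_le hx.1
    have h1 := (hden x hx).2
    have h2 : (0:ℝ) < lam * r^2 := by positivity
    have h3 := rpow_pos_of_pos hx0 (3*α-3)
    positivity
  have hIhub : (∫ x in ε..M, x^(3*α-3) / (lam * r^2 * (1 - x^α/r)))
      ≤ K/(2-3*α) * ε^(3*α-2) := by
    have hmono : (∫ x in ε..M, x^(3*α-3) / (lam * r^2 * (1 - x^α/r)))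
        ≤ ∫ x in ε..M, K * x^(3*α-3) := by
      apply intervalIntegral.integral_mono_on hεM' hIh
        (hInt (continuousOn_const.mul (hc_rpow _)))
      intro x hx
      have hx0 : 0 < x := hε.trans_le hx.1
      obtain ⟨hu, hdpos⟩ := hden x hx
      have hxp : 0 < x ^ (3*α-3) := rpow_pos_of_pos hx0 _
      have hD2 : (0:ℝ) < lam * r^2 * (1-q) := mul_pos (by positivity) (by linarith)
      have hD12 : lam * r^2 * (1-q) ≤ lam * r^2 * (1 - x^α/r) :=
        mul_le_mul_of_nonneg_left (by linarith) (by positivity)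
      calc x ^ (3*α-3) / (lam * r^2 * (1 - x^α/r))
          ≤ x ^ (3*α-3) / (lam * r^2 * (1-q)) :=
            div_le_div_of_nonneg_left hxp.le hD2 hD12
        _ = K * x^(3*α-3) := by rw [hKdef]; ring
    have hval : (∫ x in ε..M, K * x^(3*α-3))
        = K * ((M^(3*α-2) - ε^(3*α-2))/(3*α-2)) := by
      rw [intervalIntegral.integral_const_mul, hrint (3*α-3) (by intro hc; linarith),
          show (3*α - 3 + 1 : ℝ) = 3*α - 2 from by ring]
    have hflip : (M^(3*α-2) - ε^(3*α-2))/(3*α-2) = (ε^(3*α-2) - M^(3*α-2))/(2-3*α) := by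
      rw [div_eq_div_iff (by intro hc; linarith : (3*α-2:ℝ) ≠ 0)
        (by intro hc; linarith : (2-3*α:ℝ) ≠ 0)]
      ring
    have hMp : 0 < M^(3*α-2) := rpow_pos_of_pos hM _
    calc (∫ x in ε..M, x^(3*α-3) / (lam * r^2 * (1 - x^α/r)))
        ≤ K * ((M^(3*α-2) - ε^(3*α-2))/(3*α-2)) := by rw [← hval]; exact hmono
      _ = K * ((ε^(3*α-2) - M^(3*α-2))/(2-3*α)) := by rw [hflip]
      _ ≤ K * (ε^(3*α-2)/(2-3*α)) := by gcongr; linarith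
      _ = K/(2-3*α) * ε^(3*α-2) := by ring
  -- final bound
  have hεpow : (1:ℝ) ≤ ε^(3*α-2) :=
    one_le_rpow_of_pos_of_le_one_of_nonpos hε hε1 (by linarith)
  have hexpr : (∫ x in ε..M, (lam * x ^ ((3:ℝ) - α) - lam / r * x ^ 3)⁻¹)
        - A * ε^(α-2) - Bc * ε^(2*α-2)
      = - (A * M^(α-2)) - Bc * M^(2*α-2)
        + ∫ x in ε..M, x^(3*α-3) / (lam * r^2 * (1 - x^α/r)) := by
    rw [hIsplit, hIf1v, hIf2v]; ring
  rw [hexpr, abs_le]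
  have hE0 : (0:ℝ) < ε^(3*α-2) := rpow_pos_of_pos hε _
  have hKd : (0:ℝ) < K/(2-3*α) := by positivity
  have h1 : A*M^(α-2) + Bc*M^(2*α-2) + K/(2-3*α)
      ≤ (A*M^(α-2) + Bc*M^(2*α-2) + K/(2-3*α)) * ε^(3*α-2) :=
    le_mul_of_one_le_right (by positivity) hεpow
  have hdist : (A*M^(α-2) + Bc*M^(2*α-2) + K/(2-3*α)) * ε^(3*α-2)
      = A*M^(α-2)*ε^(3*α-2) + Bc*M^(2*α-2)*ε^(3*α-2) + K/(2-3*α)*ε^(3*α-2) := by ring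
  have h2 : 0 < A*M^(α-2)*ε^(3*α-2) := mul_pos hAM hE0
  have h3 : 0 < Bc*M^(2*α-2)*ε^(3*α-2) := mul_pos hBM hE0
  constructor
  · linarith [h1, hIh0]
  · linarith [hIhub, h2, h3, hdist]


lemma helper_int' (u c X Y : ℝ) :
    u * ((Y - X)/c) = (u/(-c))*X - (u/(-c))*Y := by ring

lemma mae_expand (L : ℕ) (hL : 2 ≤ L) (lam p r : ℝ) (hlam : 0 < lam)
    (hp : p ∈ Ioo (0:ℝ) 1) (hr : 0 < r) :
    ∃ D : ℝ, 0 ≤ D ∧ ∀ ε : ℝ, 0 < ε → ε < p * r ^ ((L:ℝ)/(L+1)) →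
      |(∫ x in ε..(p * r ^ ((L:ℝ)/(L+1))),
          (lam * x ^ ((2:ℝ) - 1/L) - (lam / r) * x ^ 3)⁻¹)
        - (1/(lam * (1 - 1/L))) * ε ^ ((1:ℝ)/L - 1)| ≤ D := by
  have hL0 : (0:ℝ) < L := by exact_mod_cast Nat.lt_of_lt_of_le Nat.zero_lt_two hL
  have hL2 : (2:ℝ) ≤ L := by exact_mod_cast hL
  obtain ⟨α, hαdef⟩ : ∃ a : ℝ, a = 1/(L:ℝ) := ⟨_, rfl⟩
  have hα : 0 < α := by rw [hαdef]; positivity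
  have hα2 : α ≤ 1/2 := by
    rw [hαdef, div_le_div_iff₀ hL0 (by norm_num)]
    linarith
  obtain ⟨M, hMdef⟩ : ∃ m : ℝ, m = p * r ^ ((L:ℝ)/(L+1)) := ⟨_, rfl⟩
  have hM : 0 < M := by rw [hMdef]; exact mul_pos hp.1 (rpow_pos_of_pos hr _)
  have hMα : M ^ (1+α) = p ^ (1+α) * r := by
    rw [hMdef, mul_rpow hp.1.le (rpow_pos_of_pos hr _).le, ← rpow_mul hr.le]
    congr 1
    rw [hαdef]
    field_simp
    simp
  obtain ⟨q, hqdef⟩ : ∃ m : ℝ, m = p ^ (1+α) := ⟨_, rfl⟩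
  rw [← hqdef] at hMα
  have hq0 : 0 < q := by rw [hqdef]; exact rpow_pos_of_pos hp.1 _
  have hq1 : q < 1 := by rw [hqdef]; exact rpow_lt_one hp.1.le hp.2 (by linarith)
  have h1α : (0:ℝ) < 1 - α := by linarith
  obtain ⟨A, hAdef⟩ : ∃ m : ℝ, m = 1/(lam * (1 - α)) := ⟨_, rfl⟩
  obtain ⟨K, hKdef⟩ : ∃ m : ℝ, m = 1/(lam * r * (1-q)) := ⟨_, rfl⟩
  have hA : 0 < A := by rw [hAdef]; exact one_div_pos.mpr (mul_pos hlam h1α)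
  have hK : 0 < K := by
    rw [hKdef]
    exact one_div_pos.mpr (mul_pos (by positivity) (by linarith))
  have hAM : 0 < A * M^(α-1) := mul_pos hA (rpow_pos_of_pos hM _)
  have hKM : 0 < K * (M^(2*α)/(2*α)) :=
    mul_pos hK (div_pos (rpow_pos_of_pos hM _) (by linarith))
  refine ⟨A * M^(α-1) + K * (M^(2*α)/(2*α)), by positivity, ?_⟩
  intro ε hε hεM0
  rw [← hMdef] at hεM0
  have hεM' : ε ≤ M := hεM0.le
  rw [← hαdef, ← hMdef, ← hAdef]
  -- pointwise facts
  have hden : ∀ x ∈ Icc ε M, x^(1+α)/r ≤ q ∧ 0 < 1 - x^(1+α)/r := by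
    intro x hx
    have hx0 : 0 < x := hε.trans_le hx.1
    have h1 : x^(1+α) ≤ M^(1+α) := rpow_le_rpow hx0.le hx.2 (by linarith)
    rw [hMα] at h1
    have h2 : x^(1+α)/r ≤ q := by rw [div_le_iff₀ hr]; linarith
    exact ⟨h2, by linarith⟩
  have hpt : ∀ x ∈ Icc ε M, (lam * x ^ ((2:ℝ) - α) - lam / r * x ^ 3)⁻¹
      = (1/lam) * x ^ (α-2) + x^(2*α-1) / (lam * r * (1 - x^(1+α)/r)) := by
    intro x hx
    have hx0 : 0 < x := hε.trans_le hx.1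
    obtain ⟨hu, hdpos⟩ := hden x hx
    have hy0 : (0:ℝ) < x ^ (1+α) := rpow_pos_of_pos hx0 _
    have hz0 : (0:ℝ) < x ^ ((2:ℝ) - α) := rpow_pos_of_pos hx0 _
    have e3 : x ^ (3:ℕ) = x ^ ((2:ℝ) - α) * x ^ (1+α) := by
      rw [← rpow_add hx0, ← rpow_natCast x 3]; norm_num
    have eα2 : x ^ (α - 2) = (x ^ ((2:ℝ) - α))⁻¹ := by
      rw [show α - 2 = -((2:ℝ) - α) by ring, rpow_neg hx0.le]
    have e2α1 : x ^ (2*α - 1) = (x ^ ((2:ℝ) - α))⁻¹ * x ^ (1+α) := by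
      rw [show 2*α - 1 = (α - 2) + (1+α) by ring, rpow_add hx0, eα2]
    have hfac : lam * x ^ ((2:ℝ) - α) - lam / r * x ^ (3:ℕ)
        = lam * x ^ ((2:ℝ) - α) * (1 - x^(1+α)/r) := by rw [e3]; ring
    have hylt : x ^ (1+α) < r := by
      have h5 := hdpos
      rw [sub_pos, div_lt_one hr] at h5
      exact h5
    have hry : r - x ^ (1+α) ≠ 0 := (by linarith : (0:ℝ) < r - x ^ (1+α)).ne'
    have key : ((1/lam) * x ^ (α-2) + x^(2*α-1) / (lam * r * (1 - x^(1+α)/r)))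
        * (lam * x ^ ((2:ℝ) - α) * (1 - x^(1+α)/r)) = 1 := by
      rw [eα2, e2α1]
      field_simp [hlam.ne', hr.ne', hz0.ne', hry]
      ring
    rw [hfac]
    exact (inv_eq_of_mul_eq_one_left key)
  -- continuity and integrability
  have hc_rpow : ∀ c : ℝ, ContinuousOn (fun x : ℝ => x ^ c) (Icc ε M) := by
    intro c x hx
    exact (continuousAt_rpow_const x c (Or.inl (hε.trans_le hx.1).ne')).continuousWithinAt
  have hcf1 : ContinuousOn (fun x : ℝ => (1/lam) * x ^ (α-2)) (Icc ε M) :=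
    continuousOn_const.mul (hc_rpow (α-2))
  have hch : ContinuousOn (fun x : ℝ => x^(2*α-1) / (lam * r * (1 - x^(1+α)/r))) (Icc ε M) := by
    apply ContinuousOn.div (hc_rpow (2*α-1))
    · exact continuousOn_const.mul (continuousOn_const.sub ((hc_rpow (1+α)).div_const r))
    · intro x hx
      have h1 := (hden x hx).2
      have h2 : (0:ℝ) < lam * r := by positivity
      positivity
  have hInt : ∀ {f : ℝ → ℝ}, ContinuousOn f (Icc ε M) →
      IntervalIntegrable f MeasureTheory.volume ε M := by
    intro f hf
    apply (hf.mono ?_).intervalIntegrable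
    rw [uIcc_of_le hεM']
  have hIf1 := hInt hcf1
  have hIh := hInt hch
  have hIsplit : (∫ x in ε..M, (lam * x ^ ((2:ℝ) - α) - lam / r * x ^ 3)⁻¹)
      = (∫ x in ε..M, (1/lam) * x ^ (α-2))
        + (∫ x in ε..M, x^(2*α-1) / (lam * r * (1 - x^(1+α)/r))) := by
    rw [intervalIntegral.integral_congr
          (g := fun x => (1/lam) * x ^ (α-2)
            + x^(2*α-1) / (lam * r * (1 - x^(1+α)/r)))
          (fun x hx => hpt x (by rwa [uIcc_of_le hεM'] at hx)),
        intervalIntegral.integral_add hIf1 hIh]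
  have h0uIcc : (0:ℝ) ∉ uIcc ε M := by
    rw [uIcc_of_le hεM']
    intro hmem
    exact absurd hmem.1 (by linarith)
  have hrint : ∀ c : ℝ, c ≠ -1 → (∫ x in ε..M, x ^ c) = (M^(c+1) - ε^(c+1))/(c+1) :=
    fun c hc => integral_rpow (Or.inr ⟨hc, h0uIcc⟩)
  have hIf1v : (∫ x in ε..M, (1/lam) * x ^ (α-2)) = A * ε^(α-1) - A * M^(α-1) := by
    have hAeq : (1/lam)/(-(α-1)) = A := by
      rw [hAdef, show -(α-1) = 1-α by ring, div_div]
    rw [intervalIntegral.integral_const_mul, hrint (α-2) (by intro hc; linarith),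
        show (α - 2 + 1 : ℝ) = α - 1 from by ring,
        helper_int' (1/lam) (α-1) (ε^(α-1)) (M^(α-1)), hAeq]
  have hIh0 : 0 ≤ ∫ x in ε..M, x^(2*α-1) / (lam * r * (1 - x^(1+α)/r)) := by
    apply intervalIntegral.integral_nonneg hεM'
    intro x hx
    have hx0 : 0 < x := hε.trans_le hx.1
    have h1 := (hden x hx).2
    have h2 : (0:ℝ) < lam * r := by positivity
    have h3 := rpow_pos_of_pos hx0 (2*α-1)
    positivity
  have hIhub : (∫ x in ε..M, x^(2*α-1) / (lam * r * (1 - x^(1+α)/r)))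
      ≤ K * (M^(2*α)/(2*α)) := by
    have hmono : (∫ x in ε..M, x^(2*α-1) / (lam * r * (1 - x^(1+α)/r)))
        ≤ ∫ x in ε..M, K * x^(2*α-1) := by
      apply intervalIntegral.integral_mono_on hεM' hIh
        (hInt (continuousOn_const.mul (hc_rpow _)))
      intro x hx
      have hx0 : 0 < x := hε.trans_le hx.1
      obtain ⟨hu, hdpos⟩ := hden x hx
      have hxp : 0 < x ^ (2*α-1) := rpow_pos_of_pos hx0 _
      have hD2 : (0:ℝ) < lam * r * (1-q) := mul_pos (by positivity) (by linarith)
      have hD12 : lam * r * (1-q) ≤ lam * r * (1 - x^(1+α)/r) :=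
        mul_le_mul_of_nonneg_left (by linarith) (by positivity)
      calc x ^ (2*α-1) / (lam * r * (1 - x^(1+α)/r))
          ≤ x ^ (2*α-1) / (lam * r * (1-q)) :=
            div_le_div_of_nonneg_left hxp.le hD2 hD12
        _ = K * x^(2*α-1) := by rw [hKdef]; ring
    have hval : (∫ x in ε..M, K * x^(2*α-1))
        = K * ((M^(2*α) - ε^(2*α))/(2*α)) := by
      rw [intervalIntegral.integral_const_mul, hrint (2*α-1) (by intro hc; linarith),
          show (2*α - 1 + 1 : ℝ) = 2*α from by ring]
    have hεp : 0 < ε^(2*α) := rpow_pos_of_pos hε _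
    calc (∫ x in ε..M, x^(2*α-1) / (lam * r * (1 - x^(1+α)/r)))
        ≤ K * ((M^(2*α) - ε^(2*α))/(2*α)) := by rw [← hval]; exact hmono
      _ ≤ K * (M^(2*α)/(2*α)) := by
          apply mul_le_mul_of_nonneg_left _ hK.le
          have h2a : (0:ℝ) < 2*α := by linarith
          exact (div_le_div_iff_of_pos_right h2a).mpr (by linarith [hεp])
  have hexpr : (∫ x in ε..M, (lam * x ^ ((2:ℝ) - α) - lam / r * x ^ 3)⁻¹)
        - A * ε^(α-1)
      = - (A * M^(α-1)) + ∫ x in ε..M, x^(2*α-1) / (lam * r * (1 - x^(1+α)/r)) := by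
    rw [hIsplit, hIf1v]; ring
  rw [hexpr, abs_le]
  constructor
  · linarith [hIh0, hKM]
  · linarith [hIhub, hAM]

lemma jepa_time_formula (L : ℕ) (hL : 2 ≤ L) (lam p r : ℝ) (hlam : 0 < lam)
    (hp : p ∈ Ioo (0:ℝ) 1) (hr : 0 < r) (w : ℝ → ℝ) (T eps : ℝ)
    (heps : eps ∈ Ioo (0:ℝ) (p * r ^ L))
    (hw0 : w 0 = eps)
    (hode : ∀ t ∈ Ici (0:ℝ),
      HasDerivAt w (lam * w t ^ ((3:ℝ) - 1/L) - (lam / r) * w t ^ 3) t)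
    (hT0 : 0 ≤ T) (hwT : w T = p * r ^ L)
    (huniq : ∀ s ∈ Ici (0:ℝ), w s = p * r ^ L → s = T) :
    T = ∫ x in eps..(p * r ^ L), (lam * x ^ ((3:ℝ) - 1/L) - (lam / r) * x ^ 3)⁻¹ := by
  have hL0 : (0:ℝ) < L := by exact_mod_cast Nat.lt_of_lt_of_le Nat.zero_lt_two hL
  have hrL : (0:ℝ) < r ^ L := pow_pos hr L
  have hMB : p * r ^ L < r ^ L := by
    nlinarith [hp.2, hp.1, hrL]
  have hBα : (r ^ L : ℝ) ^ (1/(L:ℝ)) = r := by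
    rw [← rpow_natCast r L, ← rpow_mul hr.le, mul_one_div, div_self hL0.ne', rpow_one]
  apply hitting_time_eq_integral (g := fun x => lam * x ^ ((3:ℝ) - 1/L) - (lam / r) * x ^ 3)
    heps.1 heps.2 hMB ?_ ?_ hw0 ?_ hT0 hwT ?_
  · apply ContinuousOn.sub
    · exact continuousOn_const.mul
        (fun x hx => (continuousAt_rpow_const x _ (Or.inl hx.1.ne')).continuousWithinAt)
    · exact continuousOn_const.mul (continuous_pow 3).continuousOn
  · intro x hx
    have hx0 : 0 < x := hx.1
    have hxα : x ^ (1/(L:ℝ)) < r := by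
      calc x ^ (1/(L:ℝ)) < (r ^ L : ℝ) ^ (1/(L:ℝ)) :=
            rpow_lt_rpow hx0.le hx.2 (by positivity)
        _ = r := hBα
    have hz0 : (0:ℝ) < x ^ ((3:ℝ) - 1/L) := rpow_pos_of_pos hx0 _
    have e3 : x ^ (3:ℕ) = x ^ ((3:ℝ) - 1/L) * x ^ (1/(L:ℝ)) := by
      rw [← rpow_add hx0, ← rpow_natCast x 3]; norm_num
    have key : lam / r * x ^ (3:ℕ) < lam * x ^ ((3:ℝ) - 1/L) := by
      rw [e3]
      rw [div_mul_eq_mul_div, div_lt_iff₀ hr]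
      nlinarith [mul_pos hlam hz0, mul_lt_mul_of_pos_left hxα (mul_pos hlam hz0)]
    simpa using sub_pos.mpr key
  · intro t ht
    exact hode t ht
  · intro s hs hws
    have := huniq s hs.1 hws
    exact absurd this (by linarith [hs.2])

lemma mae_time_formula (L : ℕ) (hL : 2 ≤ L) (lam p r : ℝ) (hlam : 0 < lam)
    (hp : p ∈ Ioo (0:ℝ) 1) (hr : 0 < r) (w : ℝ → ℝ) (T eps : ℝ)
    (heps : eps ∈ Ioo (0:ℝ) (p * r ^ ((L:ℝ)/(L+1))))
    (hw0 : w 0 = eps)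
    (hode : ∀ t ∈ Ici (0:ℝ),
      HasDerivAt w (lam * w t ^ ((2:ℝ) - 1/L) - (lam / r) * w t ^ 3) t)
    (hT0 : 0 ≤ T) (hwT : w T = p * r ^ ((L:ℝ)/(L+1)))
    (huniq : ∀ s ∈ Ici (0:ℝ), w s = p * r ^ ((L:ℝ)/(L+1)) → s = T) :
    T = ∫ x in eps..(p * r ^ ((L:ℝ)/(L+1))),
      (lam * x ^ ((2:ℝ) - 1/L) - (lam / r) * x ^ 3)⁻¹ := by
  have hL0 : (0:ℝ) < L := by exact_mod_cast Nat.lt_of_lt_of_le Nat.zero_lt_two hL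
  have hrL : (0:ℝ) < r ^ ((L:ℝ)/(L+1)) := rpow_pos_of_pos hr _
  have hMB : p * r ^ ((L:ℝ)/(L+1)) < r ^ ((L:ℝ)/(L+1)) := by
    nlinarith [hp.2, hp.1, hrL]
  have hBα : (r ^ ((L:ℝ)/(L+1)) : ℝ) ^ (1 + 1/(L:ℝ)) = r := by
    rw [← rpow_mul hr.le]
    nth_rewrite 2 [show r = r ^ (1:ℝ) from (rpow_one r).symm]
    congr 1
    field_simp
  apply hitting_time_eq_integral
    (g := fun x => lam * x ^ ((2:ℝ) - 1/L) - (lam / r) * x ^ 3)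
    heps.1 heps.2 hMB ?_ ?_ hw0 ?_ hT0 hwT ?_
  · apply ContinuousOn.sub
    · exact continuousOn_const.mul
        (fun x hx => (continuousAt_rpow_const x _ (Or.inl hx.1.ne')).continuousWithinAt)
    · exact continuousOn_const.mul (continuous_pow 3).continuousOn
  · intro x hx
    have hx0 : 0 < x := hx.1
    have hxα : x ^ (1 + 1/(L:ℝ)) < r := by
      calc x ^ (1 + 1/(L:ℝ)) < (r ^ ((L:ℝ)/(L+1)) : ℝ) ^ (1 + 1/(L:ℝ)) :=
            rpow_lt_rpow hx0.le hx.2 (by positivity)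
        _ = r := hBα
    have hz0 : (0:ℝ) < x ^ ((2:ℝ) - 1/L) := rpow_pos_of_pos hx0 _
    have e3 : x ^ (3:ℕ) = x ^ ((2:ℝ) - 1/L) * x ^ (1 + 1/(L:ℝ)) := by
      rw [← rpow_add hx0, ← rpow_natCast x 3]; norm_num
    have key : lam / r * x ^ (3:ℕ) < lam * x ^ ((2:ℝ) - 1/L) := by
      rw [e3]
      rw [div_mul_eq_mul_div, div_lt_iff₀ hr]
      nlinarith [mul_pos hlam hz0, mul_lt_mul_of_pos_left hxα (mul_pos hlam hz0)]
    simpa using sub_pos.mpr key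
  · intro t ht
    exact hode t ht
  · intro s hs hws
    have := huniq s hs.1 hws
    exact absurd this (by linarith [hs.2])

end JepaAux

set_option maxHeartbeats 2000000 in
/-- **Critical-time ratios: the implicit bias of JEPA vs MAE.**
Fix `L ≥ 2`, `λ > 0`, `p ∈ (0,1)` and `0 < ρ < ρ'`; set `Δ = 1/ρ - 1/ρ'`.
For `r ∈ {ρ, ρ'}` and small `ε > 0`, let `tj r ε` be the unique time at which
the solution of the JEPA dynamics `ẇ = λ w^{3-1/L} - (λ/r) w³` started at `ε`
reaches `p r^L`, and `tm r ε` the unique time at which the solution of the MAE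
dynamics `ẇ = λ w^{2-1/L} - (λ/r) w³` started at `ε` reaches `p r^{L/(L+1)}`.
Then, as `ε → 0⁺`,
`tj ρ ε / tj ρ' ε = 1 + ((2L-1)/(2L-2)) Δ ε^{1/L} + O(ε^{2/L})` while
`tm ρ ε / tm ρ' ε = 1 + O(ε^{(L-1)/L})`. -/
theorem critical_time_ratio (L : ℕ) (hL : 2 ≤ L) (lam p rho rho' : ℝ)
    (hlam : 0 < lam) (hp : p ∈ Ioo (0 : ℝ) 1) (hrho : 0 < rho) (hrho' : rho < rho')
    (wj wm : ℝ → ℝ → ℝ → ℝ) (tj tm : ℝ → ℝ → ℝ)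
    -- JEPA solutions and critical times, for r ∈ {ρ, ρ'}
    (hjinit : ∀ r ∈ ({rho, rho'} : Set ℝ), ∀ eps ∈ Ioo (0 : ℝ) (p * r ^ L),
      wj r eps 0 = eps)
    (hjode : ∀ r ∈ ({rho, rho'} : Set ℝ), ∀ eps ∈ Ioo (0 : ℝ) (p * r ^ L),
      ∀ t ∈ Ici (0 : ℝ),
        HasDerivAt (wj r eps)
          (lam * wj r eps t ^ ((3 : ℝ) - 1 / L) - (lam / r) * wj r eps t ^ 3) t)
    (hjstar_nonneg : ∀ r ∈ ({rho, rho'} : Set ℝ), ∀ eps ∈ Ioo (0 : ℝ) (p * r ^ L),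
      0 ≤ tj r eps)
    (hjstar : ∀ r ∈ ({rho, rho'} : Set ℝ), ∀ eps ∈ Ioo (0 : ℝ) (p * r ^ L),
      wj r eps (tj r eps) = p * r ^ L)
    (hjstar_unique : ∀ r ∈ ({rho, rho'} : Set ℝ), ∀ eps ∈ Ioo (0 : ℝ) (p * r ^ L),
      ∀ s ∈ Ici (0 : ℝ), wj r eps s = p * r ^ L → s = tj r eps)
    -- MAE solutions and critical times, for r ∈ {ρ, ρ'}
    (hminit : ∀ r ∈ ({rho, rho'} : Set ℝ),
      ∀ eps ∈ Ioo (0 : ℝ) (p * r ^ ((L : ℝ) / (L + 1))), wm r eps 0 = eps)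
    (hmode : ∀ r ∈ ({rho, rho'} : Set ℝ),
      ∀ eps ∈ Ioo (0 : ℝ) (p * r ^ ((L : ℝ) / (L + 1))), ∀ t ∈ Ici (0 : ℝ),
        HasDerivAt (wm r eps)
          (lam * wm r eps t ^ ((2 : ℝ) - 1 / L) - (lam / r) * wm r eps t ^ 3) t)
    (hmstar_nonneg : ∀ r ∈ ({rho, rho'} : Set ℝ),
      ∀ eps ∈ Ioo (0 : ℝ) (p * r ^ ((L : ℝ) / (L + 1))), 0 ≤ tm r eps)
    (hmstar : ∀ r ∈ ({rho, rho'} : Set ℝ),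
      ∀ eps ∈ Ioo (0 : ℝ) (p * r ^ ((L : ℝ) / (L + 1))),
        wm r eps (tm r eps) = p * r ^ ((L : ℝ) / (L + 1)))
    (hmstar_unique : ∀ r ∈ ({rho, rho'} : Set ℝ),
      ∀ eps ∈ Ioo (0 : ℝ) (p * r ^ ((L : ℝ) / (L + 1))),
        ∀ s ∈ Ici (0 : ℝ), wm r eps s = p * r ^ ((L : ℝ) / (L + 1)) → s = tm r eps) :
    ((fun eps : ℝ => tj rho eps / tj rho' eps
        - (1 + ((2 * (L : ℝ) - 1) / (2 * (L : ℝ) - 2)) * (1 / rho - 1 / rho')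
            * eps ^ ((1 : ℝ) / L)))
      =O[nhdsWithin 0 (Ioi (0 : ℝ))] (fun eps => eps ^ ((2 : ℝ) / L))) ∧
    ((fun eps : ℝ => tm rho eps / tm rho' eps - 1)
      =O[nhdsWithin 0 (Ioi (0 : ℝ))] (fun eps => eps ^ (((L : ℝ) - 1) / L))) := by
  have hrho'0 : 0 < rho' := hrho.trans hrho'
  have hL0 : (0:ℝ) < L := by exact_mod_cast Nat.lt_of_lt_of_le Nat.zero_lt_two hL
  have hL2 : (2:ℝ) ≤ L := by exact_mod_cast hL
  have hαpos : (0:ℝ) < 1/(L:ℝ) := by positivity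
  have hα2 : 1/(L:ℝ) ≤ 1/2 := by
    rw [div_le_div_iff₀ hL0 (by norm_num)]; linarith
  have hmem1 : rho ∈ ({rho, rho'} : Set ℝ) := by simp
  have hmem2 : rho' ∈ ({rho, rho'} : Set ℝ) := by simp
  set l := nhdsWithin (0:ℝ) (Ioi 0) with hldef
  have hev_pos : ∀ᶠ eps in l, 0 < eps := eventually_mem_nhdsWithin
  have hev_lt : ∀ c : ℝ, 0 < c → ∀ᶠ eps in l, eps < c := by
    intro c hc
    exact Filter.eventually_of_mem
      (Ioo_mem_nhdsGT_of_mem (⟨le_rfl, hc⟩ : (0:ℝ) ∈ Ico 0 c)) (fun x hx => hx.2)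
  have htend : ∀ c : ℝ, 0 < c → Tendsto (fun eps : ℝ => eps ^ c) l (nhds 0) := by
    intro c hc
    have h1 : ContinuousAt (fun x : ℝ => x ^ c) 0 :=
      Real.continuousAt_rpow_const 0 c (Or.inr hc.le)
    have h2 := h1.tendsto
    rw [zero_rpow hc.ne'] at h2
    exact h2.mono_left nhdsWithin_le_nhds
  have hev_le : ∀ c b : ℝ, 0 < c → 0 < b → ∀ᶠ eps in l, eps ^ c ≤ b := by
    intro c b hc hb
    exact (htend c hc).eventually (eventually_le_nhds hb)
  constructor
  · -- JEPA part
    obtain ⟨D1, hD1, hb1⟩ := jepa_expand L hL lam p rho hlam hp hrho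
    obtain ⟨D2, hD2, hb2⟩ := jepa_expand L hL lam p rho' hlam hp hrho'0
    obtain ⟨a, hadef⟩ : ∃ x : ℝ, x = 1/(lam * (2 - 1/(L:ℝ))) := ⟨_, rfl⟩
    obtain ⟨b1c, hb1cdef⟩ : ∃ x : ℝ, x = 1/(lam * rho * (2 - 2/(L:ℝ))) := ⟨_, rfl⟩
    obtain ⟨b2c, hb2cdef⟩ : ∃ x : ℝ, x = 1/(lam * rho' * (2 - 2/(L:ℝ))) := ⟨_, rfl⟩
    obtain ⟨β, hβdef⟩ : ∃ x : ℝ, x = ((2*(L:ℝ)-1)/(2*(L:ℝ)-2)) * (1/rho - 1/rho') := ⟨_, rfl⟩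
    have h21 : (0:ℝ) < 2 - 1/(L:ℝ) := by linarith
    have h2Lle : (2:ℝ)/L ≤ 1 := by rw [div_le_one hL0]; linarith
    have h22 : (0:ℝ) < 2 - 2/(L:ℝ) := by linarith
    have h2L2 : (0:ℝ) < 2*(L:ℝ) - 2 := by linarith
    have ha : 0 < a := by rw [hadef]; exact one_div_pos.mpr (mul_pos hlam h21)
    have hb1cpos : 0 < b1c := by
      rw [hb1cdef]; exact one_div_pos.mpr (mul_pos (mul_pos hlam hrho) h22)
    have hb2cpos : 0 < b2c := by
      rw [hb2cdef]; exact one_div_pos.mpr (mul_pos (mul_pos hlam hrho'0) h22)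
    have hΔ : 0 < 1/rho - 1/rho' := by
      have := one_div_lt_one_div_of_lt hrho hrho'
      linarith
    have hβ : 0 < β := by
      rw [hβdef]
      exact mul_pos (div_pos (by linarith) h2L2) hΔ
    have hkey : b1c - b2c = β * a := by
      rw [hb1cdef, hb2cdef, hβdef, hadef]
      have hLne : (L:ℝ) ≠ 0 := hL0.ne'
      rw [show (2:ℝ) - 2/(L:ℝ) = (2*L-2)/L by field_simp,
          show (2:ℝ) - 1/(L:ℝ) = (2*L-1)/L by field_simp]
      have h2L1 : 2*(L:ℝ) - 1 ≠ 0 := by intro h; linarith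
      field_simp
    have hM1 : 0 < p * rho ^ L := mul_pos hp.1 (pow_pos hrho L)
    have hM2 : 0 < p * rho' ^ L := mul_pos hp.1 (pow_pos hrho'0 L)
    rw [Asymptotics.isBigO_iff]
    refine ⟨(2*(D1 + D2 + β*b2c + β*D2))/a, ?_⟩
    filter_upwards [hev_pos, hev_lt 1 one_pos, hev_lt _ hM1, hev_lt _ hM2,
      hev_le (2/(L:ℝ)) ((a/2)/(D2+1)) (by positivity) (div_pos (half_pos ha) (by linarith))]
      with eps hε hε1 hεM1 hεM2 hεsmall
    have hmem1' : eps ∈ Ioo (0:ℝ) (p * rho ^ L) := ⟨hε, hεM1⟩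
    have hmem2' : eps ∈ Ioo (0:ℝ) (p * rho' ^ L) := ⟨hε, hεM2⟩
    -- formulas
    have hT1 : tj rho eps = ∫ x in eps..(p * rho ^ L),
        (lam * x ^ ((3:ℝ) - 1/L) - (lam / rho) * x ^ 3)⁻¹ :=
      jepa_time_formula L hL lam p rho hlam hp hrho _ _ _ hmem1'
        (hjinit rho hmem1 eps hmem1') (hjode rho hmem1 eps hmem1')
        (hjstar_nonneg rho hmem1 eps hmem1') (hjstar rho hmem1 eps hmem1')
        (hjstar_unique rho hmem1 eps hmem1')
    have hT2 : tj rho' eps = ∫ x in eps..(p * rho' ^ L),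
        (lam * x ^ ((3:ℝ) - 1/L) - (lam / rho') * x ^ 3)⁻¹ :=
      jepa_time_formula L hL lam p rho' hlam hp hrho'0 _ _ _ hmem2'
        (hjinit rho' hmem2 eps hmem2') (hjode rho' hmem2 eps hmem2')
        (hjstar_nonneg rho' hmem2 eps hmem2') (hjstar rho' hmem2 eps hmem2')
        (hjstar_unique rho' hmem2 eps hmem2')
    -- expansion bounds
    have he1 : |tj rho eps - a * eps ^ ((1:ℝ)/L - 2) - b1c * eps ^ ((2:ℝ)/L - 2)|
        ≤ D1 * eps ^ ((3:ℝ)/L - 2) := by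
      rw [hT1, hadef, hb1cdef]
      exact hb1 eps hε hεM1 hε1.le
    have he2 : |tj rho' eps - a * eps ^ ((1:ℝ)/L - 2) - b2c * eps ^ ((2:ℝ)/L - 2)|
        ≤ D2 * eps ^ ((3:ℝ)/L - 2) := by
      rw [hT2, hadef, hb2cdef]
      exact hb2 eps hε hεM2 hε1.le
    -- power identities
    have hx1p : 0 < eps ^ ((1:ℝ)/L - 2) := rpow_pos_of_pos hε _
    have hx2p : 0 < eps ^ ((2:ℝ)/L - 2) := rpow_pos_of_pos hε _
    have hx3p : 0 < eps ^ ((3:ℝ)/L - 2) := rpow_pos_of_pos hε _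
    have hsp : 0 < eps ^ ((1:ℝ)/L) := rpow_pos_of_pos hε _
    have htp : 0 < eps ^ ((2:ℝ)/L) := rpow_pos_of_pos hε _
    have hs1 : eps ^ ((1:ℝ)/L) ≤ 1 := rpow_le_one hε.le hε1.le (by positivity)
    have hx2 : eps ^ ((2:ℝ)/L - 2) = eps ^ ((1:ℝ)/L - 2) * eps ^ ((1:ℝ)/L) := by
      rw [← rpow_add hε]; congr 1; ring
    have hx3 : eps ^ ((3:ℝ)/L - 2) = eps ^ ((2:ℝ)/L - 2) * eps ^ ((1:ℝ)/L) := by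
      rw [← rpow_add hε]; congr 1; ring
    have hx13 : eps ^ ((3:ℝ)/L - 2) = eps ^ ((1:ℝ)/L - 2) * eps ^ ((2:ℝ)/L) := by
      rw [← rpow_add hε]; congr 1; ring
    -- lower bound on tj rho' eps
    have hsmall2 : D2 * eps ^ ((2:ℝ)/L) ≤ a/2 := by
      have h1 : D2 * eps ^ ((2:ℝ)/L) ≤ D2 * ((a/2)/(D2+1)) :=
        mul_le_mul_of_nonneg_left hεsmall hD2
      have h2 : D2 * ((a/2)/(D2+1)) ≤ a/2 := by
        calc D2 * ((a/2)/(D2+1)) = (a/2) * (D2/(D2+1)) := by ring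
          _ ≤ (a/2) * 1 := mul_le_mul_of_nonneg_left
              (div_le_one_of_le₀ (by linarith) (by linarith)) (by linarith)
          _ = a/2 := mul_one _
      linarith
    have hT2low : a/2 * eps ^ ((1:ℝ)/L - 2) ≤ tj rho' eps := by
      have h1 : tj rho' eps ≥ a * eps ^ ((1:ℝ)/L - 2) + b2c * eps ^ ((2:ℝ)/L - 2)
          - D2 * eps ^ ((3:ℝ)/L - 2) := by
        have := abs_le.mp he2
        linarith [this.1]
      have h2 : D2 * eps ^ ((3:ℝ)/L - 2)
          ≤ (a/2) * eps ^ ((1:ℝ)/L - 2) := by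
        rw [hx13, ← mul_assoc]
        rw [show D2 * eps ^ ((1:ℝ)/L - 2) * eps ^ ((2:ℝ)/L)
            = (D2 * eps ^ ((2:ℝ)/L)) * eps ^ ((1:ℝ)/L - 2) by ring]
        exact mul_le_mul_of_nonneg_right hsmall2 hx1p.le
      linarith [h1, h2, mul_pos hb2cpos hx2p]
    have hT2pos : 0 < tj rho' eps :=
      lt_of_lt_of_le (mul_pos (half_pos ha) hx1p) hT2low
    -- the numerator identity
    have hN : tj rho eps - tj rho' eps - β * eps ^ ((1:ℝ)/L) * tj rho' eps
        = (tj rho eps - a * eps ^ ((1:ℝ)/L - 2) - b1c * eps ^ ((2:ℝ)/L - 2))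
          - (tj rho' eps - a * eps ^ ((1:ℝ)/L - 2) - b2c * eps ^ ((2:ℝ)/L - 2))
          - β * b2c * eps ^ ((3:ℝ)/L - 2)
          - β * eps ^ ((1:ℝ)/L)
            * (tj rho' eps - a * eps ^ ((1:ℝ)/L - 2) - b2c * eps ^ ((2:ℝ)/L - 2)) := by
      rw [hx3, hx2]
      linear_combination (eps ^ ((1:ℝ)/L - 2) * eps ^ ((1:ℝ)/L)) * hkey
    -- bound the numerator
    have habsN : |tj rho eps - tj rho' eps - β * eps ^ ((1:ℝ)/L) * tj rho' eps|
        ≤ (D1 + D2 + β*b2c + β*D2) * eps ^ ((3:ℝ)/L - 2) := by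
      rw [hN]
      have t1 := abs_sub (tj rho eps - a * eps ^ ((1:ℝ)/L - 2) - b1c * eps ^ ((2:ℝ)/L - 2)
          - (tj rho' eps - a * eps ^ ((1:ℝ)/L - 2) - b2c * eps ^ ((2:ℝ)/L - 2))
          - β * b2c * eps ^ ((3:ℝ)/L - 2))
        (β * eps ^ ((1:ℝ)/L)
          * (tj rho' eps - a * eps ^ ((1:ℝ)/L - 2) - b2c * eps ^ ((2:ℝ)/L - 2)))
      have t2 := abs_sub (tj rho eps - a * eps ^ ((1:ℝ)/L - 2) - b1c * eps ^ ((2:ℝ)/L - 2)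
          - (tj rho' eps - a * eps ^ ((1:ℝ)/L - 2) - b2c * eps ^ ((2:ℝ)/L - 2)))
        (β * b2c * eps ^ ((3:ℝ)/L - 2))
      have t3 := abs_sub (tj rho eps - a * eps ^ ((1:ℝ)/L - 2) - b1c * eps ^ ((2:ℝ)/L - 2))
        (tj rho' eps - a * eps ^ ((1:ℝ)/L - 2) - b2c * eps ^ ((2:ℝ)/L - 2))
      have t4 : |β * b2c * eps ^ ((3:ℝ)/L - 2)| = β * b2c * eps ^ ((3:ℝ)/L - 2) :=
        abs_of_pos (mul_pos (mul_pos hβ hb2cpos) hx3p)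
      have t5 : |β * eps ^ ((1:ℝ)/L)
          * (tj rho' eps - a * eps ^ ((1:ℝ)/L - 2) - b2c * eps ^ ((2:ℝ)/L - 2))|
          ≤ β * D2 * eps ^ ((3:ℝ)/L - 2) := by
        rw [abs_mul, abs_of_pos (mul_pos hβ hsp)]
        calc β * eps ^ ((1:ℝ)/L)
            * |tj rho' eps - a * eps ^ ((1:ℝ)/L - 2) - b2c * eps ^ ((2:ℝ)/L - 2)|
            ≤ β * eps ^ ((1:ℝ)/L) * (D2 * eps ^ ((3:ℝ)/L - 2)) :=
              mul_le_mul_of_nonneg_left he2 (mul_pos hβ hsp).le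
          _ ≤ β * 1 * (D2 * eps ^ ((3:ℝ)/L - 2)) := by
              apply mul_le_mul_of_nonneg_right _ (mul_nonneg hD2 hx3p.le)
              exact mul_le_mul_of_nonneg_left hs1 hβ.le
          _ = β * D2 * eps ^ ((3:ℝ)/L - 2) := by ring
      linarith [t1, t2, t3, t4, t5, he1, he2]
    -- conclude
    have hratio : tj rho eps / tj rho' eps
        - (1 + ((2*(L:ℝ)-1)/(2*(L:ℝ)-2)) * (1/rho - 1/rho') * eps ^ ((1:ℝ)/L))
        = (tj rho eps - tj rho' eps - β * eps ^ ((1:ℝ)/L) * tj rho' eps) / tj rho' eps := by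
      rw [← hβdef]
      field_simp [hT2pos.ne']
      ring
    rw [hratio]
    rw [Real.norm_eq_abs, Real.norm_eq_abs, abs_div, abs_of_pos hT2pos, abs_of_pos htp]
    calc |tj rho eps - tj rho' eps - β * eps ^ ((1:ℝ)/L) * tj rho' eps| / tj rho' eps
        ≤ ((D1 + D2 + β*b2c + β*D2) * eps ^ ((3:ℝ)/L - 2))
          / (a/2 * eps ^ ((1:ℝ)/L - 2)) :=
          by
            have hC1 : 0 ≤ D1 + D2 + β*b2c + β*D2 := by
              have := mul_pos hβ hb2cpos
              have := mul_nonneg hβ.le hD2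
              linarith
            exact div_le_div₀ (mul_nonneg hC1 hx3p.le) habsN
              (mul_pos (half_pos ha) hx1p) hT2low
      _ = (2*(D1 + D2 + β*b2c + β*D2))/a * eps ^ ((2:ℝ)/L) := by
          rw [hx13]
          field_simp [ha.ne', hx1p.ne']
  · -- MAE part
    obtain ⟨D3, hD3, hb3⟩ := mae_expand L hL lam p rho hlam hp hrho
    obtain ⟨D4, hD4, hb4⟩ := mae_expand L hL lam p rho' hlam hp hrho'0
    obtain ⟨a, hadef⟩ : ∃ x : ℝ, x = 1/(lam * (1 - 1/(L:ℝ))) := ⟨_, rfl⟩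
    have h11 : (0:ℝ) < 1 - 1/(L:ℝ) := by linarith
    have ha : 0 < a := by rw [hadef]; exact one_div_pos.mpr (mul_pos hlam h11)
    have hM3 : 0 < p * rho ^ ((L:ℝ)/(L+1)) := mul_pos hp.1 (rpow_pos_of_pos hrho _)
    have hM4 : 0 < p * rho' ^ ((L:ℝ)/(L+1)) := mul_pos hp.1 (rpow_pos_of_pos hrho'0 _)
    have hcpos : (0:ℝ) < ((L:ℝ)-1)/L := div_pos (by linarith) hL0
    rw [Asymptotics.isBigO_iff]
    refine ⟨(2*(D3 + D4))/a, ?_⟩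
    filter_upwards [hev_pos, hev_lt _ hM3, hev_lt _ hM4,
      hev_le (((L:ℝ)-1)/L) ((a/2)/(D4+1)) hcpos (div_pos (half_pos ha) (by linarith))]
      with eps hε hεM3 hεM4 hεsmall
    have hmem3' : eps ∈ Ioo (0:ℝ) (p * rho ^ ((L:ℝ)/(L+1))) := ⟨hε, hεM3⟩
    have hmem4' : eps ∈ Ioo (0:ℝ) (p * rho' ^ ((L:ℝ)/(L+1))) := ⟨hε, hεM4⟩
    have hT1 : tm rho eps = ∫ x in eps..(p * rho ^ ((L:ℝ)/(L+1))),
        (lam * x ^ ((2:ℝ) - 1/L) - (lam / rho) * x ^ 3)⁻¹ :=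
      mae_time_formula L hL lam p rho hlam hp hrho _ _ _ hmem3'
        (hminit rho hmem1 eps hmem3') (hmode rho hmem1 eps hmem3')
        (hmstar_nonneg rho hmem1 eps hmem3') (hmstar rho hmem1 eps hmem3')
        (hmstar_unique rho hmem1 eps hmem3')
    have hT2 : tm rho' eps = ∫ x in eps..(p * rho' ^ ((L:ℝ)/(L+1))),
        (lam * x ^ ((2:ℝ) - 1/L) - (lam / rho') * x ^ 3)⁻¹ :=
      mae_time_formula L hL lam p rho' hlam hp hrho'0 _ _ _ hmem4'
        (hminit rho' hmem2 eps hmem4') (hmode rho' hmem2 eps hmem4')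
        (hmstar_nonneg rho' hmem2 eps hmem4') (hmstar rho' hmem2 eps hmem4')
        (hmstar_unique rho' hmem2 eps hmem4')
    have he3 : |tm rho eps - a * eps ^ ((1:ℝ)/L - 1)| ≤ D3 := by
      rw [hT1, hadef]
      exact hb3 eps hε hεM3
    have he4 : |tm rho' eps - a * eps ^ ((1:ℝ)/L - 1)| ≤ D4 := by
      rw [hT2, hadef]
      exact hb4 eps hε hεM4
    have hy1p : 0 < eps ^ ((1:ℝ)/L - 1) := rpow_pos_of_pos hε _
    have hzp : 0 < eps ^ (((L:ℝ)-1)/L) := rpow_pos_of_pos hε _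
    have hy : eps ^ ((1:ℝ)/L - 1) = (eps ^ (((L:ℝ)-1)/L))⁻¹ := by
      rw [show (1:ℝ)/(L:ℝ) - 1 = -(((L:ℝ)-1)/L) by field_simp; ring, rpow_neg hε.le]
    have hzy : eps ^ (((L:ℝ)-1)/L) * eps ^ ((1:ℝ)/L - 1) = 1 := by
      rw [hy]
      exact mul_inv_cancel₀ hzp.ne'
    -- lower bound
    have hsm : D4 * eps ^ (((L:ℝ)-1)/L) ≤ a/2 := by
      have h1 : D4 * eps ^ (((L:ℝ)-1)/L) ≤ D4 * ((a/2)/(D4+1)) :=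
        mul_le_mul_of_nonneg_left hεsmall hD4
      have h2 : D4 * ((a/2)/(D4+1)) ≤ a/2 := by
        calc D4 * ((a/2)/(D4+1)) = (a/2) * (D4/(D4+1)) := by ring
          _ ≤ (a/2) * 1 := mul_le_mul_of_nonneg_left
              (div_le_one_of_le₀ (by linarith) (by linarith)) (by linarith)
          _ = a/2 := mul_one _
      linarith
    have hD4y : D4 ≤ a/2 * eps ^ ((1:ℝ)/L - 1) := by
      have h3 : D4 * (eps ^ (((L:ℝ)-1)/L) * eps ^ ((1:ℝ)/L - 1))
          ≤ (a/2) * eps ^ ((1:ℝ)/L - 1) := by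
        rw [← mul_assoc]
        exact mul_le_mul_of_nonneg_right hsm hy1p.le
      rwa [hzy, mul_one] at h3
    have hT2low : a/2 * eps ^ ((1:ℝ)/L - 1) ≤ tm rho' eps := by
      have h1 := (abs_le.mp he4).1
      have h2 : a * eps ^ ((1:ℝ)/L - 1) = 2 * (a/2 * eps ^ ((1:ℝ)/L - 1)) := by ring
      nlinarith [hD4y]
    have hT2pos : 0 < tm rho' eps :=
      lt_of_lt_of_le (mul_pos (half_pos ha) hy1p) hT2low
    have hratio : tm rho eps / tm rho' eps - 1
        = (tm rho eps - tm rho' eps) / tm rho' eps := by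
      field_simp [hT2pos.ne']
    have habsN : |tm rho eps - tm rho' eps| ≤ D3 + D4 := by
      have t3 := abs_sub (tm rho eps - a * eps ^ ((1:ℝ)/L - 1))
        (tm rho' eps - a * eps ^ ((1:ℝ)/L - 1))
      have : tm rho eps - tm rho' eps
          = (tm rho eps - a * eps ^ ((1:ℝ)/L - 1))
            - (tm rho' eps - a * eps ^ ((1:ℝ)/L - 1)) := by ring
      rw [this]
      linarith [t3, he3, he4]
    rw [hratio]
    rw [Real.norm_eq_abs, Real.norm_eq_abs, abs_div, abs_of_pos hT2pos, abs_of_pos hzp]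
    calc |tm rho eps - tm rho' eps| / tm rho' eps
        ≤ (D3 + D4) / (a/2 * eps ^ ((1:ℝ)/L - 1)) :=
          div_le_div₀ (add_nonneg hD3 hD4) habsN
            (mul_pos (half_pos ha) hy1p) hT2low
      _ = (2*(D3 + D4))/a * eps ^ (((L:ℝ)-1)/L) := by
          rw [hy]
          field_simp [ha.ne', hzp.ne']
end
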